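/- arXiv:0904.1786 — 5 statements merged into one kernel-verified Lean document; each statement's English description precedes it below -/
import Mathlib

section
/- The operation ▷ is antitone in the first argument and monotone in the second: if x ≤ x' and y' ≤ y in the Bruhat order, then x' ▷ y' ≤ x ▷ y. -/
/-- The Bruhat order on a Coxeter group, via the subword property: `x ≤ y` iff some
reduced word for `y` has a subword whose product is `x`. -/
def CoxeterSystem.bruhatLE {B W : Type*} [Group W] {M : CoxeterMatrix B}
    (cs : CoxeterSystem M W) (x y : W) : Prop :=
  ∃ ω ω' : List B, cs.IsReduced ω ∧ cs.wordProd ω = y ∧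
    List.Sublist ω' ω ∧ cs.wordProd ω' = x

/-- The set of products `u * y` with `u ≤ x` in the Bruhat order. -/
def CoxeterSystem.triSet {B W : Type*} [Group W] {M : CoxeterMatrix B}
    (cs : CoxeterSystem M W) (x y : W) : Set W :=
  {w | ∃ u : W, cs.bruhatLE u x ∧ w = u * y}

/-- `m` is the unique minimal element of `S` with respect to the Bruhat order. -/
def CoxeterSystem.IsUniqueBruhatMin {B W : Type*} [Group W] {M : CoxeterMatrix B}
    (cs : CoxeterSystem M W) (S : Set W) (m : W) : Prop :=
  (m ∈ S ∧ ∀ z ∈ S, cs.bruhatLE z m → z = m) ∧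
    ∀ z ∈ S, (∀ z' ∈ S, cs.bruhatLE z' z → z' = z) → z = m


namespace CoxeterBruhat

open List CoxeterSystem
open scoped Classical

lemma zmod2_cases (a : ZMod 2) : a = 0 ∨ a = 1 := by revert a; decide
lemma zmod2_add_self (a : ZMod 2) : a + a = 0 := by revert a; decide
lemma zmod2_eq_of_add_eq_zero {a b : ZMod 2} (h : a + b = 0) : a = b := by
  revert h; revert a b; decide
lemma zmod2_not_one {a : ZMod 2} (h : a ≠ 1) : a = 0 := by revert h; revert a; decide
lemma zmod2_aux (a : ZMod 2) : a + (1 + a) = 1 := by revert a; decide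

lemma conj_pow_aux {G : Type*} [Group G] {p c : G} (h : c * p = p⁻¹ * c) :
    ∀ k : ℕ, c * p ^ k = (p⁻¹) ^ k * c := by
  intro k; induction k with
  | zero => simp
  | succ k ih =>
    rw [pow_succ, ← mul_assoc, ih, mul_assoc, h, pow_succ']
    group

lemma conj_pow_iff {G : Type*} [Group G] {p c : G} (u : G) (h : c * p = p⁻¹ * c) (k : ℕ) :
    (p ^ k * u * (p⁻¹) ^ k = c) ↔ u = (p⁻¹) ^ (2 * k) * c := by
  constructor
  · intro hh
    calc u = (p ^ k)⁻¹ * (p ^ k * u * (p⁻¹) ^ k) * ((p⁻¹) ^ k)⁻¹ := by group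
    _ = (p⁻¹) ^ k * (c * p ^ k) := by rw [hh]; group
    _ = (p⁻¹) ^ k * ((p⁻¹) ^ k * c) := by rw [conj_pow_aux h]
    _ = (p⁻¹) ^ (2 * k) * c := by rw [two_mul, pow_add]; group
  · intro hh
    rw [hh, two_mul, pow_add]
    calc p ^ k * ((p⁻¹) ^ k * (p⁻¹) ^ k * c) * (p⁻¹) ^ k
        = (p⁻¹) ^ k * c * (p⁻¹) ^ k := by group
      _ = (c * p ^ k) * (p⁻¹) ^ k := by rw [conj_pow_aux h]
      _ = c := by group

lemma conj_pow_iff' {G : Type*} [Group G] {p q c : G} (u : G) (hpq : q = p⁻¹)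
    (h : c * p = q * c) (k : ℕ) :
    (p ^ k * u * q ^ k = c) ↔ u = q ^ (2 * k) * c := by
  subst hpq; exact conj_pow_iff u h k

lemma conj_invol_iff {G : Type*} [Group G] {a x y : G} (ha : a * a = 1) :
    a * x * a = y ↔ x = a * y * a := by
  constructor
  · rintro rfl
    calc x = (a * a) * x * (a * a) := by rw [ha]; group
    _ = a * (a * x * a) * a := by group
  · rintro rfl
    calc a * (a * y * a) * a = (a * a) * y * (a * a) := by group
    _ = y := by rw [ha]; group

lemma conj_eq_iff {G : Type*} [Group G] {d x y : G} : d * x * d⁻¹ = y ↔ x = d⁻¹ * y * d := by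
  constructor
  · rintro rfl; group
  · rintro rfl; group

variable {B W : Type*} [Group W] {M : CoxeterMatrix B} (cs : CoxeterSystem M W)

local prefix:100 "s" => cs.simple
local prefix:100 "π" => cs.wordProd
local prefix:100 "ℓ" => cs.length
local prefix:100 "ris" => cs.rightInvSeq

/-- The function underlying the reflection-parity permutation for a generator. -/
noncomputable def etaFun (i : B) : W × ZMod 2 → W × ZMod 2 :=
  fun p => (s i * p.1 * s i, p.2 + if p.1 = s i then 1 else 0)

lemma etaFun_involutive (i : B) : Function.Involutive (etaFun cs i) := by
  rintro ⟨t, z⟩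
  simp only [etaFun]
  have h1 : s i * (s i * t * s i) * s i = t := by
    rw [← mul_assoc, ← mul_assoc, cs.simple_mul_simple_self, one_mul, mul_assoc,
      cs.simple_mul_simple_self, mul_one]
  have h2 : (s i * t * s i = s i) ↔ (t = s i) := by
    rw [conj_invol_iff (cs.simple_mul_simple_self i), cs.simple_mul_simple_self, one_mul]
  ext
  · exact h1
  · simp only [h2]
    rcases eq_or_ne t (s i) with h | h
    · simp [h, add_assoc, zmod2_add_self]
    · simp [h]

/-- The reflection-parity permutation for a generator. -/
noncomputable def eta (i : B) : Equiv.Perm (W × ZMod 2) := (etaFun_involutive cs i).toPerm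

lemma eta_apply (i : B) (t : W) (z : ZMod 2) :
    eta cs i (t, z) = (s i * t * s i, z + if t = s i then 1 else 0) := rfl

lemma simple_mul_inv (i i' : B) : ((s i * s i') : W)⁻¹ = s i' * s i := by
  rw [mul_inv_rev, cs.inv_simple, cs.inv_simple]

lemma eta_mul_pow (i i' : B) (k : ℕ) (t : W) (z : ZMod 2) :
    ((eta cs i * eta cs i') ^ k) (t, z) =
      ((s i * s i') ^ k * t * (s i' * s i) ^ k,
        z + ∑ r ∈ Finset.range (2 * k),
          (if t = (s i' * s i) ^ r * s i' then (1 : ZMod 2) else 0)) := by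
  have hq : ((s i' * s i) : W) = (s i * s i')⁻¹ := (simple_mul_inv cs i i').symm
  induction k with
  | zero => simp
  | succ k ih =>
    rw [pow_succ', Equiv.Perm.mul_apply, ih, Equiv.Perm.mul_apply, eta_apply, eta_apply]
    have e1 : ((s i * s i') ^ k * t * (s i' * s i) ^ k = s i') ↔
        (t = (s i' * s i) ^ (2 * k) * s i') :=
      conj_pow_iff' (c := s i') t hq (by group) k
    have e2 : (s i' * ((s i * s i') ^ k * t * (s i' * s i) ^ k) * s i' = s i) ↔
        (t = (s i' * s i) ^ (2 * k + 1) * s i') := by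
      rw [conj_invol_iff (cs.simple_mul_simple_self i'),
        conj_pow_iff' (c := (s i' * s i) * s i') t hq (by group) k,
        show ((s i' * s i : W) ^ (2 * k) * ((s i' * s i) * s i'))
          = (s i' * s i) ^ (2 * k + 1) * s i' by rw [pow_succ]; group]
    simp only [e1, e2]
    rw [show 2 * (k + 1) = (2 * k + 1) + 1 by ring, Finset.sum_range_succ, Finset.sum_range_succ,
      Prod.mk.injEq]
    constructor
    · rw [pow_succ' ((s i * s i') : W) k, pow_succ ((s i' * s i) : W) k]
      group
    · ring

lemma eta_liftable : M.IsLiftable (fun i => eta cs i) := by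
  intro i i'
  have h := cs.simple_mul_simple_pow i i'
  have h' := cs.simple_mul_simple_pow' i i'
  apply Equiv.ext
  rintro ⟨t, z⟩
  rw [Equiv.Perm.one_apply]
  show ((eta cs i * eta cs i') ^ M i i') (t, z) = (t, z)
  rw [eta_mul_pow, h, h']
  have hsum : ∑ r ∈ Finset.range (2 * M i i'),
      (if t = (s i' * s i) ^ r * s i' then (1 : ZMod 2) else 0) = 0 := by
    rw [two_mul, Finset.sum_range_add]
    have hper : ∀ r : ℕ, ((s i' * s i : W)) ^ (M i i' + r) = (s i' * s i) ^ r := by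
      intro r; rw [pow_add, h', one_mul]
    simp only [hper]
    exact zmod2_add_self _
  rw [hsum]
  simp

/-- The reflection-parity representation of the Coxeter group. -/
noncomputable def rho : W →* Equiv.Perm (W × ZMod 2) :=
  cs.lift ⟨fun i => eta cs i, eta_liftable cs⟩

lemma rho_simple (i : B) : rho cs (s i) = eta cs i :=
  cs.lift_apply_simple (eta_liftable cs) i

lemma rho_wordProd (ω : List B) (t : W) (z : ZMod 2) :
    rho cs (π ω) (t, z) = (π ω * t * (π ω)⁻¹, z + ((ris ω).count t : ZMod 2)) := by
  induction ω with
  | nil => simp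
  | cons i ω ih =>
    rw [wordProd_cons, map_mul, Equiv.Perm.mul_apply, ih, rho_simple, eta_apply]
    have hris : ris (i :: ω) = ((π ω)⁻¹ * s i * π ω) :: ris ω := rfl
    rw [hris, Prod.mk.injEq]
    constructor
    · rw [mul_inv_rev, cs.inv_simple]; group
    · rw [List.count_cons]
      have hcond : (π ω * t * (π ω)⁻¹ = s i) ↔ ((π ω)⁻¹ * s i * π ω == t) = true := by
        rw [beq_iff_eq, conj_eq_iff, eq_comm]
      push_cast [apply_ite]
      rcases Classical.em (π ω * t * (π ω)⁻¹ = s i) with h | h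
      · rw [if_pos h, if_pos (hcond.mp h)]; ring
      · rw [if_neg h, if_neg (fun hh => h (hcond.mpr hh))]; ring

/-- The reflection-counting parity function. -/
noncomputable def nn (w t : W) : ZMod 2 := (rho cs w (t, 0)).2

lemma nn_eq_count {w : W} {ω : List B} (h : w = π ω) (t : W) :
    nn cs w t = ((ris ω).count t : ZMod 2) := by
  subst h; rw [nn, rho_wordProd, zero_add]

lemma rho_apply (w t : W) (z : ZMod 2) :
    rho cs w (t, z) = (w * t * w⁻¹, z + nn cs w t) := by
  obtain ⟨ω, _, rfl⟩ := cs.exists_reduced_word' w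
  have h := nn_eq_count (cs := cs) (w := cs.wordProd ω) (ω := ω) rfl t
  rw [rho_wordProd, h]

lemma nn_one (t : W) : nn cs 1 t = 0 := by
  rw [nn, map_one, Equiv.Perm.one_apply]

lemma nn_mul (w v t : W) : nn cs (w * v) t = nn cs v t + nn cs w (v * t * v⁻¹) := by
  have h : rho cs (w * v) (t, 0) = rho cs w (rho cs v (t, 0)) := by
    rw [map_mul, Equiv.Perm.mul_apply]
  rw [nn, h, rho_apply, rho_apply, zero_add]

lemma nn_simple (i : B) (t : W) : nn cs (s i) t = if t = s i then 1 else 0 := by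
  rw [nn, rho_simple, eta_apply, zero_add]

lemma nn_refl_self {t : W} (ht : cs.IsReflection t) : nn cs t t = 1 := by
  obtain ⟨v, i, rfl⟩ := ht
  have hx : v⁻¹ * (v * s i * v⁻¹) * v = s i := by group
  have hinv : nn cs v⁻¹ (v * s i * v⁻¹) = nn cs v (s i) := by
    have h0 := nn_mul cs v v⁻¹ (v * s i * v⁻¹)
    rw [mul_inv_cancel, nn_one, inv_inv] at h0
    have h1 := zmod2_eq_of_add_eq_zero h0.symm
    rw [hx] at h1
    exact h1
  have h1 := nn_mul cs (v * s i) v⁻¹ (v * s i * v⁻¹)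
  rw [inv_inv, hx] at h1
  have h3 : nn cs (s i) (s i) = 1 := by rw [nn_simple, if_pos rfl]
  have h2 := nn_mul cs v (s i) (s i)
  rw [h3, cs.inv_simple,
    show (s i * s i * s i : W) = s i by rw [cs.simple_mul_simple_self, one_mul]] at h2
  have hfin : v * s i * v⁻¹ * (v * s i * v⁻¹)⁻¹ = 1 := mul_inv_cancel _
  calc nn cs (v * s i * v⁻¹) (v * s i * v⁻¹)
      = nn cs v⁻¹ (v * s i * v⁻¹) + nn cs (v * s i) (s i) := h1
    _ = nn cs v (s i) + (1 + nn cs v (s i)) := by rw [hinv, h2]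
    _ = 1 := zmod2_aux _

lemma length_le_of_descent_aux :
    ∀ (n : ℕ) (w t : W), ℓ w ≤ n → cs.IsReflection t → nn cs w t = 1 → ℓ (w * t) < ℓ w := by
  intro n
  induction n with
  | zero =>
    intro w t hw _ hn
    have : w = 1 := cs.length_eq_zero_iff.mp (Nat.le_zero.mp hw)
    rw [this, nn_one] at hn
    exact absurd hn (by decide)
  | succ n ih =>
    intro w t hw ht hn
    rcases eq_or_ne w 1 with rfl | hw1
    · rw [nn_one] at hn; exact absurd hn (by decide)
    obtain ⟨j, hj⟩ := cs.exists_rightDescent_of_ne_one hw1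
    have hwj : w = (w * s j) * s j := by
      rw [mul_assoc, cs.simple_mul_simple_self, mul_one]
    by_cases hts : t = s j
    · rw [hts]; exact hj
    · have hcoc : nn cs ((w * s j) * s j) t = nn cs (s j) t + nn cs (w * s j) (s j * t * (s j)⁻¹) :=
        nn_mul cs (w * s j) (s j) t
      rw [← hwj, nn_simple, if_neg hts, zero_add] at hcoc
      have hrefl : cs.IsReflection (s j * t * (s j)⁻¹) := ht.conj (s j)
      have hjlt : ℓ (w * s j) < ℓ w := hj
      have hlen : ℓ (w * s j) ≤ n := by omega
      have hlt : ℓ ((w * s j) * (s j * t * (s j)⁻¹)) < ℓ (w * s j) :=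
        ih (w * s j) (s j * t * (s j)⁻¹) hlen hrefl (by rw [← hcoc, hn])
      have hkey : w * t = ((w * s j) * (s j * t * (s j)⁻¹)) * s j := by
        rw [cs.inv_simple]
        have h1 : ((w * s j) * (s j * t * s j)) * s j = (w * (s j * s j)) * t * (s j * s j) := by
          group
        rw [h1, cs.simple_mul_simple_self, mul_one, mul_one]
      have hle : ℓ (w * t) ≤ ℓ ((w * s j) * (s j * t * (s j)⁻¹)) + 1 := by
        rw [hkey]
        calc ℓ (((w * s j) * (s j * t * (s j)⁻¹)) * s j)
            ≤ ℓ ((w * s j) * (s j * t * (s j)⁻¹)) + ℓ (s j) := cs.length_mul_le _ _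
          _ = ℓ ((w * s j) * (s j * t * (s j)⁻¹)) + 1 := by rw [cs.length_simple]
      omega

lemma descent_of_nn_eq_one {w t : W} (ht : cs.IsReflection t) (hn : nn cs w t = 1) :
    ℓ (w * t) < ℓ w :=
  length_le_of_descent_aux cs (ℓ w) w t le_rfl ht hn

lemma nn_eq_one_of_descent {w t : W} (ht : cs.IsReflection t) (hl : ℓ (w * t) < ℓ w) :
    nn cs w t = 1 := by
  have hw : w = (w * t) * t := by rw [mul_assoc, ht.mul_self, mul_one]
  have hcoc : nn cs ((w * t) * t) t = nn cs t t + nn cs (w * t) (t * t * t⁻¹) :=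
    nn_mul cs (w * t) t t
  rw [ht.mul_self, one_mul, ht.inv, nn_refl_self cs ht] at hcoc
  have hu0 : nn cs (w * t) t = 0 := by
    rcases zmod2_cases (nn cs (w * t) t) with h | h
    · exact h
    · exfalso
      have hlt := descent_of_nn_eq_one cs ht h
      rw [mul_assoc, ht.mul_self, mul_one] at hlt
      omega
  calc nn cs w t = nn cs ((w * t) * t) t := by rw [← hw]
    _ = 1 + nn cs (w * t) t := hcoc
    _ = 1 := by rw [hu0, add_zero]

lemma mem_rightInvSeq_of_descent {ω : List B} {t : W} (ht : cs.IsReflection t)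
    (hl : ℓ (π ω * t) < ℓ (π ω)) : t ∈ ris ω := by
  have h1 : nn cs (π ω) t = 1 := nn_eq_one_of_descent cs ht hl
  rw [nn_eq_count (cs := cs) (w := π ω) (ω := ω) rfl t] at h1
  by_contra hmem
  rw [List.count_eq_zero.mpr hmem] at h1
  exact absurd h1 (by decide)

/-- Strong exchange property. -/
lemma exists_eraseIdx_of_descent {ω : List B} {t : W} (ht : cs.IsReflection t)
    (hl : ℓ (π ω * t) < ℓ (π ω)) :
    ∃ k, k < ω.length ∧ π (ω.eraseIdx k) = π ω * t := by
  have hmem := mem_rightInvSeq_of_descent cs ht hl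
  obtain ⟨k, hk, hget⟩ := List.mem_iff_getElem.mp hmem
  rw [cs.length_rightInvSeq] at hk
  refine ⟨k, hk, ?_⟩
  rw [← cs.wordProd_mul_getD_rightInvSeq ω k]
  congr 1
  rw [List.getD_eq_getElem _ _ (by rw [cs.length_rightInvSeq]; exact hk)]
  exact hget

/-! ### The chain (Bruhat) order and the subword property -/

/-- One step in a Bruhat chain: multiply by a reflection on the right, increasing length. -/
def cstep (a b : W) : Prop := ∃ t, cs.IsReflection t ∧ b = a * t ∧ ℓ a < ℓ b

/-- The Bruhat order, defined via chains of reflections. -/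
def cle : W → W → Prop := Relation.ReflTransGen (cstep cs)

lemma cle_one {x : W} (h : cle cs x 1) : x = 1 := by
  rcases Relation.ReflTransGen.cases_tail h with h1 | ⟨c, _, t, _, _, hlt⟩
  · exact h1.symm
  · rw [cs.length_one] at hlt; omega

lemma exists_sublist_of_cle_aux :
    ∀ (n : ℕ) (ω : List B), ω.length ≤ n → ∀ x, cle cs x (π ω) → ∃ τ, τ <+ ω ∧ π τ = x := by
  intro n
  induction n with
  | zero =>
    intro ω hlen x hx
    have hω : ω = [] := List.eq_nil_of_length_eq_zero (Nat.le_zero.mp hlen)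
    subst hω
    rw [cs.wordProd_nil] at hx
    exact ⟨[], List.Sublist.refl _, by rw [cs.wordProd_nil, cle_one cs hx]⟩
  | succ n ih =>
    intro ω hlen x hx
    rcases Relation.ReflTransGen.cases_tail hx with h1 | ⟨c, hxc, t, ht, hc, hlt⟩
    · exact ⟨ω, List.Sublist.refl _, h1⟩
    · rw [hc] at hlt
      have hdl : ℓ (π ω * t) < ℓ (π ω) := by
        rw [hc, mul_assoc, ht.mul_self, mul_one]
        exact hlt
      obtain ⟨k, hk, hke⟩ := exists_eraseIdx_of_descent cs ht hdl
      have hc' : π (ω.eraseIdx k) = c := by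
        rw [hke, hc, mul_assoc, ht.mul_self, mul_one]
      have hlen' : (ω.eraseIdx k).length ≤ n := by
        rw [List.length_eraseIdx, if_pos hk]
        omega
      obtain ⟨τ, hsub, hτ⟩ := ih (ω.eraseIdx k) hlen' x (by rw [hc']; exact hxc)
      exact ⟨τ, hsub.trans (List.eraseIdx_sublist ω k), hτ⟩

lemma exists_sublist_of_cle {ω : List B} {x : W} (h : cle cs x (π ω)) :
    ∃ τ, τ <+ ω ∧ π τ = x :=
  exists_sublist_of_cle_aux cs ω.length ω le_rfl x h

/-- Deodhar's property Z / the lifting lemma for chains. -/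
lemma zprop (j : B) {v w : W} (h : cle cs v w) :
    cle cs (v * s j) w ∨ cle cs (v * s j) (w * s j) := by
  induction h with
  | refl => right; exact Relation.ReflTransGen.refl
  | @tail u w' hvu hstep ih =>
    obtain ⟨t, ht, rfl, hlt⟩ := hstep
    rcases ih with ih | ih
    · exact Or.inl (ih.tail ⟨t, ht, rfl, hlt⟩)
    · have ht' : cs.IsReflection (s j * t * s j) := by
        have h0 := ht.conj (s j)
        rwa [cs.inv_simple] at h0
      have heq : (u * s j) * (s j * t * s j) = (u * t) * s j := by
        have h1 : (u * s j) * (s j * t * s j) = (u * (s j * s j)) * t * s j := by group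
        rw [h1, cs.simple_mul_simple_self, mul_one]
      have hne : ℓ ((u * s j) * (s j * t * s j)) ≠ ℓ (u * s j) :=
        ht'.length_mul_left_ne (u * s j)
      rw [heq] at hne
      rcases lt_or_gt_of_ne hne with hlt2 | hgt2
      · -- ℓ ((u*t)*s j) < ℓ (u*s j)
        have hne3 : ℓ (u * s j) ≠ ℓ u := cs.length_mul_simple_ne u j
        rcases lt_or_gt_of_ne hne3 with hlt4 | hgt4
        · -- descend from u*s j back to u, then to u*t
          left
          have step1 : cstep cs (u * s j) u :=
            ⟨s j, cs.isReflection_simple j, by rw [mul_assoc, cs.simple_mul_simple_self, mul_one],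
              hlt4⟩
          have step2 : cstep cs u (u * t) := ⟨t, ht, rfl, hlt⟩
          exact (ih.tail step1).tail step2
        · -- u*s j is longer than u; use strong exchange to show u*t = u*s j
          obtain ⟨ρ, hρred, hρ⟩ := cs.exists_reduced_word' u
          have hsig : π (ρ.concat j) = u * s j := by
            rw [cs.wordProd_concat, ← hρ]
          have hlsig : ℓ (u * s j) = ℓ u + 1 := by
            rcases cs.length_mul_simple u j with h0 | h0
            · exact h0
            · omega
          have hred : cs.IsReduced (ρ.concat j) := by
            unfold CoxeterSystem.IsReduced
            rw [hsig, hlsig, List.length_concat]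
            rw [CoxeterSystem.IsReduced] at hρred
            rw [← hρ] at hρred
            omega
          have hdl : ℓ (π (ρ.concat j) * (s j * t * s j)) < ℓ (π (ρ.concat j)) := by
            rw [hsig, heq]
            exact hlt2
          have hmem := mem_rightInvSeq_of_descent cs ht' hdl
          rw [cs.rightInvSeq_concat, List.concat_eq_append, List.mem_append] at hmem
          rcases hmem with hmem | hmem
          · exfalso
            obtain ⟨t₀, ht₀mem, heq2⟩ := List.mem_map.mp hmem
            have heq3 : s j * t₀ * s j = s j * t * s j := by
              have : (MulAut.conj (s j)) t₀ = s j * t₀ * (s j)⁻¹ := rfl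
              rw [this, cs.inv_simple] at heq2
              exact heq2
            have ht₀ : t₀ = t :=
              mul_left_cancel (mul_right_cancel heq3)
            have hinv := cs.isRightInversion_of_mem_rightInvSeq hρred ht₀mem
            rw [← hρ, ht₀] at hinv
            exact absurd hinv.2 (by omega)
          · have hts : t = s j := by
              have h5 : s j * t * s j = s j := List.mem_singleton.mp hmem
              have h6 := (conj_invol_iff (cs.simple_mul_simple_self j)).mp h5
              rw [cs.simple_mul_simple_self, one_mul] at h6
              exact h6
            left
            rw [hts]
            exact ih
      · -- ℓ (u*s j) < ℓ ((u*t)*s j) : lift the step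
        right
        exact ih.tail ⟨s j * t * s j, ht', heq.symm, hgt2⟩

/-- The subword property gives chains: a subword of a reduced word is below it. -/
lemma cle_of_sublist :
    ∀ (σ σ' : List B), cs.IsReduced σ → σ' <+ σ → cle cs (π σ') (π σ) := by
  intro σ
  induction σ using List.reverseRecOn with
  | nil =>
    intro σ' _ hsub
    rw [List.sublist_nil.mp hsub]
    exact Relation.ReflTransGen.refl
  | append_singleton σ₁ j ih =>
    intro σ' hred hsub
    have hred₁ : cs.IsReduced σ₁ := by
      have := hred.take σ₁.length
      rwa [List.take_left] at this
    have hstep : cstep cs (π σ₁) (π (σ₁ ++ [j])) := by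
      refine ⟨s j, cs.isReflection_simple j, by rw [cs.wordProd_append, cs.wordProd_singleton], ?_⟩
      have h1 : ℓ (π (σ₁ ++ [j])) = σ₁.length + 1 := by
        rw [hred]
        simp
      have h2 : ℓ (π σ₁) ≤ σ₁.length := cs.length_wordProd_le σ₁
      omega
    obtain ⟨l₁, l₂, rfl, hsub₁, hsub₂⟩ := List.sublist_append_iff.mp hsub
    rcases List.sublist_singleton.mp hsub₂ with rfl | rfl
    · rw [List.append_nil]
      exact (ih l₁ hred₁ hsub₁).tail hstep
    · have hπ : π (l₁ ++ [j]) = π l₁ * s j := by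
        rw [cs.wordProd_append, cs.wordProd_singleton]
      rcases zprop cs j (ih l₁ hred₁ hsub₁) with h | h
      · rw [hπ]
        exact h.tail hstep
      · rw [hπ]
        have hπ₂ : π (σ₁ ++ [j]) = π σ₁ * s j := by
          rw [cs.wordProd_append, cs.wordProd_singleton]
        rw [hπ₂]
        exact h

lemma cle_of_bruhatLE {x y : W} (h : cs.bruhatLE x y) : cle cs x y := by
  obtain ⟨ω, ω', hred, rfl, hsub, rfl⟩ := h
  exact cle_of_sublist cs ω ω' hred hsub

lemma bruhatLE_of_cle {x y : W} (h : cle cs x y) : cs.bruhatLE x y := by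
  obtain ⟨ω, hred, rfl⟩ := cs.exists_reduced_word' y
  obtain ⟨τ, hsub, hτ⟩ := exists_sublist_of_cle cs h
  exact ⟨ω, τ, hred, rfl, hsub, hτ⟩

lemma bruhatLE_refl (x : W) : cs.bruhatLE x x :=
  bruhatLE_of_cle cs Relation.ReflTransGen.refl

lemma bruhatLE_trans {x y z : W} (h1 : cs.bruhatLE x y) (h2 : cs.bruhatLE y z) :
    cs.bruhatLE x z :=
  bruhatLE_of_cle cs ((cle_of_bruhatLE cs h1).trans (cle_of_bruhatLE cs h2))

lemma length_le_of_bruhatLE {x y : W} (h : cs.bruhatLE x y) : ℓ x ≤ ℓ y := by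
  obtain ⟨ω, ω', hred, rfl, hsub, rfl⟩ := h
  calc ℓ (π ω') ≤ ω'.length := cs.length_wordProd_le ω'
    _ ≤ ω.length := hsub.length_le
    _ = ℓ (π ω) := hred.symm

lemma eq_of_bruhatLE_of_length_le {x y : W} (h : cs.bruhatLE x y) (hl : ℓ y ≤ ℓ x) :
    x = y := by
  obtain ⟨ω, ω', hred, rfl, hsub, rfl⟩ := h
  have h1 : ℓ (π ω') ≤ ω'.length := cs.length_wordProd_le ω'
  have h2 : ω'.length ≤ ω.length := hsub.length_le
  have h3 : ω.length = ℓ (π ω) := hred.symm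
  have : ω' = ω := hsub.eq_of_length (by omega)
  rw [this]

/-! ### Lifting lemmas and monotonicity -/

lemma bruhatLE_lift_up {i : B} {z z' : W} (hup : ℓ z < ℓ (s i * z)) (h : cs.bruhatLE z' z) :
    cs.bruhatLE z' (s i * z) ∧ cs.bruhatLE (s i * z') (s i * z) := by
  obtain ⟨ω, hred, hz⟩ := cs.exists_reduced_word' z
  have hlen : ℓ (s i * z) = ℓ z + 1 := by
    rcases cs.length_simple_mul z i with h0 | h0 <;> omega
  have hπ : π (i :: ω) = s i * z := by rw [cs.wordProd_cons, ← hz]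
  have hredi : cs.IsReduced (i :: ω) := by
    have h2 : ℓ z = ω.length := by rw [hz]; exact hred
    unfold CoxeterSystem.IsReduced
    rw [hπ, hlen, List.length_cons]
    omega
  obtain ⟨τ, hsub, hτ⟩ := exists_sublist_of_cle cs (ω := ω)
    (by rw [← hz]; exact cle_of_bruhatLE cs h)
  constructor
  · exact ⟨i :: ω, τ, hredi, hπ, hsub.cons i, hτ⟩
  · exact ⟨i :: ω, i :: τ, hredi, hπ, hsub.cons₂ i, by rw [cs.wordProd_cons, hτ]⟩

lemma bruhatLE_lift_down {i : B} {z z' : W} (hdown : ℓ (s i * z) < ℓ z) (h : cs.bruhatLE z' z) :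
    cs.bruhatLE z' (s i * z) ∨ cs.bruhatLE (s i * z') (s i * z) := by
  obtain ⟨ω, hred, hz⟩ := cs.exists_reduced_word' (s i * z)
  have hlen : ℓ z = ℓ (s i * z) + 1 := by
    rcases cs.length_simple_mul z i with h0 | h0 <;> omega
  have hzz : z = π (i :: ω) := by
    rw [cs.wordProd_cons, ← hz, ← mul_assoc, cs.simple_mul_simple_self, one_mul]
  have hredi : cs.IsReduced (i :: ω) := by
    have h2 : ℓ (s i * z) = ω.length := by rw [hz]; exact hred
    unfold CoxeterSystem.IsReduced
    rw [← hzz, List.length_cons]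
    omega
  obtain ⟨τ, hsub, hτ⟩ := exists_sublist_of_cle cs (ω := i :: ω)
    (by rw [← hzz]; exact cle_of_bruhatLE cs h)
  rcases List.sublist_cons_iff.mp hsub with hsub' | ⟨τ₁, rfl, hsub'⟩
  · exact Or.inl ⟨ω, τ, hred, hz.symm, hsub', hτ⟩
  · refine Or.inr ⟨ω, τ₁, hred, hz.symm, hsub', ?_⟩
    rw [← hτ, cs.wordProd_cons, ← mul_assoc, cs.simple_mul_simple_self, one_mul]

lemma key_aux : ∀ (n : ℕ) (u y y' : W), ℓ u ≤ n → cs.bruhatLE y' y →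
    ∃ v, cs.bruhatLE v u ∧ cs.bruhatLE (v * y') (u * y) := by
  intro n
  induction n with
  | zero =>
    intro u y y' hu hy
    have h1 : u = 1 := cs.length_eq_zero_iff.mp (Nat.le_zero.mp hu)
    subst h1
    exact ⟨1, bruhatLE_refl cs 1, by rw [one_mul, one_mul]; exact hy⟩
  | succ n ih =>
    intro u y y' hu hy
    rcases eq_or_ne u 1 with rfl | hne
    · exact ⟨1, bruhatLE_refl cs 1, by rw [one_mul, one_mul]; exact hy⟩
    obtain ⟨i, hi⟩ := cs.exists_leftDescent_of_ne_one hne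
    have hidesc : ℓ (s i * u) < ℓ u := hi
    have hu1 : u = s i * (s i * u) := by
      rw [← mul_assoc, cs.simple_mul_simple_self, one_mul]
    obtain ⟨v₁, hv₁, hvy⟩ := ih (s i * u) y y' (by omega) hy
    have hup : ℓ (s i * u) < ℓ (s i * (s i * u)) := by rw [← hu1]; exact hidesc
    have hvu := bruhatLE_lift_up cs hup hv₁
    rw [← hu1] at hvu
    have hassoc : s i * ((s i * u) * y) = u * y := by
      rw [← mul_assoc, ← mul_assoc, cs.simple_mul_simple_self, one_mul]
    rcases lt_or_gt_of_ne (cs.length_simple_mul_ne ((s i * u) * y) i) with hdown | hup2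
    · rcases bruhatLE_lift_down cs hdown hvy with h | h
      · exact ⟨v₁, hvu.1, by rw [← hassoc]; exact h⟩
      · refine ⟨s i * v₁, hvu.2, ?_⟩
        rw [← hassoc, mul_assoc]
        exact h
    · have hlift := (bruhatLE_lift_up cs hup2 hvy).1
      exact ⟨v₁, hvu.1, by rw [← hassoc]; exact hlift⟩

lemma bruhatLE_min_aux {S : Set W} {m : W} (hm : cs.IsUniqueBruhatMin S m) :
    ∀ (n : ℕ) (z : W), z ∈ S → ℓ z ≤ n → cs.bruhatLE m z := by
  intro n
  induction n with
  | zero =>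
    intro z hz hlen
    by_cases hminz : ∀ z' ∈ S, cs.bruhatLE z' z → z' = z
    · rw [hm.2 z hz hminz]
      exact bruhatLE_refl cs m
    · exfalso
      push_neg at hminz
      obtain ⟨z', hz', hle, hne⟩ := hminz
      have h1 := length_le_of_bruhatLE cs hle
      rcases eq_or_lt_of_le h1 with heq | hlt
      · exact hne (eq_of_bruhatLE_of_length_le cs hle heq.ge)
      · omega
  | succ n ih =>
    intro z hz hlen
    by_cases hminz : ∀ z' ∈ S, cs.bruhatLE z' z → z' = z
    · rw [hm.2 z hz hminz]
      exact bruhatLE_refl cs m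
    · push_neg at hminz
      obtain ⟨z', hz', hle, hne⟩ := hminz
      have h1 := length_le_of_bruhatLE cs hle
      have hlt : ℓ z' < ℓ z := by
        rcases eq_or_lt_of_le h1 with heq | hlt
        · exact absurd (eq_of_bruhatLE_of_length_le cs hle heq.ge) hne
        · exact hlt
      exact bruhatLE_trans cs (ih z' hz' (by omega)) hle

end CoxeterBruhat

/-- `▷` is antitone in the first argument and monotone in the second:
if `x ≤ x'` and `y' ≤ y` then `x' ▷ y' ≤ x ▷ y`. -/
theorem tri_antitone_monotone {B W : Type*} [Group W] {M : CoxeterMatrix B} (cs : CoxeterSystem M W)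
    (tri : W → W → W)
    (htri : ∀ x y : W, cs.IsUniqueBruhatMin (cs.triSet x y) (tri x y))
    (x x' y y' : W) (hx : cs.bruhatLE x x') (hy : cs.bruhatLE y' y) :
    cs.bruhatLE (tri x' y') (tri x y) := by
  have hmin : ∀ z ∈ cs.triSet x' y', cs.bruhatLE (tri x' y') z := fun z hz =>
    CoxeterBruhat.bruhatLE_min_aux cs (htri x' y') (cs.length z) z hz le_rfl
  obtain ⟨u, hu, hmu⟩ := (htri x y).1.1
  obtain ⟨v, hvu, hvy⟩ := CoxeterBruhat.key_aux cs (cs.length u) u y y' le_rfl hy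
  have hvx' : cs.bruhatLE v x' :=
    CoxeterBruhat.bruhatLE_trans cs (CoxeterBruhat.bruhatLE_trans cs hvu hu) hx
  have h1 := hmin (v * y') ⟨v, hvx', rfl⟩
  rw [hmu]
  exact CoxeterBruhat.bruhatLE_trans cs h1 hvy
end

section
/- The map (x, y) ↦ x ▷ y defines a left monoid action of the Demazure monoid (W, ∗) on the set W; that is, 1 ▷ y = y and (x ∗ y) ▷ z = x ▷ (y ▷ z) for all x, y, z ∈ W. -/
open List

namespace DemazureAux

variable {B W : Type*} [Group W] {M : CoxeterMatrix B} (cs : CoxeterSystem M W)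

local prefix:100 "σ" => cs.simple
local prefix:100 "π" => cs.wordProd
local prefix:100 "ℓ" => cs.length

noncomputable instance : DecidableEq W := Classical.decEq W

lemma conj_eq_iff (a x y : W) : a * x * a⁻¹ = y ↔ x = a⁻¹ * y * a := by
  constructor
  · intro h; subst h; group
  · intro h; subst h; group

/-- The function underlying the reflection representation on `W × ZMod 2`. -/
noncomputable def pFun (i : B) : W × ZMod 2 → W × ZMod 2 :=
  fun q => (σ i * q.1 * σ i, q.2 + if q.1 = σ i then 1 else 0)

lemma simple_conj_eq_iff (i : B) (x y : W) : σ i * x * σ i = y ↔ x = σ i * y * σ i := by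
  have h := conj_eq_iff (σ i) x y
  rwa [cs.inv_simple] at h

lemma pFun_involutive (i : B) : Function.Involutive (pFun cs i) := by
  intro q
  have hc : σ i * (σ i * q.1 * σ i) * σ i = q.1 := by
    simp [mul_assoc, cs.simple_mul_simple_cancel_left]
  have hcond : (σ i * q.1 * σ i = σ i) ↔ (q.1 = σ i) := by
    rw [simple_conj_eq_iff]
    simp [mul_assoc, cs.simple_mul_simple_self, cs.simple_mul_simple_cancel_left]
  simp only [pFun, hc]
  ext
  · rfl
  · simp only [hcond]
    split_ifs with h
    · show q.2 + 1 + 1 = q.2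
      have h11 : (1 + 1 : ZMod 2) = 0 := by decide
      rw [add_assoc, h11, add_zero]
    · show q.2 + 0 + 0 = q.2
      simp

/-- The permutation attached to a simple reflection. -/
noncomputable def toPerm (i : B) : Equiv.Perm (W × ZMod 2) :=
  (pFun_involutive cs i).toPerm _

lemma toPerm_apply (i : B) (q : W × ZMod 2) :
    toPerm cs i q = (σ i * q.1 * σ i, q.2 + if q.1 = σ i then 1 else 0) := rfl

lemma toPerm_mul_pow_apply (i j : B) (n : ℕ) (q : W × ZMod 2) :
    ((toPerm cs i * toPerm cs j) ^ n) q =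
      ((σ i * σ j) ^ n * q.1 * ((σ i * σ j) ^ n)⁻¹,
        q.2 + ∑ a ∈ Finset.range (2 * n),
          if q.1 = ((σ i * σ j) ^ (a + 1))⁻¹ * σ i then 1 else 0) := by
  induction n generalizing q with
  | zero => simp
  | succ n ih =>
    rw [pow_succ, Equiv.Perm.mul_apply]
    have hq : (toPerm cs i * toPerm cs j) q =
        ((σ i * σ j) * q.1 * (σ i * σ j)⁻¹,
          q.2 + ((if q.1 = ((σ i * σ j) ^ 1)⁻¹ * σ i then 1 else 0)
               + (if q.1 = ((σ i * σ j) ^ 2)⁻¹ * σ i then 1 else 0))) := by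
      rw [Equiv.Perm.mul_apply, toPerm_apply, toPerm_apply]
      have e1 : σ i * (σ j * q.1 * σ j) * σ i = (σ i * σ j) * q.1 * (σ i * σ j)⁻¹ := by
        simp [mul_assoc, mul_inv_rev, cs.inv_simple]
      have e2 : (σ j * q.1 * σ j = σ i) ↔ (q.1 = ((σ i * σ j) ^ 2)⁻¹ * σ i) := by
        rw [simple_conj_eq_iff]
        have h2 : ((σ i * σ j) ^ 2)⁻¹ * σ i = σ j * σ i * σ j := by
          simp [pow_succ, pow_zero, one_mul, mul_inv_rev, cs.inv_simple, mul_assoc,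
            cs.simple_mul_simple_self, cs.simple_mul_simple_cancel_left]
        rw [h2]
      have e3 : (q.1 = σ j) ↔ (q.1 = ((σ i * σ j) ^ 1)⁻¹ * σ i) := by
        have h1 : ((σ i * σ j) ^ 1)⁻¹ * σ i = σ j := by
          simp [pow_one, mul_inv_rev, cs.inv_simple, mul_assoc,
            cs.simple_mul_simple_self, cs.simple_mul_simple_cancel_left]
        rw [h1]
      dsimp only
      refine Prod.ext e1 ?_
      simp only [e2, e3]
      ring
    rw [hq, ih]
    have hcond : ∀ a : ℕ,
        ((σ i * σ j) * q.1 * (σ i * σ j)⁻¹ = ((σ i * σ j) ^ (a + 1))⁻¹ * σ i)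
          ↔ (q.1 = ((σ i * σ j) ^ (a + 3))⁻¹ * σ i) := by
      intro a
      rw [conj_eq_iff]
      have key : σ i * (σ i * σ j) = (σ i * σ j)⁻¹ * σ i := by
        simp [mul_inv_rev, cs.inv_simple, mul_assoc, cs.simple_mul_simple_cancel_left]
      have hre : (σ i * σ j)⁻¹ * (((σ i * σ j) ^ (a + 1))⁻¹ * σ i) * (σ i * σ j)
          = ((σ i * σ j) ^ (a + 3))⁻¹ * σ i := by
        have h0 : (σ i * σ j)⁻¹ * (((σ i * σ j) ^ (a + 1))⁻¹ * σ i) * (σ i * σ j)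
            = ((σ i * σ j)⁻¹ * ((σ i * σ j) ^ (a + 1))⁻¹) * (σ i * (σ i * σ j)) := by
          group
        rw [h0, key]
        have h2 : (σ i * σ j)⁻¹ * ((σ i * σ j) ^ (a + 1))⁻¹ = ((σ i * σ j) ^ (a + 2))⁻¹ := by
          rw [← mul_inv_rev, ← pow_succ]
        rw [h2, ← mul_assoc, ← mul_inv_rev, ← pow_succ']
      rw [hre]
    refine Prod.ext ?_ ?_
    · show (σ i * σ j) ^ n * ((σ i * σ j) * q.1 * (σ i * σ j)⁻¹) * ((σ i * σ j) ^ n)⁻¹ = _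
      simp [pow_succ, mul_inv_rev, mul_assoc]
    · show (q.2 + _) + _ = q.2 + _
      simp only [hcond]
      have hsplit : ∑ a ∈ Finset.range (2 * (n + 1)),
            (if q.1 = ((σ i * σ j) ^ (a + 1))⁻¹ * σ i then (1 : ZMod 2) else 0)
          = ((if q.1 = ((σ i * σ j) ^ 1)⁻¹ * σ i then (1 : ZMod 2) else 0)
              + (if q.1 = ((σ i * σ j) ^ 2)⁻¹ * σ i then 1 else 0))
            + ∑ a ∈ Finset.range (2 * n),
                (if q.1 = ((σ i * σ j) ^ (a + 3))⁻¹ * σ i then 1 else 0) := by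
        have h1 : 2 * (n + 1) = (2 * n) + 1 + 1 := by ring
        rw [h1, Finset.sum_range_succ', Finset.sum_range_succ']
        have harith : ∀ x : ℕ, x + 1 + 1 + 1 = x + 3 := by intro x; omega
        simp only [harith, Nat.zero_add, Nat.reduceAdd]
        ring
      rw [hsplit]
      ring

lemma toPerm_liftable : M.IsLiftable (fun i => toPerm cs i) := by
  intro i j
  show (toPerm cs i * toPerm cs j) ^ M i j = 1
  by_cases h0 : M i j = 0
  · rw [h0, pow_zero]
  · apply Equiv.ext
    intro q
    have hxx : ∀ x : ZMod 2, x + x = 0 := by decide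
    have hS : (∑ a ∈ Finset.range (2 * M i j),
        if q.1 = ((σ i * σ j) ^ (a + 1))⁻¹ * σ i then (1 : ZMod 2) else 0) = 0 := by
      have hper : ∀ a : ℕ, ((σ i * σ j) ^ (a + M i j + 1))⁻¹ = ((σ i * σ j) ^ (a + 1))⁻¹ := by
        intro a
        have : (σ i * σ j) ^ (a + M i j + 1) = (σ i * σ j) ^ (a + 1) := by
          rw [show a + M i j + 1 = (a + 1) + M i j by omega, pow_add,
            cs.simple_mul_simple_pow i j, mul_one]
        rw [this]
      have hsplit : (2 : ℕ) * M i j = M i j + M i j := by omega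
      rw [hsplit, Finset.range_eq_Ico, ← Finset.sum_Ico_consecutive _ (Nat.zero_le (M i j))
        (Nat.le_add_right (M i j) (M i j)), Finset.sum_Ico_eq_sum_range,
        Finset.sum_Ico_eq_sum_range]
      simp only [Nat.sub_zero, Nat.zero_add, Nat.add_sub_cancel_left]
      have heq : ∀ a ∈ Finset.range (M i j),
          (if q.1 = ((σ i * σ j) ^ (M i j + a + 1))⁻¹ * σ i then (1 : ZMod 2) else 0)
            = (if q.1 = ((σ i * σ j) ^ (a + 1))⁻¹ * σ i then (1 : ZMod 2) else 0) := by
        intro a _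
        rw [show M i j + a + 1 = a + M i j + 1 by omega, hper a]
      rw [Finset.sum_congr rfl heq]
      exact hxx _
    rw [toPerm_mul_pow_apply, cs.simple_mul_simple_pow i j, hS, add_zero]
    show ((1 : W) * q.1 * (1 : W)⁻¹, q.2) = (1 : Equiv.Perm (W × ZMod 2)) q
    rw [Equiv.Perm.one_apply, show (1 : W) * q.1 * (1 : W)⁻¹ = q.1 by simp]

/-- The reflection representation `W →* Perm (W × ZMod 2)`. -/
noncomputable def phi : W →* Equiv.Perm (W × ZMod 2) :=
  cs.lift ⟨fun i => toPerm cs i, toPerm_liftable cs⟩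

lemma phi_simple (i : B) : phi cs (σ i) = toPerm cs i :=
  cs.lift_apply_simple (toPerm_liftable cs) i

lemma phi_wordProd (ω : List B) (t : W) (ε : ZMod 2) :
    phi cs (π ω) (t, ε) = (π ω * t * (π ω)⁻¹, ε + ((cs.rightInvSeq ω).count t : ZMod 2)) := by
  induction ω generalizing ε with
  | nil => simp
  | cons i ω ih =>
    rw [cs.wordProd_cons, map_mul, Equiv.Perm.mul_apply, ih, phi_simple, toPerm_apply]
    dsimp only
    have hris : cs.rightInvSeq (i :: ω) = ((π ω)⁻¹ * σ i * π ω) :: cs.rightInvSeq ω := rfl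
    have e1 : σ i * (π ω * t * (π ω)⁻¹) * σ i
        = π (i :: ω) * t * (π (i :: ω))⁻¹ := by
      rw [cs.wordProd_cons, mul_inv_rev, cs.inv_simple]
      group
    have e2 : (π ω * t * (π ω)⁻¹ = σ i) ↔ (t = (π ω)⁻¹ * σ i * π ω) := by
      rw [conj_eq_iff, mul_assoc]
    refine Prod.ext e1 ?_
    show (ε + _) + _ = ε + _
    rw [hris]
    have hnat : ((((π ω)⁻¹ * σ i * π ω) :: cs.rightInvSeq ω).count t)
        = (cs.rightInvSeq ω).count t
          + (if t = (π ω)⁻¹ * σ i * π ω then 1 else 0) := by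
      rw [List.count_cons]
      congr 1
      by_cases h : t = (π ω)⁻¹ * σ i * π ω
      · rw [if_pos h, if_pos (beq_iff_eq.mpr h.symm)]
      · rw [if_neg h, if_neg (by simp only [beq_iff_eq]; exact fun hh => h hh.symm)]
    rw [hnat]
    simp only [e2]
    push_cast
    ring

/-- Parity of the number of times `t` occurs in the right inversion sequence of any word for `w`. -/
noncomputable def eta (w t : W) : ZMod 2 := (phi cs w (t, 0)).2

lemma eta_eq_count {ω : List B} {w : W} (hw : π ω = w) (t : W) :
    eta cs w t = ((cs.rightInvSeq ω).count t : ZMod 2) := by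
  rw [eta, ← hw, phi_wordProd, zero_add]

lemma phi_apply_eq (w t : W) (ε : ZMod 2) :
    phi cs w (t, ε) = (w * t * w⁻¹, ε + eta cs w t) := by
  obtain ⟨ω, _, rfl⟩ := cs.exists_reduced_word' w
  rw [phi_wordProd, eta_eq_count cs rfl]

lemma eta_self (t : W) (ht : cs.IsReflection t) : eta cs t t = 1 := by
  obtain ⟨u, i, rfl⟩ := ht
  have hin : phi cs (σ i) (σ i, (0 : ZMod 2)) = (σ i, 1) := by
    rw [phi_simple, toPerm_apply]
    dsimp only
    rw [if_pos rfl, zero_add]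
    congr 1
    rw [cs.simple_mul_simple_self, one_mul]
  have hB : phi cs (u * σ i) (σ i, (0 : ZMod 2)) = (u * σ i * u⁻¹, 1 + eta cs u (σ i)) := by
    rw [map_mul, Equiv.Perm.mul_apply, hin, phi_apply_eq]
  have hA : phi cs ((u * σ i * u⁻¹) * u) (σ i, (0 : ZMod 2))
      = ((u * σ i * u⁻¹) * (u * σ i * u⁻¹) * (u * σ i * u⁻¹)⁻¹,
         eta cs u (σ i) + eta cs (u * σ i * u⁻¹) (u * σ i * u⁻¹)) := by
    rw [map_mul, Equiv.Perm.mul_apply, phi_apply_eq cs u (σ i) 0, zero_add, phi_apply_eq]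
  have hA' : (u * σ i * u⁻¹) * (u * σ i * u⁻¹) * (u * σ i * u⁻¹)⁻¹ = u * σ i * u⁻¹ := by group
  have htu : (u * σ i * u⁻¹) * u = u * σ i := by group
  rw [htu, hA'] at hA
  have hsnd := congrArg Prod.snd (hB.symm.trans hA)
  dsimp only at hsnd
  linear_combination -hsnd

lemma eta_eq_one_of_descent {w t : W} (ht : cs.IsReflection t) (hlt : ℓ (w * t) < ℓ w) :
    eta cs w t = 1 := by
  have hw : w = (w * t) * t := by rw [mul_assoc, ht.mul_self, mul_one]
  have h1 : phi cs t (t, (0 : ZMod 2)) = (t, 1) := by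
    rw [phi_apply_eq, eta_self cs t ht, zero_add]
    congr 1
    rw [ht.mul_self, one_mul, ht.inv]
  have h2 : eta cs (w * t) t = 0 := by
    obtain ⟨ρ, hred, hρ⟩ := cs.exists_reduced_word' (w * t)
    rw [eta_eq_count cs hρ.symm]
    have hnot : t ∉ cs.rightInvSeq ρ := by
      intro hmem
      have := (cs.isRightInversion_of_mem_rightInvSeq hred hmem).2
      rw [← hρ] at this
      rw [mul_assoc, ht.mul_self, mul_one] at this
      omega
    rw [List.count_eq_zero.mpr hnot]
    rfl
  have : eta cs w t = (phi cs w (t, 0)).2 := rfl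
  rw [this]
  conv_lhs => rw [hw]
  rw [map_mul, Equiv.Perm.mul_apply, h1, phi_apply_eq, h2]
  ring

/-- Strong exchange, right-handed, for arbitrary words. -/
lemma strong_exchange_right {t : W} (ht : cs.IsReflection t) (ω : List B)
    (hlt : ℓ (π ω * t) < ℓ (π ω)) :
    ∃ j < ω.length, π ω * t = π (ω.eraseIdx j) := by
  have h1 : eta cs (π ω) t = 1 := eta_eq_one_of_descent cs ht hlt
  rw [eta_eq_count cs rfl] at h1
  have hmem : t ∈ cs.rightInvSeq ω := by
    by_contra hnot
    rw [List.count_eq_zero.mpr hnot] at h1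
    exact absurd h1 (by decide)
  obtain ⟨j, hj, hget⟩ := List.mem_iff_getElem.mp hmem
  rw [cs.length_rightInvSeq] at hj
  refine ⟨j, hj, ?_⟩
  rw [← cs.wordProd_mul_getD_rightInvSeq ω j]
  congr 1
  rw [List.getD_eq_getElem _ 1 (by rw [cs.length_rightInvSeq]; exact hj), hget]

/-- Strong exchange, left-handed, sublist form. -/
lemma strong_exchange_left {t : W} (ht : cs.IsReflection t) (ω : List B)
    (hlt : ℓ (t * π ω) < ℓ (π ω)) :
    ∃ ω' : List B, ω' <+ ω ∧ ω'.length + 1 = ω.length ∧ π ω' = t * π ω := by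
  have h1 : ℓ (π ω.reverse * t) < ℓ (π ω.reverse) := by
    rw [cs.wordProd_reverse]
    have : (π ω)⁻¹ * t = (t * π ω)⁻¹ := by rw [mul_inv_rev, ht.inv]
    rw [this, cs.length_inv, cs.length_inv]
    exact hlt
  obtain ⟨j, hj, hej⟩ := strong_exchange_right cs ht ω.reverse h1
  rw [List.length_reverse] at hj
  refine ⟨(ω.reverse.eraseIdx j).reverse, ?_, ?_, ?_⟩
  · have hs : ω.reverse.eraseIdx j <+ ω.reverse := List.eraseIdx_sublist _ j
    have := hs.reverse
    rwa [List.reverse_reverse] at this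
  · rw [List.length_reverse, List.length_eraseIdx_add_one (by rwa [List.length_reverse])]
    rw [List.length_reverse]
  · rw [cs.wordProd_reverse, ← hej, cs.wordProd_reverse, mul_inv_rev, inv_inv, ht.inv]

/-! ### Deletion property -/

lemma deletion (l : List B) : ∃ τ, τ <+ l ∧ cs.IsReduced τ ∧ π τ = π l := by
  induction l using List.reverseRecOn with
  | nil => exact ⟨[], List.Sublist.refl _, by simp [CoxeterSystem.IsReduced], rfl⟩
  | append_singleton l0 b ih =>
    obtain ⟨τ0, hsub, hred, hprod⟩ := ih
    have hdichot := cs.length_mul_simple (π τ0) b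
    rcases lt_or_gt_of_ne (cs.length_mul_simple_ne (π τ0) b) with hlt | hgt
    · -- descent : erase a letter from τ0
      obtain ⟨j, hj, hej⟩ := strong_exchange_right cs (cs.isReflection_simple b) τ0 hlt
      refine ⟨τ0.eraseIdx j, ?_, ?_, ?_⟩
      · exact ((List.eraseIdx_sublist τ0 j).trans hsub).trans (List.sublist_append_left l0 [b])
      · show ℓ (π (τ0.eraseIdx j)) = (τ0.eraseIdx j).length
        rw [← hej]
        have h1 : (τ0.eraseIdx j).length + 1 = τ0.length := List.length_eraseIdx_add_one hj
        have h2 : ℓ (π τ0) = τ0.length := hred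
        omega
      · rw [← hej, cs.wordProd_append, cs.wordProd_singleton, hprod]
    · -- ascent : append the letter
      refine ⟨τ0 ++ [b], hsub.append (List.Sublist.refl [b]), ?_, ?_⟩
      · show ℓ (π (τ0 ++ [b])) = (τ0 ++ [b]).length
        rw [cs.wordProd_append, cs.wordProd_singleton]
        have h2 : ℓ (π τ0) = τ0.length := hred
        simp only [List.length_append, List.length_singleton]
        omega
      · rw [cs.wordProd_append, cs.wordProd_append, hprod]

/-! ### Basic facts about the Bruhat order -/

lemma bruhatLE_refl (w : W) : cs.bruhatLE w w := by
  obtain ⟨ω, hred, hπ⟩ := cs.exists_reduced_word' w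
  exact ⟨ω, ω, hred, hπ.symm, List.Sublist.refl ω, hπ.symm⟩

lemma one_bruhatLE (w : W) : cs.bruhatLE 1 w := by
  obtain ⟨ω, hred, hπ⟩ := cs.exists_reduced_word' w
  exact ⟨ω, [], hred, hπ.symm, List.nil_sublist ω, cs.wordProd_nil⟩

lemma length_le_of_bruhatLE {u v : W} (h : cs.bruhatLE u v) : ℓ u ≤ ℓ v := by
  obtain ⟨ω, ω', hred, hπ, hsub, hπ'⟩ := h
  calc ℓ u = ℓ (π ω') := by rw [hπ']
    _ ≤ ω'.length := cs.length_wordProd_le ω'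
    _ ≤ ω.length := hsub.length_le
    _ = ℓ (π ω) := hred.symm
    _ = ℓ v := by rw [hπ]

lemma eq_of_bruhatLE_of_length_le {u v : W} (h : cs.bruhatLE u v) (hl : ℓ v ≤ ℓ u) : u = v := by
  obtain ⟨ω, ω', hred, hπ, hsub, hπ'⟩ := h
  have h1 : ω.length ≤ ω'.length := by
    have h2 : ℓ (π ω') ≤ ω'.length := cs.length_wordProd_le ω'
    have h3 : ℓ (π ω) = ω.length := hred
    rw [hπ] at h3
    rw [hπ'] at h2
    omega
  have := hsub.eq_of_length (le_antisymm hsub.length_le h1)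
  rw [← hπ, ← hπ', this]

lemma eq_one_of_bruhatLE_one {u : W} (h : cs.bruhatLE u 1) : u = 1 :=
  eq_of_bruhatLE_of_length_le cs h (by simp)

lemma bruhatLE_simple {u : W} {i : B} (h : cs.bruhatLE u (σ i)) : u = 1 ∨ u = σ i := by
  obtain ⟨ω, ω', hred, hπ, hsub, hπ'⟩ := h
  have hlen : ω.length = 1 := by
    have : ℓ (π ω) = ω.length := hred
    rw [hπ, cs.length_simple] at this
    omega
  obtain ⟨a, rfl⟩ := List.length_eq_one_iff.mp hlen
  rcases List.sublist_cons_iff.mp hsub with h1 | ⟨r, rfl, h2⟩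
  · left
    rw [List.sublist_nil.mp h1] at hπ'
    rw [← hπ', cs.wordProd_nil]
  · right
    rw [List.sublist_nil.mp h2] at hπ'
    rw [← hπ', ← hπ]

/-- Descent-erasure: if `u ≤ v` and `σ i * u < u` then `σ i * u ≤ v`. -/
lemma simple_mul_bruhatLE {u v : W} {i : B} (h : cs.bruhatLE u v)
    (hd : ℓ (σ i * u) < ℓ u) : cs.bruhatLE (σ i * u) v := by
  obtain ⟨ω, ω', hred, hπ, hsub, hπ'⟩ := h
  rw [← hπ'] at hd
  obtain ⟨ω'', hsub'', _, hπ''⟩ := strong_exchange_left cs (cs.isReflection_simple i) ω' hd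
  exact ⟨ω, ω'', hred, hπ, hsub''.trans hsub, by rw [hπ'', hπ']⟩

/-- Prepending an ascent: if `w < σ i * w` and `u ≤ w`, then `u ≤ σ i * w` and
`σ i * u ≤ σ i * w`. -/
lemma bruhatLE_simple_mul_of_asc {u w : W} {i : B} (ha : ℓ w < ℓ (σ i * w))
    (h : cs.bruhatLE u w) : cs.bruhatLE u (σ i * w) ∧ cs.bruhatLE (σ i * u) (σ i * w) := by
  obtain ⟨ω, ω', hred, hπ, hsub, hπ'⟩ := h
  have hred' : cs.IsReduced (i :: ω) := by
    show ℓ (π (i :: ω)) = (i :: ω).length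
    rw [cs.wordProd_cons, hπ]
    have h1 : ℓ (π ω) = ω.length := hred
    have h2 := cs.length_simple_mul w i
    rw [hπ] at h1
    simp only [List.length_cons]
    omega
  have hπc : π (i :: ω) = σ i * w := by rw [cs.wordProd_cons, hπ]
  constructor
  · exact ⟨i :: ω, ω', hred', hπc, hsub.cons i, hπ'⟩
  · exact ⟨i :: ω, i :: ω', hred', hπc, hsub.cons₂ i, by rw [cs.wordProd_cons, hπ']⟩

/-- A simple descent: if `σ i * v < v` then `σ i * v ≤ v`. -/
lemma simple_mul_bruhatLE_self {v : W} {i : B} (hd : ℓ (σ i * v) < ℓ v) :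
    cs.bruhatLE (σ i * v) v := by
  obtain ⟨ψ, hred, hπ⟩ := cs.exists_reduced_word' (σ i * v)
  have hred' : cs.IsReduced (i :: ψ) := by
    show ℓ (π (i :: ψ)) = (i :: ψ).length
    rw [cs.wordProd_cons, ← hπ, cs.simple_mul_simple_cancel_left]
    have h1 : ℓ (π ψ) = ψ.length := hred
    have h2 := cs.length_simple_mul v i
    rw [← hπ] at h1
    simp only [List.length_cons]
    omega
  refine ⟨i :: ψ, ψ, hred', ?_, List.sublist_cons_self i ψ, hπ.symm⟩
  rw [cs.wordProd_cons, ← hπ, cs.simple_mul_simple_cancel_left]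

/-! ### The chain ("reflection") order and the lifting property -/

/-- One step `x → t x` going up in length, `t` a reflection. -/
def BStep (x y : W) : Prop := ∃ t, cs.IsReflection t ∧ y = t * x ∧ ℓ x < ℓ y

/-- The chain order: reflexive-transitive closure of `BStep`. -/
def CLE (x y : W) : Prop := Relation.ReflTransGen (BStep cs) x y

lemma zd1 {t b c : W} (ht : cs.IsReflection t) (hc : c = t * b) (hbc : ℓ b < ℓ c)
    {i : B} (hdesc : ℓ (σ i * c) < ℓ c) (hbasc : ℓ b < ℓ (σ i * b)) :
    cs.bruhatLE b (σ i * c) := by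
  obtain ⟨ψ, hredψ, hπψ⟩ := cs.exists_reduced_word' (σ i * c)
  have hπc : π (i :: ψ) = c := by rw [cs.wordProd_cons, ← hπψ, cs.simple_mul_simple_cancel_left]
  have hredc : cs.IsReduced (i :: ψ) := by
    show ℓ (π (i :: ψ)) = (i :: ψ).length
    rw [hπc]
    have h1 : ℓ (π ψ) = ψ.length := hredψ
    rw [← hπψ] at h1
    have hdich := cs.length_simple_mul c i
    simp only [List.length_cons]
    have hdich2 := cs.length_simple_mul_ne c i
    rcases hdich with h | h <;> omega
  have htc : t * π (i :: ψ) = b := by rw [hπc, hc, ← mul_assoc, ht.mul_self, one_mul]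
  have hlt : ℓ (t * π (i :: ψ)) < ℓ (π (i :: ψ)) := by rw [htc, hπc]; exact hbc
  obtain ⟨ω', hsub, hlen', hπ'⟩ := strong_exchange_left cs ht (i :: ψ) hlt
  rw [htc] at hπ'
  rcases List.sublist_cons_iff.mp hsub with h1 | ⟨ψ', rfl, h2⟩
  · have hlψ : ω'.length = ψ.length := by simp only [List.length_cons] at hlen'; omega
    have hb : b = σ i * c := by rw [← hπ', h1.eq_of_length hlψ, ← hπψ]
    rw [hb]
    exact bruhatLE_refl cs _
  · have hπψ' : π ψ' = σ i * b := by
      rw [cs.wordProd_cons] at hπ'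
      rw [← hπ', cs.simple_mul_simple_cancel_left]
    have hle : cs.bruhatLE (σ i * b) (σ i * c) := ⟨ψ, ψ', hredψ, hπψ.symm, h2, hπψ'⟩
    have hd : ℓ (σ i * (σ i * b)) < ℓ (σ i * b) := by
      rw [cs.simple_mul_simple_cancel_left]
      exact hbasc
    have := simple_mul_bruhatLE cs hle hd
    rwa [cs.simple_mul_simple_cancel_left] at this

lemma master : ∀ n : ℕ,
    (∀ y : W, ℓ y ≤ n → ∀ x : W, ∀ i : B, CLE cs x y →
      (ℓ y < ℓ (σ i * y) → CLE cs (σ i * x) (σ i * y)) ∧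
      (ℓ (σ i * y) < ℓ y → ℓ x < ℓ (σ i * x) → CLE cs x (σ i * y))) ∧
    (∀ ω : List B, cs.IsReduced ω → ω.length ≤ n → ∀ l : List B, l <+ ω →
      CLE cs (π l) (π ω)) := by
  intro n
  induction n using Nat.strong_induction_on with
  | _ n IH =>
  constructor
  · intro y hy x i hxy
    revert hy
    induction hxy with
    | refl =>
      intro _
      constructor
      · intro _
        exact Relation.ReflTransGen.refl
      · intro h1 h2
        omega
    | tail hxb hstep ihb =>
      rename_i b c
      intro hcn
      obtain ⟨t, ht, rfl, hlen⟩ := hstep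
      have hbn : ℓ b ≤ n := by omega
      have ihb' := ihb hbn
      constructor
      · -- the "going up" clause ZA
        intro hasc
        rcases lt_or_gt_of_ne (cs.length_simple_mul_ne b i) with hdesc_b | hasc_b
        · by_cases hx : ℓ x < ℓ (σ i * x)
          · have h2 : CLE cs x (σ i * b) := ihb'.2 hdesc_b hx
            have hm : ℓ (σ i * b) < n := by omega
            have h3 := ((IH (ℓ (σ i * b)) hm).1 (σ i * b) le_rfl x i h2).1
            rw [cs.simple_mul_simple_cancel_left] at h3
            have h5 : CLE cs (σ i * x) b := h3 hdesc_b
            exact (h5.tail ⟨t, ht, rfl, hlen⟩).tail ⟨σ i, cs.isReflection_simple i, rfl, hasc⟩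
          · have hxd : ℓ (σ i * x) < ℓ x := by
              rcases lt_or_gt_of_ne (cs.length_simple_mul_ne x i) with h | h
              · exact h
              · omega
            have step1 : BStep cs (σ i * x) x :=
              ⟨σ i, cs.isReflection_simple i, (cs.simple_mul_simple_cancel_left i).symm, hxd⟩
            exact ((Relation.ReflTransGen.head step1 hxb).tail
              ⟨t, ht, rfl, hlen⟩).tail ⟨σ i, cs.isReflection_simple i, rfl, hasc⟩
        · have h1 : CLE cs (σ i * x) (σ i * b) := ihb'.1 hasc_b
          refine h1.tail ⟨σ i * t * σ i, ?_, ?_, ?_⟩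
          · have := ht.conj (σ i)
            rwa [cs.inv_simple] at this
          · simp [mul_assoc, cs.simple_mul_simple_cancel_left]
          · have d1 := cs.length_simple_mul b i
            have d2 := cs.length_simple_mul (t * b) i
            omega
      · -- the "going down" clause ZD
        intro hdesc hx
        rcases lt_or_gt_of_ne (cs.length_simple_mul_ne b i) with hdesc_b | hasc_b
        · have h2 : CLE cs x (σ i * b) := ihb'.2 hdesc_b hx
          refine h2.tail ⟨σ i * t * σ i, ?_, ?_, ?_⟩
          · have := ht.conj (σ i)
            rwa [cs.inv_simple] at this
          · simp [mul_assoc, cs.simple_mul_simple_cancel_left]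
          · have d1 := cs.length_simple_mul b i
            have d2 := cs.length_simple_mul (t * b) i
            omega
        · have hb_le : cs.bruhatLE b (σ i * (t * b)) := zd1 cs ht rfl hlen hdesc hasc_b
          obtain ⟨ω, l, hred, hπ, hsub, hπ'⟩ := hb_le
          have hm : ℓ (σ i * (t * b)) < n := by omega
          have hωlen : ω.length ≤ ℓ (σ i * (t * b)) := by
            have h1 : ℓ (π ω) = ω.length := hred
            rw [hπ] at h1
            omega
          have h3 := (IH _ hm).2 ω hred hωlen l hsub
          rw [hπ, hπ'] at h3
          exact hxb.trans h3
  · intro ω hred hn l hsub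
    cases ω with
    | nil =>
      rw [List.sublist_nil.mp hsub]
      exact Relation.ReflTransGen.refl
    | cons k ρ =>
      have hρ : cs.IsReduced ρ := by
        have := hred.drop 1
        simpa using this
      have hlρ : ℓ (π ρ) = ρ.length := hρ
      have hasc : ℓ (π ρ) < ℓ (σ k * π ρ) := by
        have h1 : ℓ (π (k :: ρ)) = (k :: ρ).length := hred
        rw [cs.wordProd_cons] at h1
        simp only [List.length_cons] at h1
        omega
      have hρn : ρ.length < n := by
        simp only [List.length_cons] at hn
        omega
      rcases List.sublist_cons_iff.mp hsub with h1 | ⟨l', rfl, h2⟩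
      · have hc := (IH ρ.length hρn).2 ρ hρ le_rfl l h1
        rw [cs.wordProd_cons]
        exact hc.tail ⟨σ k, cs.isReflection_simple k, rfl, hasc⟩
      · have hc := (IH ρ.length hρn).2 ρ hρ le_rfl l' h2
        have hza := ((IH ρ.length hρn).1 (π ρ) (le_of_eq hlρ) (π l') k hc).1 hasc
        rw [cs.wordProd_cons, cs.wordProd_cons]
        exact hza

lemma cle_of_bruhatLE {u v : W} (h : cs.bruhatLE u v) : CLE cs u v := by
  obtain ⟨ω, l, hred, hπ, hsub, hπ'⟩ := h
  have := (master cs ω.length).2 ω hred le_rfl l hsub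
  rwa [hπ, hπ'] at this

lemma exists_subword_of_cle {x y : W} (h : CLE cs x y) :
    ∀ χ : List B, cs.IsReduced χ → π χ = y →
      ∃ τ, τ <+ χ ∧ cs.IsReduced τ ∧ π τ = x := by
  induction h with
  | refl =>
    intro χ hχ hπ
    exact ⟨χ, List.Sublist.refl χ, hχ, hπ⟩
  | tail hxb hstep ih =>
    rename_i b c
    intro χ hχ hπ
    obtain ⟨t, ht, rfl, hlen⟩ := hstep
    have hb : t * π χ = b := by rw [hπ, ← mul_assoc, ht.mul_self, one_mul]
    have hlt : ℓ (t * π χ) < ℓ (π χ) := by rw [hb, hπ]; exact hlen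
    obtain ⟨ω', hsub, _, hπ'⟩ := strong_exchange_left cs ht χ hlt
    rw [hb] at hπ'
    obtain ⟨τ', hsub', hred', hπ''⟩ := deletion cs ω'
    obtain ⟨τ, hτ, hτred, hτπ⟩ := ih τ' hred' (by rw [hπ'', hπ'])
    exact ⟨τ, (hτ.trans hsub').trans hsub, hτred, hτπ⟩

lemma bruhatLE_of_cle {x y : W} (h : CLE cs x y) : cs.bruhatLE x y := by
  obtain ⟨χ, hred, hπ⟩ := cs.exists_reduced_word' y
  obtain ⟨τ, hsub, hτred, hτπ⟩ := exists_subword_of_cle cs h χ hred hπ.symm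
  exact ⟨χ, τ, hred, hπ.symm, hsub, hτπ⟩

/-- The lifting property of the Bruhat order. -/
lemma lifting {u w : W} {i : B} (ha : ℓ w < ℓ (σ i * w)) (hu : cs.bruhatLE u (σ i * w)) :
    cs.bruhatLE u w ∨ cs.bruhatLE (σ i * u) w := by
  have hc : CLE cs u (σ i * w) := cle_of_bruhatLE cs hu
  have hZD := (master cs (ℓ (σ i * w))).1 (σ i * w) le_rfl
  rcases lt_or_gt_of_ne (cs.length_simple_mul_ne u i) with hd | hasc
  · right
    have step : BStep cs (σ i * u) u :=
      ⟨σ i, cs.isReflection_simple i, (cs.simple_mul_simple_cancel_left i).symm, hd⟩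
    have hc2 : CLE cs (σ i * u) (σ i * w) := Relation.ReflTransGen.head step hc
    have h3 := (hZD (σ i * u) i hc2).2
    rw [cs.simple_mul_simple_cancel_left, cs.simple_mul_simple_cancel_left] at h3
    exact bruhatLE_of_cle cs (h3 ha hd)
  · left
    have h3 := (hZD u i hc).2
    rw [cs.simple_mul_simple_cancel_left] at h3
    exact bruhatLE_of_cle cs (h3 ha hasc)

/-! ### The operation `tri` -/

section Tri

variable (tri : W → W → W)
variable (htri : ∀ x y : W, cs.IsUniqueBruhatMin (cs.triSet x y) (tri x y))

include htri

lemma tri_one (y : W) : tri 1 y = y := by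
  obtain ⟨u, hu, heq⟩ := (htri 1 y).1.1
  rw [heq, eq_one_of_bruhatLE_one cs hu, one_mul]

lemma tri_simple_asc {i : B} {m : W} (h : ℓ m < ℓ (σ i * m)) : tri (σ i) m = m := by
  have hmem : m ∈ cs.triSet (σ i) m := ⟨1, one_bruhatLE cs _, (one_mul m).symm⟩
  have hmin : ∀ z' ∈ cs.triSet (σ i) m, cs.bruhatLE z' m → z' = m := by
    rintro z' ⟨u, hu, rfl⟩ hle
    rcases bruhatLE_simple cs hu with rfl | rfl
    · rw [one_mul]
    · exfalso
      have h2 := length_le_of_bruhatLE cs hle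
      omega
  exact ((htri (σ i) m).2 m hmem hmin).symm

lemma tri_simple_desc {i : B} {m : W} (h : ℓ (σ i * m) < ℓ m) : tri (σ i) m = σ i * m := by
  have hmem : σ i * m ∈ cs.triSet (σ i) m := ⟨σ i, bruhatLE_refl cs _, rfl⟩
  have hmin : ∀ z' ∈ cs.triSet (σ i) m, cs.bruhatLE z' (σ i * m) → z' = σ i * m := by
    rintro z' ⟨u, hu, rfl⟩ hle
    rcases bruhatLE_simple cs hu with rfl | rfl
    · exfalso
      rw [one_mul] at hle
      have h2 := length_le_of_bruhatLE cs hle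
      omega
    · rfl
  exact ((htri (σ i) m).2 _ hmem hmin).symm

lemma key {i : B} {w : W} (ha : ℓ w < ℓ (σ i * w))
    (HW : ∀ z v, v ∈ cs.triSet w z → cs.bruhatLE (tri w z) v) (z : W) :
    tri (σ i * w) z = tri (σ i) (tri w z) ∧
      ∀ v ∈ cs.triSet (σ i * w) z, cs.bruhatLE (tri (σ i * w) z) v := by
  obtain ⟨u₀, hu₀, hm⟩ := (htri w z).1.1
  set m := tri w z with hmdef
  have hTmem : tri (σ i) m ∈ cs.triSet (σ i * w) z := by
    rcases lt_or_gt_of_ne (cs.length_simple_mul_ne m i) with hdm | ham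
    · rw [tri_simple_desc cs tri htri hdm]
      exact ⟨σ i * u₀, (bruhatLE_simple_mul_of_asc cs ha hu₀).2, by rw [hm, mul_assoc]⟩
    · rw [tri_simple_asc cs tri htri ham]
      exact ⟨u₀, (bruhatLE_simple_mul_of_asc cs ha hu₀).1, hm⟩
  have hT_of_m : ∀ v' : W, cs.bruhatLE m v' → cs.bruhatLE (tri (σ i) m) v' := by
    intro v' hmv
    rcases lt_or_gt_of_ne (cs.length_simple_mul_ne m i) with hdm | ham
    · rw [tri_simple_desc cs tri htri hdm]
      exact simple_mul_bruhatLE cs hmv hdm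
    · rw [tri_simple_asc cs tri htri ham]
      exact hmv
  have hTmin : ∀ v ∈ cs.triSet (σ i * w) z, cs.bruhatLE (tri (σ i) m) v := by
    rintro v ⟨u, hu, rfl⟩
    rcases lifting cs ha hu with huw | hsuw
    · exact hT_of_m _ (HW z (u * z) ⟨u, huw, rfl⟩)
    · have hmv : cs.bruhatLE m (σ i * (u * z)) := by
        have := HW z ((σ i * u) * z) ⟨σ i * u, hsuw, rfl⟩
        rwa [mul_assoc] at this
      rcases lt_or_gt_of_ne (cs.length_simple_mul_ne (u * z) i) with hdv | hav
      · have hasc' : ℓ (σ i * (u * z)) < ℓ (σ i * (σ i * (u * z))) := by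
          rw [cs.simple_mul_simple_cancel_left]
          exact hdv
        have h2 := (bruhatLE_simple_mul_of_asc cs hasc' hmv).1
        rw [cs.simple_mul_simple_cancel_left] at h2
        exact hT_of_m _ h2
      · rcases lifting cs hav hmv with h2 | h2
        · exact hT_of_m _ h2
        · rcases lt_or_gt_of_ne (cs.length_simple_mul_ne m i) with hdm | ham
          · rw [tri_simple_desc cs tri htri hdm]
            exact h2
          · rw [tri_simple_asc cs tri htri ham]
            have hd : ℓ (σ i * (σ i * m)) < ℓ (σ i * m) := by
              rw [cs.simple_mul_simple_cancel_left]
              exact ham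
            have h3 := simple_mul_bruhatLE cs h2 hd
            rwa [cs.simple_mul_simple_cancel_left] at h3
  have heq : tri (σ i * w) z = tri (σ i) m := by
    refine ((htri (σ i * w) z).2 _ hTmem ?_).symm
    intro z' hz' hle
    exact eq_of_bruhatLE_of_length_le cs hle (length_le_of_bruhatLE cs (hTmin z' hz'))
  refine ⟨heq, ?_⟩
  intro v hv
  rw [heq]
  exact hTmin v hv

lemma tri_min : ∀ n : ℕ, ∀ x : W, ℓ x ≤ n → ∀ z : W, ∀ v ∈ cs.triSet x z,
    cs.bruhatLE (tri x z) v := by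
  intro n
  induction n with
  | zero =>
    intro x hx z v hv
    have hx1 : x = 1 := by
      rw [← cs.length_eq_zero_iff]
      omega
    subst hx1
    obtain ⟨u, hu, rfl⟩ := hv
    rw [eq_one_of_bruhatLE_one cs hu, one_mul, tri_one cs tri htri z]
    exact bruhatLE_refl cs z
  | succ n IHn =>
    intro x hx z v hv
    by_cases hx1 : x = 1
    · subst hx1
      obtain ⟨u, hu, rfl⟩ := hv
      rw [eq_one_of_bruhatLE_one cs hu, one_mul, tri_one cs tri htri z]
      exact bruhatLE_refl cs z
    · obtain ⟨ω, hred, hπ⟩ := cs.exists_reduced_word' x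
      cases ω with
      | nil => exact absurd (by rw [hπ, cs.wordProd_nil]) hx1
      | cons i ρ =>
        have hρred : cs.IsReduced ρ := by
          have := hred.drop 1
          simpa using this
        have hw : x = σ i * π ρ := by rw [hπ, cs.wordProd_cons]
        have h2 : ℓ (π ρ) = ρ.length := hρred
        have h1 : ℓ (π (i :: ρ)) = (i :: ρ).length := hred
        rw [cs.wordProd_cons] at h1
        simp only [List.length_cons] at h1
        have ha : ℓ (π ρ) < ℓ (σ i * π ρ) := by omega
        have hwn : ℓ (π ρ) ≤ n := by
          have hx' : ℓ x = ρ.length + 1 := by rw [hw]; omega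
          omega
        have hk := (key cs tri htri ha (fun z' v' hv' => IHn (π ρ) hwn z' v' hv') z).2
        rw [← hw] at hk
        exact hk v hv

lemma tri_rec {i : B} {w : W} (ha : ℓ w < ℓ (σ i * w)) (z : W) :
    tri (σ i * w) z = tri (σ i) (tri w z) :=
  (key cs tri htri ha (fun z' v' hv' => tri_min cs tri htri (ℓ w) w le_rfl z' v' hv') z).1

lemma tri_simple_absorb {i : B} {v : W} (hd : ℓ (σ i * v) < ℓ v) (z : W) :
    tri (σ i) (tri v z) = tri v z := by
  obtain ⟨u₀, hu₀, hm⟩ := (htri v z).1.1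
  set m := tri v z with hmdef
  rcases lt_or_gt_of_ne (cs.length_simple_mul_ne m i) with hdm | ham
  · exfalso
    have hv' : ℓ (σ i * v) < ℓ (σ i * (σ i * v)) := by
      rw [cs.simple_mul_simple_cancel_left]
      exact hd
    have hu₀' : cs.bruhatLE u₀ (σ i * (σ i * v)) := by
      rw [cs.simple_mul_simple_cancel_left]
      exact hu₀
    have hsu : cs.bruhatLE (σ i * u₀) v := by
      rcases lifting cs hv' hu₀' with h | h
      · have := (bruhatLE_simple_mul_of_asc cs hv' h).2
        rwa [cs.simple_mul_simple_cancel_left] at this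
      · have := (bruhatLE_simple_mul_of_asc cs hv' h).1
        rwa [cs.simple_mul_simple_cancel_left] at this
    have hmem : σ i * m ∈ cs.triSet v z := ⟨σ i * u₀, hsu, by rw [hm, mul_assoc]⟩
    have hmin := tri_min cs tri htri (ℓ v) v le_rfl z (σ i * m) hmem
    have hll := length_le_of_bruhatLE cs hmin
    rw [← hmdef] at hll
    omega
  · exact tri_simple_asc cs tri htri ham

end Tri

end DemazureAux

/-- `(x, y) ↦ x ▷ y` is a left monoid action of the Demazure monoid `(W, ∗)` on `W`:
`1 ▷ y = y` and `(x ∗ y) ▷ z = x ▷ (y ▷ z)`. -/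
theorem tri_is_monoid_action {B W : Type*} [Group W] {M : CoxeterMatrix B} (cs : CoxeterSystem M W)
    (star : W → W → W)
    (hstar_one : ∀ w : W, star 1 w = w)
    (hstar_simple : ∀ (i : B) (w : W), star (cs.simple i) w =
      if cs.length w < cs.length (cs.simple i * w) then cs.simple i * w else w)
    (hstar_assoc : ∀ a b c : W, star (star a b) c = star a (star b c))
    (tri : W → W → W)
    (htri : ∀ x y : W, cs.IsUniqueBruhatMin (cs.triSet x y) (tri x y))
 :
    (∀ y : W, tri 1 y = y) ∧
    (∀ x y z : W, tri (star x y) z = tri x (tri y z)) := by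
  constructor
  · exact fun y => DemazureAux.tri_one cs tri htri y
  · have main : ∀ n : ℕ, ∀ x : W, cs.length x ≤ n → ∀ y z : W,
        tri (star x y) z = tri x (tri y z) := by
      intro n
      induction n with
      | zero =>
        intro x hx y z
        have hx1 : x = 1 := by
          rw [← cs.length_eq_zero_iff]
          omega
        subst hx1
        rw [hstar_one, DemazureAux.tri_one cs tri htri]
      | succ n IHn =>
        intro x hx y z
        by_cases h1 : x = 1
        · subst h1
          rw [hstar_one, DemazureAux.tri_one cs tri htri]
        · obtain ⟨ω, hred, hπ⟩ := cs.exists_reduced_word' x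
          cases ω with
          | nil => exact absurd (by rw [hπ, cs.wordProd_nil]) h1
          | cons i ρ =>
            have hρred : cs.IsReduced ρ := by
              have := hred.drop 1
              simpa using this
            have hw : x = cs.simple i * cs.wordProd ρ := by rw [hπ, cs.wordProd_cons]
            have h2 : cs.length (cs.wordProd ρ) = ρ.length := hρred
            have h1' : cs.length (cs.wordProd (i :: ρ)) = (i :: ρ).length := hred
            rw [cs.wordProd_cons] at h1'
            simp only [List.length_cons] at h1'
            have ha : cs.length (cs.wordProd ρ) < cs.length (cs.simple i * cs.wordProd ρ) := by
              omega
            have hwn : cs.length (cs.wordProd ρ) ≤ n := by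
              have hx' : cs.length x = ρ.length + 1 := by rw [hw]; omega
              omega
            have hsx : star (cs.simple i) (cs.wordProd ρ) = x := by
              rw [hstar_simple, if_pos ha]
              exact hw.symm
            have hassoc : star x y = star (cs.simple i) (star (cs.wordProd ρ) y) := by
              rw [← hsx, hstar_assoc]
            have hssl : ∀ v : W, tri (star (cs.simple i) v) z = tri (cs.simple i) (tri v z) := by
              intro v
              rw [hstar_simple]
              split_ifs with hcase
              · exact DemazureAux.tri_rec cs tri htri hcase z
              · have hd : cs.length (cs.simple i * v) < cs.length v := by
                  rcases lt_or_gt_of_ne (cs.length_simple_mul_ne v i) with h | h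
                  · exact h
                  · omega
                exact (DemazureAux.tri_simple_absorb cs tri htri hd z).symm
            rw [hassoc, hssl, IHn (cs.wordProd ρ) hwn y z,
              ← DemazureAux.tri_rec cs tri htri ha (tri y z), ← hw]
    exact fun x y z => main (cs.length x) x le_rfl y z
end

section
/- Let W be a finite Coxeter group with longest element w₀. Then for all x, y ∈ W, (x ▷ y)·w₀ = x ∗ (y·w₀). -/
noncomputable section
open List

namespace CoxAux

/-- Auxiliary group: pairs (f, g) with twisted multiplication, used to track
parity of reflection occurrences in inversion sequences. -/
@[ext]
structure EtaG (W : Type*) where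
  f : W → ZMod 2
  g : W

namespace EtaG

variable {W : Type*} [Group W]

instance : One (EtaG W) := ⟨⟨0, 1⟩⟩
instance : Mul (EtaG W) := ⟨fun a b => ⟨a.f + fun t => b.f (a.g⁻¹ * t * a.g), a.g * b.g⟩⟩
instance : Inv (EtaG W) := ⟨fun a => ⟨fun t => a.f (a.g * t * a.g⁻¹), a.g⁻¹⟩⟩

@[simp] lemma mul_f (a b : EtaG W) (t : W) :
    (a * b).f t = a.f t + b.f (a.g⁻¹ * t * a.g) := rfl
@[simp] lemma mul_g (a b : EtaG W) : (a * b).g = a.g * b.g := rfl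
@[simp] lemma one_f (t : W) : (1 : EtaG W).f t = 0 := rfl
@[simp] lemma one_g : (1 : EtaG W).g = 1 := rfl

instance : Group (EtaG W) :=
  Group.ofLeftAxioms
    (fun a b c => by
      ext t
      · simp [mul_assoc, add_assoc]
      · simp [mul_assoc])
    (fun a => by
      ext t
      · simp
      · simp)
    (fun a => by
      ext t
      · show a.f (a.g * t * a.g⁻¹) + a.f (a.g⁻¹⁻¹ * t * a.g⁻¹) = 0
        rw [inv_inv]
        exact CharTwo.add_self_eq_zero _
      · exact inv_mul_cancel a.g)

end EtaG

end CoxAux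
namespace CoxAux

open CoxeterSystem

variable {B : Type*} {W : Type*} [Group W] {M : CoxeterMatrix B} (cs : CoxeterSystem M W)

local prefix:100 "s" => cs.simple
local prefix:100 "π" => cs.wordProd
local prefix:100 "ℓ" => cs.length

open scoped Classical

lemma conj_arg_eq_iff (u t x : W) : u⁻¹ * t * u = x ↔ t = u * x * u⁻¹ := by
  constructor
  · intro h; rw [← h]; group
  · intro h; rw [h]; group

/-- The indicator generator. -/
def chi (w : W) : EtaG W := ⟨fun t => if t = w then 1 else 0, w⟩

section invol

variable {a b : W} (ha : a * a = 1) (hb : b * b = 1)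

include ha hb in
lemma invol_conj_pow (k : ℕ) : a * (a * b) ^ k * a⁻¹ = ((a * b) ^ k)⁻¹ := by
  have ha' : a⁻¹ = a := inv_eq_of_mul_eq_one_right ha
  have hb' : b⁻¹ = b := inv_eq_of_mul_eq_one_right hb
  have h1 : a * (a * b) * a⁻¹ = (a * b)⁻¹ := by
    rw [mul_inv_rev, ha', hb', ← mul_assoc, ha, one_mul]
  rw [← conj_pow, h1, inv_pow]

include ha hb in
lemma invol_conj_pow2 (k : ℕ) :
    (a * b) ^ k * a * ((a * b) ^ k)⁻¹ = (a * b) ^ (2 * k) * a := by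
  have ha' : a⁻¹ = a := inv_eq_of_mul_eq_one_right ha
  have h4 : ((a * b) ^ k)⁻¹ = a * (a * b) ^ k * a := by
    rw [← invol_conj_pow ha hb k, ha']
  rw [h4]
  have : (a*b) ^ k * a * (a * (a*b) ^ k * a) = (a*b) ^ k * (a * a) * (a*b) ^ k * a := by group
  rw [this, ha, mul_one, two_mul, pow_add]

include ha hb in
lemma invol_conj_pow3 (k : ℕ) :
    (a * b) ^ k * (a * b * a⁻¹) * ((a * b) ^ k)⁻¹ = (a * b) ^ (2 * k + 1) * a := by
  have ha' : a⁻¹ = a := inv_eq_of_mul_eq_one_right ha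
  have hcomm : (a * b) ^ k * (a * b * a⁻¹) = (a * b) * ((a * b) ^ k * a) := by
    rw [ha']
    have : (a*b) ^ k * (a * b * a) = ((a*b) ^ k * (a * b)) * a := by group
    rw [this, ← pow_succ, pow_succ', mul_assoc]
  rw [hcomm, mul_assoc, invol_conj_pow2 ha hb k, ← mul_assoc, ← pow_succ']

end invol

lemma chi_mul_pow {a b : W} (ha : a * a = 1) (hb : b * b = 1) (k : ℕ) :
    (chi a * chi b) ^ k =
      ⟨fun t => ∑ p ∈ Finset.range (2 * k), if t = (a * b) ^ p * a then 1 else 0,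
        (a * b) ^ k⟩ := by
  have ha' : a⁻¹ = a := inv_eq_of_mul_eq_one_right ha
  induction k with
  | zero =>
    rw [pow_zero]
    ext t
    · show (0 : ZMod 2) = ∑ p ∈ Finset.range 0, ((fun t => if t = (a * b) ^ p * a then (1:ZMod 2) else 0) t)
      simp
    · show (1 : W) = (a*b) ^ 0
      simp
  | succ k ih =>
    rw [pow_succ, ih]
    ext t
    · rw [EtaG.mul_f]
      show (∑ p ∈ Finset.range (2 * k), if t = (a * b) ^ p * a then (1:ZMod 2) else 0) +
          (chi a * chi b).f (((a * b) ^ k)⁻¹ * t * (a * b) ^ k) = _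
      have hchi : ∀ y : W, (chi a * chi b).f y
          = (if y = a then (1 : ZMod 2) else 0) + (if y = a * b * a⁻¹ then 1 else 0) := by
        intro y
        rw [EtaG.mul_f]
        show (if y = a then (1:ZMod 2) else 0) + (if a⁻¹ * y * a = b then 1 else 0) = _
        congr 1
        simp only [conj_arg_eq_iff]
      rw [hchi]
      simp only [conj_arg_eq_iff]
      rw [invol_conj_pow2 ha hb k, invol_conj_pow3 ha hb k]
      show _ = ∑ p ∈ Finset.range (2 * (k+1)), if t = (a * b) ^ p * a then (1:ZMod 2) else 0
      have h2k : 2 * (k + 1) = (2 * k) + 1 + 1 := by ring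
      rw [h2k, Finset.sum_range_succ, Finset.sum_range_succ, add_assoc]
    · show (a * b) ^ k * (chi a * chi b).g = (a * b) ^ (k + 1)
      show (a * b) ^ k * (a * b) = (a * b) ^ (k + 1)
      rw [pow_succ]

lemma chi_liftable : M.IsLiftable (fun i => (chi (s i) : EtaG W)) := by
  intro i j
  have ha := cs.simple_mul_simple_self i
  have hb := cs.simple_mul_simple_self j
  show (chi (s i) * chi (s j)) ^ M.M i j = 1
  rw [chi_mul_pow ha hb]
  have hm : ((s i) * (s j)) ^ M.M i j = 1 := cs.simple_mul_simple_pow i j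
  ext t
  · show (∑ p ∈ Finset.range (2 * M.M i j),
        if t = ((s i) * (s j)) ^ p * (s i) then (1 : ZMod 2) else 0) = 0
    rw [two_mul, Finset.sum_range_add]
    have hper : ∀ p : ℕ, (if t = ((s i) * (s j)) ^ (M.M i j + p) * (s i) then (1 : ZMod 2) else 0)
        = if t = ((s i) * (s j)) ^ p * (s i) then (1 : ZMod 2) else (0 : ZMod 2) := by
      intro p
      congr 1
      rw [pow_add, hm, one_mul]
    simp only [hper]
    exact CharTwo.add_self_eq_zero _
  · exact hm

/-- The parity homomorphism. -/
def etaHom : W →* EtaG W :=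
  cs.lift ⟨fun i => chi (s i), chi_liftable cs⟩

/-- `eta cs w t` is the parity of the number of occurrences of `t` in the left inversion
sequence of any word for `w`. -/
def eta (w t : W) : ZMod 2 := (etaHom cs w).f t

def projG : EtaG W →* W where
  toFun := EtaG.g
  map_one' := rfl
  map_mul' := fun _ _ => rfl

lemma etaHom_g (w : W) : (etaHom cs w).g = w := by
  have : ((projG.comp (etaHom cs)) : W →* W) = MonoidHom.id W := by
    apply cs.ext_simple
    intro i
    show (etaHom cs (s i)).g = s i
    rw [etaHom, cs.lift_apply_simple]
    rfl
  exact DFunLike.congr_fun this w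

lemma eta_mul (w₁ w₂ t : W) : eta cs (w₁ * w₂) t = eta cs w₁ t + eta cs w₂ (w₁⁻¹ * t * w₁) := by
  show (etaHom cs (w₁ * w₂)).f t = _
  rw [map_mul, EtaG.mul_f, etaHom_g]
  rfl

lemma eta_one (t : W) : eta cs 1 t = 0 := by
  show (etaHom cs 1).f t = 0
  rw [map_one]
  rfl

lemma eta_simple (i : B) (t : W) : eta cs (s i) t = if t = s i then 1 else 0 := by
  show (etaHom cs (s i)).f t = _
  rw [etaHom, cs.lift_apply_simple]
  rfl

end CoxAux
namespace CoxAux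

open CoxeterSystem List

variable {B : Type*} {W : Type*} [Group W] {M : CoxeterMatrix B} (cs : CoxeterSystem M W)

local prefix:100 "s" => cs.simple
local prefix:100 "π" => cs.wordProd
local prefix:100 "ℓ" => cs.length

open scoped Classical

lemma leftInvSeq_cons' (i : B) (ω : List B) :
    cs.leftInvSeq (i :: ω) = s i :: List.map (MulAut.conj (s i)) (cs.leftInvSeq ω) := rfl

lemma eta_wordProd (σ : List B) (t : W) :
    eta cs (π σ) t = ((cs.leftInvSeq σ).count t : ZMod 2) := by
  induction σ generalizing t with
  | nil => simp [eta_one, cs.wordProd_nil]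
  | cons i ρ ih =>
    rw [cs.wordProd_cons, eta_mul, eta_simple, leftInvSeq_cons', List.count_cons]
    have harg : (s i)⁻¹ * t * (s i) = s i * t * s i := by rw [cs.inv_simple]
    rw [harg, ih]
    have hmapcount : List.count t (List.map (⇑(MulAut.conj (s i))) (cs.leftInvSeq ρ))
        = List.count (s i * t * s i) (cs.leftInvSeq ρ) := by
      have ht : t = (MulAut.conj (s i)) (s i * t * s i) := by
        rw [MulAut.conj_apply, cs.inv_simple, ← mul_assoc, ← mul_assoc, cs.simple_mul_simple_self,
          one_mul, mul_assoc, cs.simple_mul_simple_self, mul_one]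
      nth_rw 1 [ht]
      exact List.count_map_of_injective _ _ (MulAut.conj (s i)).injective _
    rw [hmapcount]
    push_cast
    rw [add_comm]
    congr 1
    by_cases h : t = s i
    · simp [h]
    · simp [h, Ne.symm h]

lemma eta_mul' (w₁ w₂ t t' : W) (h : w₁⁻¹ * t * w₁ = t') :
    eta cs (w₁ * w₂) t = eta cs w₁ t + eta cs w₂ t' := by
  rw [eta_mul, h]

lemma eta_refl_self {t : W} (ht : cs.IsReflection t) : eta cs t t = 1 := by
  obtain ⟨w, i, rfl⟩ := ht
  have e1 : eta cs (w * s i * w⁻¹) (w * s i * w⁻¹)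
      = eta cs w (w * s i * w⁻¹) + eta cs (s i * w⁻¹) (s i) := by
    have h := eta_mul' cs w (s i * w⁻¹) (w * s i * w⁻¹) (s i) (by group)
    rw [← mul_assoc] at h
    exact h
  have e2 : eta cs (s i * w⁻¹) (s i) = 1 + eta cs w⁻¹ (s i) := by
    rw [eta_mul' cs (s i) w⁻¹ (s i) (s i)
      (by rw [inv_mul_cancel, one_mul]), eta_simple, if_pos rfl]
  have e3 : eta cs w (w * s i * w⁻¹) + eta cs w⁻¹ (s i) = 0 := by
    have h0 := eta_mul' cs w w⁻¹ (w * s i * w⁻¹) (s i) (by group)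
    rw [mul_inv_cancel, eta_one] at h0
    exact h0.symm
  rw [e1, e2]
  calc eta cs w (w * s i * w⁻¹) + (1 + eta cs w⁻¹ (s i))
      = (eta cs w (w * s i * w⁻¹) + eta cs w⁻¹ (s i)) + 1 := by ring
    _ = 1 := by rw [e3, zero_add]

lemma isLeftInversion_of_eta_eq_one {w t : W} (h : eta cs w t = 1) : ℓ (t * w) < ℓ w := by
  obtain ⟨σ, hred, rfl⟩ := cs.exists_reduced_word' w
  rw [eta_wordProd] at h
  have hne : (cs.leftInvSeq σ).count t ≠ 0 := by
    intro h0
    rw [h0] at h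
    simp at h
  have hmem : t ∈ cs.leftInvSeq σ := by
    by_contra hc
    exact hne (List.count_eq_zero.mpr hc)
  exact (cs.isLeftInversion_of_mem_leftInvSeq hred hmem).2

lemma eta_eq_one_iff {w t : W} (ht : cs.IsReflection t) :
    eta cs w t = 1 ↔ ℓ (t * w) < ℓ w := by
  constructor
  · exact isLeftInversion_of_eta_eq_one cs
  · intro h
    by_contra h'
    have hx : ∀ x : ZMod 2, x = 0 ∨ x = 1 := by decide
    have h0 : eta cs w t = 0 := (hx _).resolve_right h'
    have h1 : eta cs (t * w) t = 1 := by
      rw [eta_mul, eta_refl_self cs ht, ht.inv]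
      have harg : t * t * t = t := by rw [ht.mul_self, one_mul]
      rw [harg, h0, add_zero]
    have h2 := isLeftInversion_of_eta_eq_one cs h1
    rw [← mul_assoc, ht.mul_self, one_mul] at h2
    omega

/-- Strong exchange property (left version, arbitrary word). -/
theorem exists_eraseIdx_of_lt {w t : W} (ht : cs.IsReflection t) (hlt : ℓ (t * w) < ℓ w)
    (σ : List B) (hσ : π σ = w) : ∃ j < σ.length, π (σ.eraseIdx j) = t * w := by
  have h1 : eta cs w t = 1 := (eta_eq_one_iff cs ht).mpr hlt
  rw [← hσ, eta_wordProd] at h1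
  have hne : (cs.leftInvSeq σ).count t ≠ 0 := by
    intro h0
    rw [h0] at h1
    simp at h1
  have hmem : t ∈ cs.leftInvSeq σ := by
    by_contra hc
    exact hne (List.count_eq_zero.mpr hc)
  obtain ⟨j, hj, hget⟩ := List.getElem_of_mem hmem
  have hlen : (cs.leftInvSeq σ).length = σ.length := cs.length_leftInvSeq σ
  refine ⟨j, by omega, ?_⟩
  have hgetD : (cs.leftInvSeq σ).getD j 1 = t := by
    rw [List.getD_eq_getElem _ _ hj]
    exact hget
  rw [← cs.getD_leftInvSeq_mul_wordProd σ j, hgetD, hσ]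

end CoxAux
namespace CoxAux

open CoxeterSystem List

variable {B : Type*} {W : Type*} [Group W] {M : CoxeterMatrix B} (cs : CoxeterSystem M W)

local prefix:100 "s" => cs.simple
local prefix:100 "π" => cs.wordProd
local prefix:100 "ℓ" => cs.length

open scoped Classical

/-- One step of the Bruhat chain order. -/
def brel (a b : W) : Prop := ∃ t, cs.IsReflection t ∧ a = t * b ∧ ℓ a < ℓ b

/-- The Bruhat order, as a chain order. -/
def cle : W → W → Prop := Relation.ReflTransGen (brel cs)

lemma cle_refl (a : W) : cle cs a a := Relation.ReflTransGen.refl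

lemma cle_trans {a b c : W} (h1 : cle cs a b) (h2 : cle cs b c) : cle cs a c :=
  Relation.ReflTransGen.trans h1 h2

lemma cle_single {a b : W} (h : brel cs a b) : cle cs a b := Relation.ReflTransGen.single h

lemma length_le_of_cle {a b : W} (h : cle cs a b) : ℓ a ≤ ℓ b := by
  induction h using Relation.ReflTransGen.head_induction_on with
  | refl => exact le_refl _
  | head hrel _ ih =>
    obtain ⟨t, _, _, hlt⟩ := hrel
    omega

lemma eq_of_cle_of_length_ge {a b : W} (h : cle cs a b) (hlen : ℓ b ≤ ℓ a) : a = b := by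
  induction h using Relation.ReflTransGen.head_induction_on with
  | refl => rfl
  | head hrel hcb ih =>
    obtain ⟨t, _, _, hlt⟩ := hrel
    have := length_le_of_cle cs hcb
    omega

lemma cle_mul_simple_left {i : B} {b : W} (h : ℓ b < ℓ (s i * b)) : cle cs b (s i * b) := by
  apply cle_single
  exact ⟨s i, cs.isReflection_simple i, by rw [cs.simple_mul_simple_cancel_left], h⟩

lemma cle_simple_mul_self {i : B} {b : W} (h : ℓ (s i * b) < ℓ b) : cle cs (s i * b) b :=
  cle_single cs ⟨s i, cs.isReflection_simple i, rfl, h⟩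

lemma length_simple_mul_lt_or_gt (i : B) (w : W) :
    ℓ (s i * w) = ℓ w + 1 ∨ ℓ (s i * w) + 1 = ℓ w := cs.length_simple_mul w i

/-- Deletion: any word has a reduced sublist with the same product. -/
lemma exists_reduced_sublist (σ : List B) :
    ∃ σ', σ' <+ σ ∧ cs.IsReduced σ' ∧ π σ' = π σ := by
  induction σ with
  | nil =>
    refine ⟨[], Sublist.refl _, ?_, rfl⟩
    show ℓ (π []) = ([] : List B).length
    simp
  | cons i ρ ih =>
    obtain ⟨ρ', hsub, hred, hprod⟩ := ih
    rcases length_simple_mul_lt_or_gt cs i (π ρ) with hasc | hdesc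
    · refine ⟨i :: ρ', hsub.cons₂ i, ?_, ?_⟩
      · show ℓ (π (i :: ρ')) = (i :: ρ').length
        rw [cs.wordProd_cons, hprod, hasc]
        have h1 : ℓ (π ρ) = ℓ (π ρ') := by rw [hprod]
        have h2 : ℓ (π ρ') = ρ'.length := hred
        simp
        omega
      · rw [cs.wordProd_cons, cs.wordProd_cons, hprod]
    · have hlt : ℓ (s i * π ρ') < ℓ (π ρ') := by rw [hprod]; omega
      obtain ⟨j, hj, hj2⟩ :=
        exists_eraseIdx_of_lt cs (cs.isReflection_simple i) hlt ρ' rfl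
      refine ⟨ρ'.eraseIdx j, ((ρ'.eraseIdx_sublist j).trans hsub).trans (List.sublist_cons_self i ρ), ?_, ?_⟩
      · show ℓ (π (ρ'.eraseIdx j)) = (ρ'.eraseIdx j).length
        rw [hj2, hprod, List.length_eraseIdx_of_lt hj]
        have h2 : ℓ (π ρ') = ρ'.length := hred
        rw [hprod] at h2
        omega
      · rw [hj2, hprod, cs.wordProd_cons]

/-- Simultaneous: monotonicity of left multiplication by a simple reflection (when it
increases the target), and the subword property direction "subword implies cle". -/
lemma cle_pack (n : ℕ) :
    (∀ (i : B) (a b : W), ℓ b ≤ n → cle cs a b → ℓ b < ℓ (s i * b) →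
      cle cs (s i * a) (s i * b)) ∧
    (∀ σ : List B, σ.length ≤ n → cs.IsReduced σ → ∀ σ', σ' <+ σ → cle cs (π σ') (π σ)) := by
  induction n using Nat.strong_induction_on with
  | _ n IH =>
  constructor
  · intro i a b hbn hab hdesc
    induction hab using Relation.ReflTransGen.head_induction_on with
    | refl => exact cle_refl cs _
    | @head a c hrel hcb ihc =>
      obtain ⟨t, ht, rfl, hlt⟩ := hrel
      by_cases hsa : ℓ (s i * (t * c)) < ℓ (t * c)
      · -- s·a < a : chain s·a → a → c →* b → s·b
        refine cle_trans cs (cle_simple_mul_self cs hsa) ?_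
        refine cle_trans cs (cle_single cs ⟨t, ht, rfl, hlt⟩) ?_
        exact cle_trans cs hcb (cle_mul_simple_left cs hdesc)
      · have hgt : ℓ (t * c) < ℓ (s i * (t * c)) := by
          have := cs.length_simple_mul_ne (t * c) i
          omega
        by_cases hsc : ℓ c < ℓ (s i * c)
        · -- easy step case
          refine cle_trans cs (cle_single cs ?_) ihc
          refine ⟨s i * t * (s i)⁻¹, ht.conj (s i), by group, ?_⟩
          have h1 : ℓ (s i * (t * c)) ≤ ℓ (t * c) + 1 := by
            have := length_simple_mul_lt_or_gt cs i (t * c)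
            omega
          omega
        · -- hard case
          have hsc' : ℓ (s i * c) < ℓ c := by
            have := cs.length_simple_mul_ne c i
            omega
          obtain ⟨σc, hσred, hσc⟩ := cs.exists_reduced_word' c
          obtain ⟨j, hj, hj2⟩ := exists_eraseIdx_of_lt cs (cs.isReflection_simple i) hsc' σc hσc.symm
          set ρ := σc.eraseIdx j with hρ
          have hρlen : ρ.length = σc.length - 1 := List.length_eraseIdx_of_lt hj
          have hσlen : σc.length = ℓ c := by
            rw [hσc]
            exact hσred.symm
          have hρred : cs.IsReduced ρ := by
            show ℓ (π ρ) = ρ.length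
            rw [hj2]
            have := length_simple_mul_lt_or_gt cs i c
            omega
          have hcword : π (i :: ρ) = c := by
            rw [cs.wordProd_cons, hj2, cs.simple_mul_simple_cancel_left]
          obtain ⟨p, hp, hp2⟩ := exists_eraseIdx_of_lt cs ht hlt (i :: ρ) hcword
          cases p with
          | zero =>
            have h0 : π ρ = t * c := by simpa using hp2
            have hsa_eq : s i * (t * c) = c := by
              rw [← h0, hj2, cs.simple_mul_simple_cancel_left]
            rw [hsa_eq]
            exact cle_trans cs hcb (cle_mul_simple_left cs hdesc)
          | succ q =>
            have h0 : π (i :: ρ.eraseIdx q) = t * c := by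
              simpa using hp2
            have h1 : π (ρ.eraseIdx q) = s i * (t * c) := by
              rw [← h0, cs.wordProd_cons, cs.simple_mul_simple_cancel_left]
            have hlc : 1 ≤ ℓ c := by omega
            have hcb_len : ℓ c ≤ ℓ b := length_le_of_cle cs hcb
            have hC2 := (IH (n-1) (by omega)).2 ρ (by omega) hρred (ρ.eraseIdx q)
              (ρ.eraseIdx_sublist q)
            rw [h1, hj2] at hC2
            exact cle_trans cs hC2 ihc
  · intro σ hlen hred σ' hsub
    match σ, hsub with
    | _, List.Sublist.slnil => exact cle_refl cs _
    | i :: ρ, hsub =>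
      have hn1 : 1 ≤ n := by
        have : 1 ≤ (i :: ρ).length := by simp
        omega
      have hρred : cs.IsReduced ρ := by
        have := hred.drop 1
        simpa using this
      have hρlen : ρ.length ≤ n - 1 := by
        have : (i :: ρ).length = ρ.length + 1 := rfl
        omega
      have hdesc : ℓ (π ρ) < ℓ (s i * π ρ) := by
        have h1 : ℓ (π (i :: ρ)) = ρ.length + 1 := by
          have := hred.eq
          simpa using this
        rw [cs.wordProd_cons] at h1
        rw [h1]
        have : ℓ (π ρ) ≤ ρ.length := cs.length_wordProd_le ρ
        omega
      rcases List.sublist_cons_iff.mp hsub with h | ⟨ρ'', rfl, hsub'⟩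
      · have h1 := (IH (n-1) (by omega)).2 ρ hρlen hρred σ' h
        refine cle_trans cs h1 ?_
        rw [cs.wordProd_cons]
        exact cle_mul_simple_left cs hdesc
      · have h1 := (IH (n-1) (by omega)).2 ρ hρlen hρred ρ'' hsub'
        have h2 := (IH (n-1) (by omega)).1 i (π ρ'') (π ρ) (by
          have : ℓ (π ρ) = ρ.length := hρred
          omega) h1 hdesc
        rw [cs.wordProd_cons, cs.wordProd_cons]
        exact h2

lemma cle_of_sublist {σ σ' : List B} (hred : cs.IsReduced σ) (hsub : σ' <+ σ) :
    cle cs (π σ') (π σ) :=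
  (cle_pack cs σ.length).2 σ le_rfl hred σ' hsub

lemma cle_simple_mul {i : B} {a b : W} (h : cle cs a b) (hdesc : ℓ b < ℓ (s i * b)) :
    cle cs (s i * a) (s i * b) :=
  (cle_pack cs (ℓ b)).1 i a b le_rfl h hdesc

/-- The subword property: if `a ≤ b` then `a` is a product of a reduced sublist of any
reduced word for `b`. -/
lemma subword_of_cle {a b : W} (h : cle cs a b) (σ : List B) (hred : cs.IsReduced σ)
    (hπ : π σ = b) : ∃ σ', σ' <+ σ ∧ cs.IsReduced σ' ∧ π σ' = a := by
  induction h using Relation.ReflTransGen.head_induction_on with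
  | refl => exact ⟨σ, Sublist.refl σ, hred, hπ⟩
  | @head a c hrel hcb ih =>
    obtain ⟨σc, hsubc, hredc, hπc⟩ := ih
    obtain ⟨t, ht, rfl, hlt⟩ := hrel
    obtain ⟨j, hj, hj2⟩ := exists_eraseIdx_of_lt cs ht hlt σc hπc
    obtain ⟨σ'', hsub2, hred2, hπ2⟩ := exists_reduced_sublist cs (σc.eraseIdx j)
    exact ⟨σ'', (hsub2.trans (σc.eraseIdx_sublist j)).trans hsubc, hred2, by rw [hπ2, hj2]⟩

end CoxAux
namespace CoxAux

open CoxeterSystem List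

variable {B : Type*} {W : Type*} [Group W] {M : CoxeterMatrix B} (cs : CoxeterSystem M W)

local prefix:100 "s" => cs.simple
local prefix:100 "π" => cs.wordProd
local prefix:100 "ℓ" => cs.length

open scoped Classical

/-- Lifting property. -/
lemma cle_lift {i : B} {x u : W} (hdesc : ℓ (s i * x) < ℓ x) (h : cle cs u x) :
    (ℓ (s i * u) < ℓ u → cle cs (s i * u) (s i * x)) ∧
    (ℓ u < ℓ (s i * u) → cle cs u (s i * x)) := by
  obtain ⟨σ, hred, hπ⟩ := cs.exists_reduced_word' (s i * x)
  have hxword : π (i :: σ) = x := by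
    rw [cs.wordProd_cons, ← hπ, cs.simple_mul_simple_cancel_left]
  have hxred : cs.IsReduced (i :: σ) := by
    show ℓ (π (i :: σ)) = (i :: σ).length
    rw [hxword]
    have h1 : ℓ (s i * x) = σ.length := by rw [hπ]; exact hred
    have h2 := length_simple_mul_lt_or_gt cs i x
    simp
    omega
  obtain ⟨σ', hsub, hred', hπ'⟩ := subword_of_cle cs h (i :: σ) hxred hxword
  rcases List.sublist_cons_iff.mp hsub with hcase | ⟨ρ'', rfl, hsub'⟩
  · -- u is a subword of σ : u ≤ s i * x
    have hu : cle cs u (s i * x) := by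
      rw [← hπ', hπ]
      exact cle_of_sublist cs hred hcase
    constructor
    · intro hlt
      exact cle_trans cs (cle_simple_mul_self cs hlt) hu
    · intro _
      exact hu
  · -- u = s i * (π ρ'')
    have hρcle : cle cs (π ρ'') (s i * x) := by
      rw [hπ]
      exact cle_of_sublist cs hred hsub'
    have hueq : u = s i * π ρ'' := by rw [← hπ', cs.wordProd_cons]
    have hsu : s i * u = π ρ'' := by rw [hueq, cs.simple_mul_simple_cancel_left]
    constructor
    · intro _
      rw [hsu]
      exact hρcle
    · intro hlt
      refine cle_trans cs (cle_single cs ⟨s i, cs.isReflection_simple i, hueq, ?_⟩) hρcle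
      rw [← hsu]
      exact hlt

section star

variable {star : W → W → W}

lemma star_decomp
    (hstar_simple : ∀ (i : B) (w : W), star (s i) w =
      if ℓ w < ℓ (s i * w) then s i * w else w)
    (hstar_assoc : ∀ a b c : W, star (star a b) c = star a (star b c)) {i : B} {x : W} (h : ℓ x < ℓ (s i * x)) (v : W) :
    star (s i * x) v = star (s i) (star x v) := by
  rw [← hstar_assoc]
  congr 1
  rw [hstar_simple, if_pos h]

lemma cle_star_simple
    (hstar_simple : ∀ (i : B) (w : W), star (s i) w =
      if ℓ w < ℓ (s i * w) then s i * w else w) {i : B} {b c : W} (h : cle cs c b) :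
    cle cs c (star (s i) b) ∧ cle cs (s i * c) (star (s i) b) := by
  rw [hstar_simple]
  by_cases hb : ℓ b < ℓ (s i * b)
  · rw [if_pos hb]
    exact ⟨cle_trans cs h (cle_mul_simple_left cs hb), cle_simple_mul cs h hb⟩
  · rw [if_neg hb]
    have hb' : ℓ (s i * b) < ℓ b := by
      have := cs.length_simple_mul_ne b i
      omega
    refine ⟨h, ?_⟩
    by_cases hc : ℓ (s i * c) < ℓ c
    · exact cle_trans cs (cle_simple_mul_self cs hc) h
    · have hc' : ℓ c < ℓ (s i * c) := by
        have := cs.length_simple_mul_ne c i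
        omega
      have h1 : cle cs c (s i * b) := (cle_lift cs hb' h).2 hc'
      have h2 : cle cs (s i * c) (s i * (s i * b)) := by
        apply cle_simple_mul cs h1
        rw [cs.simple_mul_simple_cancel_left]
        exact hb'
      rwa [cs.simple_mul_simple_cancel_left] at h2

/-- Key domination property of the Demazure product: if `u ≤ x` then `u * v ≤ x ∗ v`. -/
lemma cle_mul_star
    (hstar_one : ∀ w : W, star 1 w = w)
    (hstar_simple : ∀ (i : B) (w : W), star (s i) w =
      if ℓ w < ℓ (s i * w) then s i * w else w)
    (hstar_assoc : ∀ a b c : W, star (star a b) c = star a (star b c)) : ∀ (x u v : W), cle cs u x → cle cs (u * v) (star x v) := by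
  suffices H : ∀ (n : ℕ) (x u v : W), ℓ x = n → cle cs u x → cle cs (u * v) (star x v) by
    intro x u v h
    exact H (ℓ x) x u v rfl h
  intro n
  induction n using Nat.strong_induction_on with
  | _ n IH =>
  intro x u v hn h
  by_cases hx : x = 1
  · subst hx
    have hu : u = 1 := eq_of_cle_of_length_ge cs h (by simp)
    subst hu
    rw [one_mul, hstar_one]
    exact cle_refl cs _
  · obtain ⟨i, hi⟩ := cs.exists_leftDescent_of_ne_one hx
    have hdesc : ℓ (s i * x) < ℓ x := hi
    set x' := s i * x with hx'
    have hxx' : x = s i * x' := by rw [hx', cs.simple_mul_simple_cancel_left]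
    have hdesc' : ℓ x' < ℓ (s i * x') := by rw [← hxx']; exact hdesc
    have hsd : star x v = star (s i) (star x' v) := by
      rw [hxx']
      exact star_decomp cs hstar_simple hstar_assoc hdesc' v
    have hBL := cle_lift cs hdesc h
    by_cases hu : ℓ (s i * u) < ℓ u
    · have h1 : cle cs (s i * u) x' := hBL.1 hu
      have h2 : cle cs ((s i * u) * v) (star x' v) :=
        IH (ℓ x') (by omega) x' (s i * u) v rfl h1
      have h3 := (cle_star_simple cs hstar_simple (i := i) h2).2
      rw [mul_assoc, cs.simple_mul_simple_cancel_left] at h3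
      rw [hsd]
      exact h3
    · have hu' : ℓ u < ℓ (s i * u) := by
        have := cs.length_simple_mul_ne u i
        omega
      have h1 : cle cs u x' := hBL.2 hu'
      have h2 : cle cs (u * v) (star x' v) := IH (ℓ x') (by omega) x' u v rfl h1
      rw [hsd]
      exact (cle_star_simple cs hstar_simple (i := i) h2).1

/-- The Demazure product `x ∗ v` is of the form `u * v` with `u ≤ x`. -/
lemma star_mem
    (hstar_one : ∀ w : W, star 1 w = w)
    (hstar_simple : ∀ (i : B) (w : W), star (s i) w =
      if ℓ w < ℓ (s i * w) then s i * w else w)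
    (hstar_assoc : ∀ a b c : W, star (star a b) c = star a (star b c)) : ∀ (x v : W), ∃ u, cle cs u x ∧ star x v = u * v := by
  suffices H : ∀ (n : ℕ) (x v : W), ℓ x = n → ∃ u, cle cs u x ∧ star x v = u * v by
    intro x v
    exact H (ℓ x) x v rfl
  intro n
  induction n using Nat.strong_induction_on with
  | _ n IH =>
  intro x v hn
  by_cases hx : x = 1
  · subst hx
    exact ⟨1, cle_refl cs 1, by rw [hstar_one, one_mul]⟩
  · obtain ⟨i, hi⟩ := cs.exists_leftDescent_of_ne_one hx
    have hdesc : ℓ (s i * x) < ℓ x := hi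
    set x' := s i * x with hx'
    have hxx' : x = s i * x' := by rw [hx', cs.simple_mul_simple_cancel_left]
    have hdesc' : ℓ x' < ℓ (s i * x') := by rw [← hxx']; exact hdesc
    obtain ⟨u', hu', hstar'⟩ := IH (ℓ x') (by omega) x' v rfl
    have hsd : star x v = star (s i) (star x' v) := by
      rw [hxx']
      exact star_decomp cs hstar_simple hstar_assoc hdesc' v
    rw [hsd, hstar_simple]
    by_cases hc : ℓ (star x' v) < ℓ (s i * star x' v)
    · refine ⟨s i * u', ?_, ?_⟩
      · rw [hxx']
        exact cle_simple_mul cs hu' hdesc'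
      · rw [if_pos hc, hstar', mul_assoc]
    · refine ⟨u', ?_, ?_⟩
      · refine cle_trans cs hu' ?_
        rw [hxx']
        exact cle_mul_simple_left cs hdesc'
      · rw [if_neg hc, hstar']

end star

/-- The set of left inversions of `w`. -/
def inversionSet (w : W) : Set W := {t : W | cs.IsReflection t ∧ ℓ (t * w) < ℓ w}

lemma ncard_inversionSet (w : W) : (inversionSet cs w).ncard = ℓ w := by
  obtain ⟨σ, hred, rfl⟩ := cs.exists_reduced_word' w
  have hset : inversionSet cs (π σ) = {t : W | t ∈ cs.leftInvSeq σ} := by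
    ext t
    constructor
    · rintro ⟨ht, hlt⟩
      have h1 : eta cs (π σ) t = 1 := (eta_eq_one_iff cs ht).mpr hlt
      rw [eta_wordProd] at h1
      have : (cs.leftInvSeq σ).count t ≠ 0 := by
        intro h0
        rw [h0] at h1
        simp at h1
      by_contra hc
      exact this (List.count_eq_zero.mpr hc)
    · intro hmem
      exact cs.isLeftInversion_of_mem_leftInvSeq hred hmem
  rw [hset]
  have : {t : W | t ∈ cs.leftInvSeq σ} = ((cs.leftInvSeq σ).toFinset : Set W) := by
    ext t
    simp
  rw [this, Set.ncard_coe_finset, List.toFinset_card_of_nodup (hred.nodup_leftInvSeq),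
    cs.length_leftInvSeq]
  exact hred.symm

end CoxAux
namespace CoxAux

open CoxeterSystem List

variable {B : Type*} {W : Type*} [Group W] {M : CoxeterMatrix B} (cs : CoxeterSystem M W)

local prefix:100 "s" => cs.simple
local prefix:100 "π" => cs.wordProd
local prefix:100 "ℓ" => cs.length

open scoped Classical

lemma cle_of_bruhatLE {u w : W} (h : cs.bruhatLE u w) : cle cs u w := by
  obtain ⟨ω, ω', hred, rfl, hsub, rfl⟩ := h
  obtain ⟨ω'', hsub2, hred2, hπ2⟩ := exists_reduced_sublist cs ω'
  rw [← hπ2]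
  exact cle_of_sublist cs hred (hsub2.trans hsub)

lemma bruhatLE_of_cle {u w : W} (h : cle cs u w) : cs.bruhatLE u w := by
  obtain ⟨σ, hred, hπ⟩ := cs.exists_reduced_word' w
  obtain ⟨σ', hsub, hred', hπ'⟩ := subword_of_cle cs h σ hred hπ.symm
  exact ⟨σ, σ', hred, hπ.symm, hsub, hπ'⟩

section w0

variable [Finite W] {w0 : W} (hw0 : ∀ v : W, cs.bruhatLE v w0)

include hw0 in
lemma length_le_w0 (v : W) : ℓ v ≤ ℓ w0 :=
  length_le_of_cle cs (cle_of_bruhatLE cs (hw0 v))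

include hw0 in
lemma w0_inv : w0⁻¹ = w0 :=
  eq_of_cle_of_length_ge cs (cle_of_bruhatLE cs (hw0 w0⁻¹)) (by rw [cs.length_inv])

include hw0 in
lemma w0_sq : w0 * w0 = 1 := by
  nth_rewrite 1 [← w0_inv cs hw0]
  exact inv_mul_cancel w0

include hw0 in
lemma eta_w0 {t : W} (ht : cs.IsReflection t) : eta cs w0 t = 1 := by
  rw [eta_eq_one_iff cs ht]
  exact lt_of_le_of_ne (length_le_w0 cs hw0 (t * w0)) (ht.length_mul_right_ne w0)

include hw0 in
/-- The key length identity `ℓ(v) + ℓ(v w₀) = ℓ(w₀)`. -/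
lemma length_add_length_mul_w0 (v : W) : ℓ v + ℓ (v * w0) = ℓ w0 := by
  classical
  set T : Set W := {t : W | cs.IsReflection t} with hT
  have hTfin : T.Finite := Set.toFinite T
  have hzmod : ∀ x : ZMod 2, x = 0 ∨ x = 1 := by decide
  have hsq : w0 * w0 = 1 := w0_sq cs hw0
  have hinvw0 : inversionSet cs w0 = T := by
    ext t
    constructor
    · rintro ⟨ht, _⟩
      exact ht
    · intro ht
      exact ⟨ht, lt_of_le_of_ne (length_le_w0 cs hw0 (t * w0)) (ht.length_mul_right_ne w0)⟩
  have hlenw0 : ℓ w0 = T.ncard := by rw [← ncard_inversionSet cs w0, hinvw0]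
  have hconj_refl : ∀ t : W, cs.IsReflection t → cs.IsReflection (w0 * t * w0) := by
    intro t ht
    have := ht.conj w0
    rwa [w0_inv cs hw0] at this
  have hconj_inv : ∀ t : W, w0 * (w0 * t * w0) * w0 = t := by
    intro t
    have h1 : w0 * (w0 * t * w0) * w0 = (w0 * w0) * t * (w0 * w0) := by group
    rw [h1, hsq, one_mul, mul_one]
  -- the parity computation
  have heta : ∀ u t' : W, cs.IsReflection t' →
      (ℓ ((w0 * t' * w0) * (w0 * u)) < ℓ (w0 * u) ↔ ¬ (ℓ (t' * u) < ℓ u)) := by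
    intro u t' ht'
    have htrefl : cs.IsReflection (w0 * t' * w0) := hconj_refl t' ht'
    have h1 : eta cs (w0 * u) (w0 * t' * w0)
        = eta cs w0 (w0 * t' * w0) + eta cs u t' := by
      rw [eta_mul' cs w0 u (w0 * t' * w0) t' ?_]
      rw [w0_inv cs hw0]
      exact hconj_inv t'
    rw [eta_w0 cs hw0 htrefl] at h1
    rw [← eta_eq_one_iff cs htrefl, h1, ← eta_eq_one_iff cs ht']
    rcases hzmod (eta cs u t') with h | h <;> rw [h] <;> decide
  have hmain : inversionSet cs (w0 * v⁻¹)
      = (fun t => w0 * t * w0) '' (T \ inversionSet cs v⁻¹) := by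
    ext t
    constructor
    · rintro ⟨ht, hlt⟩
      have htrefl' : cs.IsReflection (w0 * t * w0) := hconj_refl t ht
      refine ⟨w0 * t * w0, ⟨htrefl', ?_⟩, hconj_inv t⟩
      rintro ⟨_, hlt2⟩
      have h1 : ℓ ((w0 * (w0 * t * w0) * w0) * (w0 * v⁻¹)) < ℓ (w0 * v⁻¹) := by
        rwa [hconj_inv t]
      exact ((heta v⁻¹ (w0 * t * w0) htrefl').mp h1) hlt2
    · rintro ⟨t', ⟨ht', hnot⟩, rfl⟩
      refine ⟨hconj_refl t' ht', ?_⟩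
      refine (heta v⁻¹ t' ht').mpr ?_
      intro hc
      exact hnot ⟨ht', hc⟩
  have hinj : Function.Injective (fun t : W => w0 * t * w0) := by
    intro t1 t2 h
    simpa using mul_left_cancel (mul_right_cancel h)
  have e1 : ℓ (v * w0) = (T \ inversionSet cs v⁻¹).ncard := by
    have h2 : ℓ (v * w0) = ℓ (w0 * v⁻¹) := by
      rw [← cs.length_inv (v * w0), mul_inv_rev, w0_inv cs hw0]
    rw [h2, ← ncard_inversionSet cs (w0 * v⁻¹), hmain,
      Set.ncard_image_of_injective _ hinj]
  have e2 : (T \ inversionSet cs v⁻¹).ncard + (inversionSet cs v⁻¹).ncard = T.ncard := by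
    apply Set.ncard_diff_add_ncard_of_subset
    · intro t ht
      exact ht.1
    · exact hTfin
  have e3 : (inversionSet cs v⁻¹).ncard = ℓ v := by
    rw [ncard_inversionSet cs v⁻¹, cs.length_inv]
  omega

end w0

end CoxAux
/-- In a finite Coxeter group with longest element `w₀`, `(x ▷ y) * w₀ = x ∗ (y * w₀)`. -/
theorem tri_mul_longest {B W : Type*} [Group W] {M : CoxeterMatrix B} (cs : CoxeterSystem M W) [Finite W]
    (star : W → W → W)
    (hstar_one : ∀ w : W, star 1 w = w)
    (hstar_simple : ∀ (i : B) (w : W), star (cs.simple i) w =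
      if cs.length w < cs.length (cs.simple i * w) then cs.simple i * w else w)
    (hstar_assoc : ∀ a b c : W, star (star a b) c = star a (star b c))
    (tri : W → W → W)
    (htri : ∀ x y : W, cs.IsUniqueBruhatMin (cs.triSet x y) (tri x y))
    (w0 : W) (hw0 : ∀ v : W, cs.bruhatLE v w0)
    (x y : W) :
    tri x y * w0 = star x (y * w0) := by
  classical
  have hsq : w0 * w0 = 1 := CoxAux.w0_sq cs hw0
  have hA1 : ∀ v : W, cs.length v + cs.length (v * w0) = cs.length w0 :=
    CoxAux.length_add_length_mul_w0 cs hw0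
  set v := y * w0 with hv
  obtain ⟨u₀, hu₀, hDeq⟩ := CoxAux.star_mem cs hstar_one hstar_simple hstar_assoc x v
  set m := star x v * w0 with hm
  have hmw0 : m * w0 = star x v := by
    rw [hm, mul_assoc, hsq, mul_one]
  have hmu₀ : m = u₀ * y := by
    rw [hm, hDeq, hv]
    calc u₀ * (y * w0) * w0 = u₀ * y * (w0 * w0) := by group
      _ = u₀ * y := by rw [hsq, mul_one]
  have hm_mem : m ∈ cs.triSet x y :=
    ⟨u₀, CoxAux.bruhatLE_of_cle cs hu₀, hmu₀⟩
  have hmin_len : ∀ z ∈ cs.triSet x y, cs.length m ≤ cs.length z := by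
    rintro z ⟨u, hu, rfl⟩
    have h1 : CoxAux.cle cs (u * v) (star x v) :=
      CoxAux.cle_mul_star cs hstar_one hstar_simple hstar_assoc x u v
        (CoxAux.cle_of_bruhatLE cs hu)
    have h2 : cs.length (u * v) ≤ cs.length (star x v) := CoxAux.length_le_of_cle cs h1
    have h3 : cs.length (u * y) + cs.length (u * v) = cs.length w0 := by
      rw [hv, ← mul_assoc]
      exact hA1 (u * y)
    have h4 : cs.length m + cs.length (star x v) = cs.length w0 := by
      have := hA1 m
      rwa [hmw0] at this
    omega
  have hmain : m = tri x y := by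
    refine (htri x y).2 m hm_mem ?_
    intro z' hz' hle
    have h1 : cs.length z' ≤ cs.length m :=
      CoxAux.length_le_of_cle cs (CoxAux.cle_of_bruhatLE cs hle)
    exact CoxAux.eq_of_cle_of_length_ge cs (CoxAux.cle_of_bruhatLE cs hle)
      (hmin_len z' hz')
  rw [← hmain, hmw0]
end
end

section
/- Let W be a finite Coxeter group with set of simple reflections indexed by I, and for J ⊆ I let w₀^J denote the longest element of the standard parabolic subgroup W_J. If (w₀^{J₁} w₀^I) ∗ (w₀^{J₂} w₀^I) = w₀^{J₃} w₀^I for some J₃ ⊆ I, then also (w₀^{J₂} w₀^I) ∗ (w₀^{J₁} w₀^I) = w₀^{J₃} w₀^I. -/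
namespace DemComm

open CoxeterSystem List
open scoped Classical

noncomputable section

variable {B W : Type*} [Group W] {M : CoxeterMatrix B} (cs : CoxeterSystem M W)

local prefix:100 "ss" => cs.simple
local prefix:100 "π" => cs.wordProd
local prefix:100 "ℓ" => cs.length

/-- The underlying function of the parity representation. -/
def muFun (i : B) : W × ZMod 2 → W × ZMod 2 :=
  fun p => (ss i * p.1 * ss i, p.2 + if p.1 = ss i then 1 else 0)

lemma muFun_involutive (i : B) : Function.Involutive (muFun cs i) := by
  intro p
  unfold muFun
  have h1 : (ss i * p.1 * ss i = ss i) ↔ (p.1 = ss i) := by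
    constructor
    · intro h
      have := congrArg (fun x => ss i * x * ss i) h
      simpa [mul_assoc, cs.simple_mul_simple_cancel_left, cs.simple_mul_simple_cancel_right]
        using this
    · intro h; rw [h, cs.simple_mul_simple_self, one_mul]
  simp only [h1]
  ext
  · simp [mul_assoc, cs.simple_mul_simple_cancel_left, cs.simple_mul_simple_cancel_right,
      cs.simple_mul_simple_self]
  · simp only
    have h2 : (1 + 1 : ZMod 2) = 0 := by decide
    by_cases h : p.1 = ss i <;> simp [h, add_assoc, h2]

/-- The parity permutation. -/
def mu (i : B) : Equiv.Perm (W × ZMod 2) := (muFun_involutive cs i).toPerm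

lemma mu_apply (i : B) (t : W) (ε : ZMod 2) :
    mu cs i (t, ε) = (ss i * t * ss i, ε + if t = ss i then 1 else 0) := rfl


lemma semiconj_pow (i j : B) (k : ℕ) :
    ss j * (ss i * ss j) ^ k = (ss j * ss i) ^ k * ss j := by
  have h : SemiconjBy (ss j) (ss i * ss j) (ss j * ss i) := by
    unfold SemiconjBy; group
  exact (h.pow_right k)

lemma inv_pow_simple (i j : B) (k : ℕ) : ((ss i * ss j) ^ k)⁻¹ = (ss j * ss i) ^ k := by
  rw [← inv_pow, mul_inv_rev, cs.inv_simple, cs.inv_simple]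

private lemma conj_eq_iff {X Y b t : W} : X * t * Y = b ↔ t = X⁻¹ * b * Y⁻¹ := by
  constructor
  · intro h; rw [← h]; group
  · intro h; rw [h]; group

lemma pow_mu_apply (i j : B) (k : ℕ) (t : W) (ε : ZMod 2) :
    ((mu cs i * mu cs j) ^ k) (t, ε) =
      ((ss i * ss j) ^ k * t * (ss j * ss i) ^ k,
        ε + ∑ n ∈ Finset.range (2 * k),
          (if t = (ss j * ss i) ^ n * ss j then (1 : ZMod 2) else 0)) := by
  induction k with
  | zero => simp
  | succ k ih =>
    rw [pow_succ', Equiv.Perm.mul_apply, ih, Equiv.Perm.mul_apply, mu_apply, mu_apply]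
    have e1 : ((ss i * ss j) ^ k * t * (ss j * ss i) ^ k = ss j) ↔
        (t = (ss j * ss i) ^ (2 * k) * ss j) := by
      rw [conj_eq_iff, inv_pow_simple cs, inv_pow_simple cs, two_mul, pow_add]
      rw [mul_assoc, semiconj_pow cs, ← mul_assoc]
    have e2 : (ss j * ((ss i * ss j) ^ k * t * (ss j * ss i) ^ k) * ss j = ss i) ↔
        (t = (ss j * ss i) ^ (2 * k + 1) * ss j) := by
      rw [show ss j * ((ss i * ss j) ^ k * t * (ss j * ss i) ^ k) * ss j
            = (ss j * (ss i * ss j) ^ k) * t * ((ss j * ss i) ^ k * ss j) by group,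
          conj_eq_iff]
      suffices hc : (ss j * (ss i * ss j) ^ k)⁻¹ * ss i * ((ss j * ss i) ^ k * ss j)⁻¹
          = (ss j * ss i) ^ (2 * k + 1) * ss j by rw [hc]
      rw [mul_inv_rev, mul_inv_rev, cs.inv_simple, inv_pow_simple cs i j,
        inv_pow_simple cs j i]
      calc (ss j * ss i) ^ k * ss j * ss i * (ss j * (ss i * ss j) ^ k)
          = (ss j * ss i) ^ k * (ss j * ss i) * (ss j * (ss i * ss j) ^ k) := by
            rw [mul_assoc ((ss j * ss i) ^ k)]
        _ = (ss j * ss i) ^ (k + 1) * (ss j * (ss i * ss j) ^ k) := by rw [← pow_succ]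
        _ = (ss j * ss i) ^ (k + 1) * ((ss j * ss i) ^ k * ss j) := by rw [← semiconj_pow]
        _ = (ss j * ss i) ^ (k + 1 + k) * ss j := by rw [← mul_assoc, ← pow_add]
        _ = (ss j * ss i) ^ (2 * k + 1) * ss j := by rw [show k + 1 + k = 2 * k + 1 by ring]
    simp only [Prod.mk.injEq]
    refine ⟨?_, ?_⟩
    · rw [pow_succ' (ss i * ss j), pow_succ (ss j * ss i)]
      simp only [mul_assoc]
    · rw [show 2 * (k + 1) = (2 * k) + 1 + 1 by ring, Finset.sum_range_succ,
        Finset.sum_range_succ]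
      simp only [e1, e2]
      ring

lemma mu_liftable : M.IsLiftable (mu cs) := by
  intro i j
  apply Equiv.ext
  rintro ⟨t, ε⟩
  rw [pow_mu_apply, cs.simple_mul_simple_pow i j, cs.simple_mul_simple_pow' i j]
  have hsum : ∑ n ∈ Finset.range (2 * M i j),
      (if t = (ss j * ss i) ^ n * ss j then (1 : ZMod 2) else 0) = 0 := by
    rw [two_mul, Finset.sum_range_add]
    have : ∀ n, (if t = (ss j * ss i) ^ (M i j + n) * ss j then (1 : ZMod 2) else 0)
        = (if t = (ss j * ss i) ^ n * ss j then (1 : ZMod 2) else 0) := by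
      intro n
      rw [pow_add, cs.simple_mul_simple_pow' i j, one_mul]
    simp only [this]
    exact CharTwo.add_self_eq_zero _
  rw [hsum]
  simp


/-- The parity representation as a homomorphism. -/
def theta : W →* Equiv.Perm (W × ZMod 2) := cs.lift ⟨mu cs, mu_liftable cs⟩

lemma theta_simple (i : B) : theta cs (ss i) = mu cs i := cs.lift_apply_simple (mu_liftable cs) i

lemma rightInvSeq_cons (i : B) (ω : List B) :
    cs.rightInvSeq (i :: ω) = ((π ω)⁻¹ * ss i * π ω) :: cs.rightInvSeq ω := rfl

lemma theta_word (ω : List B) (t : W) (ε : ZMod 2) :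
    theta cs (π ω) (t, ε) =
      (π ω * t * (π ω)⁻¹,
        ε + (((cs.rightInvSeq ω).countP (fun u => u = t) : ℕ) : ZMod 2)) := by
  induction ω with
  | nil => simp [theta]
  | cons i ω ih =>
    rw [cs.wordProd_cons, map_mul, Equiv.Perm.mul_apply, ih, theta_simple, mu_apply,
      rightInvSeq_cons]
    have e1 : (π ω * t * (π ω)⁻¹ = ss i) ↔ ((π ω)⁻¹ * ss i * π ω = t) := by
      rw [conj_eq_iff]
      constructor
      · intro h; rw [h]; group
      · intro h; rw [← h]; group
    simp only [Prod.mk.injEq]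
    constructor
    · rw [mul_inv_rev, cs.inv_simple]
      simp only [mul_assoc]
    · rw [List.countP_cons]
      have e2 : (decide ((π ω)⁻¹ * ss i * π ω = t) = true) ↔ (π ω * t * (π ω)⁻¹ = ss i) := by
        rw [decide_eq_true_eq, e1]
      by_cases h : π ω * t * (π ω)⁻¹ = ss i
      · rw [if_pos h, if_pos (e2.mpr h)]
        push_cast
        ring
      · rw [if_neg h, if_neg (fun hc => h (e2.mp hc))]
        push_cast
        ring

/-- The parity cocycle. -/
def nu (w t : W) : ZMod 2 := (theta cs w (t, 0)).2

lemma theta_apply (w t : W) (ε : ZMod 2) :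
    theta cs w (t, ε) = (w * t * w⁻¹, ε + nu cs w t) := by
  obtain ⟨ω, rfl⟩ := cs.wordProd_surjective w
  rw [theta_word]
  unfold nu
  rw [theta_word, zero_add]

lemma nu_word (ω : List B) (t : W) :
    nu cs (π ω) t = (((cs.rightInvSeq ω).countP (fun u => u = t) : ℕ) : ZMod 2) := by
  unfold nu
  rw [theta_word, zero_add]

lemma nu_cocycle (x y t : W) : nu cs (x * y) t = nu cs y t + nu cs x (y * t * y⁻¹) := by
  have h1 := theta_apply cs (x * y) t 0
  rw [map_mul, Equiv.Perm.mul_apply, theta_apply, theta_apply] at h1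
  have h2 := congrArg Prod.snd h1
  simp only [zero_add] at h2
  rw [← h2]


private lemma eq_simple_iff_conj {c : B} {t' : W} (hrefl : cs.IsReflection t')
    (h : t'⁻¹ * ss c * t' = t') : t' = ss c := by
  rw [mul_assoc, inv_mul_eq_iff_eq_mul, hrefl.mul_self, mul_eq_one_iff_eq_inv, hrefl.inv] at h
  exact h.symm

lemma countP_palindrome (ω : List B) (i : B) :
    Odd ((cs.rightInvSeq (ω ++ i :: reverse ω)).countP
      (fun u => u = π ω * ss i * (π ω)⁻¹)) := by
  induction ω with
  | nil => simp
  | cons c ω ih =>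
    have hrw : (c :: ω) ++ i :: reverse (c :: ω)
        = c :: ((ω ++ i :: reverse ω) ++ [c]) := by
      simp
    rw [hrw, rightInvSeq_cons, ← List.concat_eq_append, cs.rightInvSeq_concat,
      List.concat_eq_append]
    set t' : W := π ω * ss i * (π ω)⁻¹ with ht'
    have hrefl : cs.IsReflection t' := ⟨π ω, i, rfl⟩
    have hπ : π (ω ++ i :: reverse ω) = t' := by
      rw [cs.wordProd_append, cs.wordProd_cons, cs.wordProd_reverse, ht', mul_assoc]
    set t : W := π (c :: ω) * ss i * (π (c :: ω))⁻¹ with ht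
    have htt : t = ss c * t' * ss c := by
      rw [ht, ht', cs.wordProd_cons, mul_inv_rev, cs.inv_simple]
      simp only [mul_assoc]
    have hX : π ((ω ++ i :: reverse ω) ++ [c]) = t' * ss c := by
      rw [cs.wordProd_append, hπ, cs.wordProd_singleton]
    -- head bracket
    have hhead : ((π ((ω ++ i :: reverse ω) ++ [c]))⁻¹ * ss c * π ((ω ++ i :: reverse ω) ++ [c]) = t)
        ↔ (t' = ss c) := by
      rw [hX, htt]
      have hre : (t' * ss c)⁻¹ * ss c * (t' * ss c) = ss c * (t'⁻¹ * ss c * t') * ss c := by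
        rw [mul_inv_rev, cs.inv_simple]
        simp only [mul_assoc]
      rw [hre]
      constructor
      · intro h
        exact eq_simple_iff_conj cs hrefl (mul_left_cancel (mul_right_cancel h))
      · intro h
        rw [h]
        simp [cs.inv_simple, mul_assoc, cs.simple_mul_simple_cancel_left,
          cs.simple_mul_simple_self]
    -- tail bracket
    have htail : (ss c = t) ↔ (t' = ss c) := by
      rw [htt]
      constructor
      · intro h
        have h2 : (1 : W) * ss c = ss c * t' * ss c := by rw [one_mul]; exact h
        have h3 := (mul_right_cancel h2).symm
        rw [mul_eq_one_iff_eq_inv, hrefl.inv] at h3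
        exact h3.symm
      · intro h
        rw [h, cs.simple_mul_simple_self, one_mul]
    have hmid : List.countP ((fun u => decide (u = t)) ∘ ⇑(MulAut.conj (ss c)))
          (cs.rightInvSeq (ω ++ i :: reverse ω))
        = List.countP (fun u => decide (u = t')) (cs.rightInvSeq (ω ++ i :: reverse ω)) := by
      apply List.countP_congr
      intro u _
      simp only [Function.comp_apply, MulAut.conj_apply, cs.inv_simple, decide_eq_true_eq]
      rw [htt]
      constructor
      · intro h
        exact mul_left_cancel (mul_right_cancel h)
      · intro h
        rw [h]
    rw [List.countP_cons, List.concat_eq_append, List.countP_append, List.countP_map, hmid]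
    have hsing : List.countP (fun u => decide (u = t)) [ss c]
        = if t' = ss c then 1 else 0 := by
      simp only [List.countP_cons, List.countP_nil, decide_eq_true_eq, zero_add]
      by_cases hc : t' = ss c
      · rw [if_pos (htail.mpr hc), if_pos hc]
      · rw [if_neg (fun h => hc (htail.mp h)), if_neg hc]
    rw [hsing]
    obtain ⟨k, hk⟩ := ih
    by_cases hc : t' = ss c
    · rw [if_pos hc, if_pos (by rw [decide_eq_true_eq]; exact hhead.mpr hc)]
      exact ⟨k + 1, by omega⟩
    · rw [if_neg hc, if_neg (by rw [decide_eq_true_eq]; exact fun h => hc (hhead.mp h))]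
      exact ⟨k, by omega⟩


lemma odd_cast_eq_one {n : ℕ} (hn : Odd n) : ((n : ℕ) : ZMod 2) = 1 := by
  obtain ⟨k, hk⟩ := hn
  subst hk
  calc ((2 * k + 1 : ℕ) : ZMod 2) = (((2 * k + 1) % 2 : ℕ) : ZMod 2) :=
        (ZMod.natCast_mod _ 2).symm
    _ = ((1 : ℕ) : ZMod 2) := by congr 1; omega
    _ = 1 := Nat.cast_one

lemma nu_refl_self {t : W} (ht : cs.IsReflection t) : nu cs t t = 1 := by
  obtain ⟨w, i, rfl⟩ := ht
  obtain ⟨ω, rfl⟩ := cs.wordProd_surjective w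
  have hπ : π (ω ++ i :: reverse ω) = π ω * ss i * (π ω)⁻¹ := by
    rw [cs.wordProd_append, cs.wordProd_cons, cs.wordProd_reverse, mul_assoc]
  rw [← hπ, nu_word, hπ]
  exact odd_cast_eq_one (countP_palindrome cs ω i)

lemma inversion_of_nu_eq_one {w t : W} (hn : nu cs w t = 1) (ht : cs.IsReflection t) :
    cs.IsRightInversion w t := by
  obtain ⟨ω, hred, rfl⟩ := cs.exists_reduced_word' w
  rw [nu_word] at hn
  have hne : (cs.rightInvSeq ω).countP (fun u => u = t) ≠ 0 := by
    intro h
    rw [h] at hn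
    simp at hn
  have hmem : t ∈ cs.rightInvSeq ω := by
    by_contra hmem
    exact hne (List.countP_eq_zero.mpr (fun u hu hut => by
      rw [decide_eq_true_eq] at hut
      exact hmem (hut ▸ hu)))
  exact cs.isRightInversion_of_mem_rightInvSeq hred hmem

lemma nu_eq_one_of_inversion {w t : W} (h : cs.IsRightInversion w t) : nu cs w t = 1 := by
  rcases (by decide : ∀ x : ZMod 2, x = 0 ∨ x = 1) (nu cs w t) with h0 | h1
  · exfalso
    have ht := h.1
    have hco := nu_cocycle cs w t t
    have htt : t * t * t⁻¹ = t := by rw [ht.mul_self, one_mul, ht.inv]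
    rw [htt, h0, add_zero, nu_refl_self cs ht] at hco
    have hinv2 := inversion_of_nu_eq_one cs hco ht
    have : w * t * t = w := by rw [mul_assoc, ht.mul_self, mul_one]
    rw [IsRightInversion, this] at hinv2
    exact Nat.lt_asymm h.2 hinv2.2
  · exact h1

lemma mem_ris_of_inversion {ω : List B} {t : W} (h : cs.IsRightInversion (π ω) t) :
    t ∈ cs.rightInvSeq ω := by
  have := nu_eq_one_of_inversion cs h
  rw [nu_word] at this
  have hne : (cs.rightInvSeq ω).countP (fun u => u = t) ≠ 0 := by
    intro h0
    rw [h0] at this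
    simp at this
  by_contra hmem
  exact hne (List.countP_eq_zero.mpr (fun u hu hut => by
    rw [decide_eq_true_eq] at hut
    exact hmem (hut ▸ hu)))

/-- The right exchange property. -/
lemma right_exchange {ω : List B} {t : W} (h : cs.IsRightInversion (π ω) t) :
    ∃ j < ω.length, π ω * t = π (ω.eraseIdx j) := by
  have hmem := mem_ris_of_inversion cs h
  obtain ⟨j, hj, hget⟩ := List.getElem_of_mem hmem
  rw [cs.length_rightInvSeq] at hj
  refine ⟨j, hj, ?_⟩
  have := cs.wordProd_mul_getD_rightInvSeq ω j
  rwa [List.getD_eq_getElem _ _ (by rw [cs.length_rightInvSeq]; exact hj), hget] at this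

/-- Deodhar's lemma Z. -/
lemma lemZ (i j : B) (z : W) (h1 : ℓ (ss i * z) = ℓ z + 1) (h2 : ℓ (z * ss j) = ℓ z + 1)
    (h3 : ℓ (ss i * (z * ss j)) < ℓ (z * ss j)) : ss i * z = z * ss j := by
  obtain ⟨ω, hlen, hz⟩ := cs.exists_reduced_word z⁻¹
  have hπ : π (j :: ω) = ss j * z⁻¹ := by rw [cs.wordProd_cons, ← hz]
  have hinv : cs.IsRightInversion (π (j :: ω)) (ss i) := by
    constructor
    · exact cs.isReflection_simple i
    · rw [hπ]
      have e1 : ℓ (ss j * z⁻¹ * ss i) = ℓ (ss i * (z * ss j)) := by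
        rw [← cs.length_inv (ss j * z⁻¹ * ss i)]
        congr 1
        rw [mul_inv_rev, mul_inv_rev, cs.inv_simple, cs.inv_simple, inv_inv]
      have e2 : ℓ (ss j * z⁻¹) = ℓ (z * ss j) := by
        rw [← cs.length_inv (ss j * z⁻¹), mul_inv_rev, cs.inv_simple, inv_inv]
      rw [e1, e2]
      exact h3
  obtain ⟨k, hk, hex⟩ := right_exchange cs hinv
  match k with
  | 0 =>
    rw [hπ, List.eraseIdx_cons_zero, ← hz] at hex
    have h4 := congrArg (fun x : W => x⁻¹) hex
    simp only [mul_inv_rev, cs.inv_simple, inv_inv] at h4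
    have h5 := congrArg (fun x : W => x * ss j) h4
    have h6 : ss i * (z * ss j) * ss j = ss i * z := by
      rw [mul_assoc (ss i), cs.simple_mul_simple_cancel_right]
    rw [← h6, h5]
  | (k' + 1) =>
    exfalso
    rw [hπ, List.eraseIdx_cons_succ, cs.wordProd_cons, mul_assoc] at hex
    have hcancel : z⁻¹ * ss i = π (ω.eraseIdx k') := mul_left_cancel hex
    have hle : ℓ (z⁻¹ * ss i) ≤ (ω.eraseIdx k').length := hcancel ▸ cs.length_wordProd_le _
    have hk2 : k' < ω.length := by
      have := hk
      simp only [List.length_cons] at this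
      omega
    have hlen2 : (ω.eraseIdx k').length ≤ ω.length - 1 := by
      rw [List.length_eraseIdx]
      split <;> omega
    have hgeq : ℓ (z⁻¹ * ss i) = ℓ z + 1 := by
      rw [← cs.length_inv (z⁻¹ * ss i), mul_inv_rev, cs.inv_simple, inv_inv]
      exact h1
    have hlen : ℓ z = ω.length := by rw [← cs.length_inv, hz]; exact hlen
    have h6 : ℓ z + 1 ≤ ω.length - 1 := by
      rw [← hgeq]
      exact le_trans hle hlen2
    rw [hlen] at h6
    exact Nat.not_succ_le_self _ (le_trans h6 (Nat.sub_le _ _))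


/-! ### Word induction -/

lemma word_induction {P : W → Prop} (h1 : P 1)
    (hstep : ∀ (i : B) (u : W), ℓ (ss i * u) = ℓ u + 1 → P u → P (ss i * u)) (w : W) : P w := by
  generalize hn : ℓ w = n
  induction n using Nat.strong_induction_on generalizing w with
  | _ n ih =>
    rcases eq_or_ne w 1 with rfl | hne
    · exact h1
    · obtain ⟨i, hi⟩ := cs.exists_leftDescent_of_ne_one hne
      have hlen : ℓ (ss i * w) + 1 = ℓ w := (cs.isLeftDescent_iff).mp hi
      have hw : w = ss i * (ss i * w) := by rw [cs.simple_mul_simple_cancel_left]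
      rw [hw]
      apply hstep
      · rw [cs.simple_mul_simple_cancel_left]; omega
      · exact ih (ℓ (ss i * w)) (by omega) _ rfl

/-! ### Demazure product calculus -/

section Star

variable (star : W → W → W)
variable (hone : ∀ w : W, star 1 w = w)
variable (hsimp : ∀ (i : B) (w : W), star (cs.simple i) w =
  if cs.length w < cs.length (cs.simple i * w) then cs.simple i * w else w)
variable (hassoc : ∀ a b c : W, star (star a b) c = star a (star b c))

/-- Right multiplication step operator. -/
def Rop (j : B) (z : W) : W := if cs.length z < cs.length (z * cs.simple j) then z * cs.simple j else z

include hone hsimp hassoc in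
lemma star_peel {i : B} {u : W} (h : ℓ (ss i * u) = ℓ u + 1) (v : W) :
    star (ss i * u) v = star (ss i) (star u v) := by
  have h2 : star (ss i) u = ss i * u := by rw [hsimp]; exact if_pos (by omega)
  rw [← h2, hassoc]

include hone hsimp hassoc in
lemma star_one_right (u : W) : star u 1 = u := by
  refine word_induction cs (P := fun w => star w 1 = w) (hone 1) ?_ u
  intro i u h ih
  rw [star_peel cs star hone hsimp hassoc h, ih, hsimp]
  exact if_pos (by omega)

include hone hsimp hassoc in
lemma lemC (i j : B) (z : W) :
    star (ss i) (Rop cs j z) = Rop cs j (star (ss i) z) := by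
  have hmulassoc : ℓ (ss i * z * ss j) = ℓ (ss i * (z * ss j)) := by rw [mul_assoc]
  unfold Rop
  rcases cs.length_mul_simple z j with hA | hA
  · rcases cs.length_simple_mul z i with hB | hB
    · have e1 : star (ss i) z = ss i * z := by rw [hsimp]; exact if_pos (by omega)
      rw [e1, if_pos (show ℓ z < ℓ (z * ss j) by omega), hsimp i (z * ss j)]
      rcases cs.length_simple_mul (z * ss j) i with hC | hC
      · rw [if_pos (show ℓ (z * ss j) < ℓ (ss i * (z * ss j)) by omega),
          if_pos (show ℓ (ss i * z) < ℓ (ss i * z * ss j) by omega), mul_assoc]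
      · have hz : ss i * z = z * ss j := lemZ cs i j z hB hA (by omega)
        have h2 : ℓ (ss i * z * ss j) = ℓ z := by
          rw [hz, cs.simple_mul_simple_cancel_right]
        rw [if_neg (show ¬ ℓ (z * ss j) < ℓ (ss i * (z * ss j)) by omega),
          if_neg (show ¬ ℓ (ss i * z) < ℓ (ss i * z * ss j) by omega), hz]
    · have hC : ℓ (ss i * (z * ss j)) ≤ ℓ z := by
        calc ℓ (ss i * (z * ss j)) = ℓ (ss i * z * ss j) := by rw [mul_assoc]
          _ ≤ ℓ (ss i * z) + ℓ (ss j) := cs.length_mul_le _ _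
          _ = ℓ (ss i * z) + 1 := by rw [cs.length_simple]
          _ = ℓ z := by omega
      have e1 : star (ss i) z = z := by
        rw [hsimp]; exact if_neg (by omega)
      have e2 : star (ss i) (z * ss j) = z * ss j := by
        rw [hsimp]; exact if_neg (by omega)
      rw [e1, if_pos (show ℓ z < ℓ (z * ss j) by omega), e2]
  · rcases cs.length_simple_mul z i with hB | hB
    · have hC : ℓ (ss i * (z * ss j)) ≤ ℓ (z * ss j) + 1 := by
        rcases cs.length_simple_mul (z * ss j) i with h | h <;> omega
      have e1 : star (ss i) z = ss i * z := by rw [hsimp]; exact if_pos (by omega)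
      rw [e1, if_neg (show ¬ ℓ z < ℓ (z * ss j) by omega),
        if_neg (show ¬ ℓ (ss i * z) < ℓ (ss i * z * ss j) by omega), e1]
    · have e1 : star (ss i) z = z := by rw [hsimp]; exact if_neg (by omega)
      rw [e1, if_neg (show ¬ ℓ z < ℓ (z * ss j) by omega)]
      exact e1

include hone hsimp hassoc in
lemma lemB (j : B) {v : W} (hv : ℓ (v * ss j) = ℓ v + 1) (u : W) :
    star u (v * ss j) = Rop cs j (star u v) := by
  refine word_induction cs (P := fun u => star u (v * ss j) = Rop cs j (star u v)) ?_ ?_ u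
  · show star 1 (v * ss j) = Rop cs j (star 1 v)
    rw [hone, hone]
    unfold Rop
    rw [if_pos (by omega)]
  · intro i u h ih
    show star (ss i * u) (v * ss j) = Rop cs j (star (ss i * u) v)
    rw [star_peel cs star hone hsimp hassoc h, star_peel cs star hone hsimp hassoc h, ih,
      lemC cs star hone hsimp hassoc]

include hone hsimp hassoc in
lemma star_inv (u : W) : ∀ v : W, (star u v)⁻¹ = star v⁻¹ u⁻¹ := by
  refine word_induction cs (P := fun u => ∀ v : W, (star u v)⁻¹ = star v⁻¹ u⁻¹) ?_ ?_ u
  · intro v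
    show (star 1 v)⁻¹ = star v⁻¹ 1⁻¹
    rw [hone, inv_one, star_one_right cs star hone hsimp hassoc]
  · intro i u h ih v
    show (star (ss i * u) v)⁻¹ = star v⁻¹ (ss i * u)⁻¹
    have hinv : (ss i * u)⁻¹ = u⁻¹ * ss i := by rw [mul_inv_rev, cs.inv_simple]
    have hv2 : ℓ (u⁻¹ * ss i) = ℓ u⁻¹ + 1 := by
      rw [← cs.length_inv (u⁻¹ * ss i), mul_inv_rev, cs.inv_simple, inv_inv, cs.length_inv]
      exact h
    rw [star_peel cs star hone hsimp hassoc h, hinv,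
      lemB cs star hone hsimp hassoc i hv2, ← ih v, hsimp]
    unfold Rop
    set z := star u v with hz
    have hzi : ℓ (z⁻¹ * ss i) = ℓ (ss i * z) := by
      rw [← cs.length_inv (z⁻¹ * ss i), mul_inv_rev, cs.inv_simple, inv_inv]
    rcases cs.length_simple_mul z i with hC | hC
    · rw [if_pos (by omega), if_pos (by rw [cs.length_inv]; omega), mul_inv_rev, cs.inv_simple]
    · rw [if_neg (by omega), if_neg (by rw [cs.length_inv]; omega)]

end Star

/-! ### The longest element -/

section W0

variable [Finite W]
variable (w0 : W) (hmax : ∀ v : W, cs.length v ≤ cs.length w0) (hw0inv : w0⁻¹ = w0)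

lemma ncard_inversionSet (w : W) : {t | cs.IsRightInversion w t}.ncard = ℓ w := by
  obtain ⟨ω, hred, rfl⟩ := cs.exists_reduced_word' w
  have hset : {t | cs.IsRightInversion (π ω) t} = ↑(cs.rightInvSeq ω).toFinset := by
    ext t
    simp only [Set.mem_setOf_eq, List.coe_toFinset, List.mem_toFinset]
    constructor
    · exact fun h => mem_ris_of_inversion cs h
    · exact fun h => cs.isRightInversion_of_mem_rightInvSeq hred h
  rw [hset, Set.ncard_coe_finset, List.toFinset_card_of_nodup hred.nodup_rightInvSeq,
    cs.length_rightInvSeq]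
  exact hred.symm

include hmax in
lemma inversionSet_w0 : {t | cs.IsRightInversion w0 t} = {t | cs.IsReflection t} := by
  ext t
  simp only [Set.mem_setOf_eq]
  constructor
  · exact fun h => h.1
  · intro h
    exact ⟨h, lt_of_le_of_ne (hmax _) (h.length_mul_left_ne w0)⟩

include hmax in
lemma length_mul_w0 (x : W) : ℓ (x * w0) + ℓ x = ℓ w0 := by
  have zmodcases : ∀ y : ZMod 2, y = 0 ∨ y = 1 := by decide
  have hW0inv : ∀ t : W, cs.IsReflection t → cs.IsRightInversion w0 t := by
    intro t h
    have := inversionSet_w0 cs w0 hmax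
    rw [Set.ext_iff] at this
    exact ((this t).mpr h)
  have h1 : {t | cs.IsRightInversion (x * w0) t}
      = (fun u => w0⁻¹ * u * w0) '' ({t | cs.IsReflection t} \ {t | cs.IsRightInversion x t}) := by
    ext t
    simp only [Set.mem_image, Set.mem_diff, Set.mem_setOf_eq]
    constructor
    · intro h
      refine ⟨w0 * t * w0⁻¹, ⟨h.1.conj w0, ?_⟩, ?_⟩
      · intro hinv
        have hco := nu_cocycle cs x w0 t
        rw [nu_eq_one_of_inversion cs h, nu_eq_one_of_inversion cs (hW0inv t h.1),
          nu_eq_one_of_inversion cs hinv] at hco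
        revert hco
        decide
      · group
    · rintro ⟨u, ⟨hrefl, hnotinv⟩, rfl⟩
      have htrefl : cs.IsReflection (w0⁻¹ * u * w0) := by
        have := hrefl.conj w0⁻¹
        rwa [inv_inv] at this
      have hnu : nu cs x u = 0 := by
        rcases zmodcases (nu cs x u) with h0 | h1
        · exact h0
        · exact absurd (inversion_of_nu_eq_one cs h1 hrefl) hnotinv
      have hco := nu_cocycle cs x w0 (w0⁻¹ * u * w0)
      have hu : w0 * (w0⁻¹ * u * w0) * w0⁻¹ = u := by group
      rw [hu, hnu, add_zero, nu_eq_one_of_inversion cs (hW0inv _ htrefl)] at hco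
      exact inversion_of_nu_eq_one cs hco htrefl
  have hinj : Function.Injective (fun u : W => w0⁻¹ * u * w0) := by
    intro a b hab
    simp only at hab
    exact mul_left_cancel (mul_right_cancel hab)
  have hsub : {t | cs.IsRightInversion x t} ⊆ {t | cs.IsReflection t} := fun t ht => ht.1
  have h2 := ncard_inversionSet cs (x * w0)
  rw [h1, Set.ncard_image_of_injective _ hinj,
    Set.ncard_diff hsub (Set.toFinite _)] at h2
  have h3 := ncard_inversionSet cs x
  have h4 := ncard_inversionSet cs w0
  rw [inversionSet_w0 cs w0 hmax] at h4
  have h5 : {t | cs.IsRightInversion x t}.ncard ≤ {t | cs.IsReflection t}.ncard :=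
    Set.ncard_le_ncard hsub (Set.toFinite _)
  omega

include hmax hw0inv in
lemma length_w0_mul (x : W) : ℓ (w0 * x) + ℓ x = ℓ w0 := by
  have h1 := length_mul_w0 cs w0 hmax x⁻¹
  have h2 : ℓ (x⁻¹ * w0) = ℓ (w0 * x) := by
    rw [← cs.length_inv (x⁻¹ * w0), mul_inv_rev, inv_inv, hw0inv]
  have h3 : ℓ (x⁻¹) = ℓ x := cs.length_inv x
  omega

include hmax hw0inv in
lemma w0_simple_conj (i : B) : ∃ j : B, w0 * ss i * w0 = ss j := by
  have h1 := length_w0_mul cs w0 hmax hw0inv (ss i)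
  have h2 := length_mul_w0 cs w0 hmax (w0 * ss i)
  rw [cs.length_simple] at h1
  exact (cs.length_eq_one_iff).mp (by omega)

include hmax hw0inv in
lemma length_conj_w0 (x : W) : ℓ (w0 * x * w0) = ℓ x := by
  have h1 := length_w0_mul cs w0 hmax hw0inv x
  have h2 := length_mul_w0 cs w0 hmax (w0 * x)
  omega

end W0

section StarConj

variable [Finite W]
variable (star : W → W → W)
variable (hone : ∀ w : W, star 1 w = w)
variable (hsimp : ∀ (i : B) (w : W), star (cs.simple i) w =
  if cs.length w < cs.length (cs.simple i * w) then cs.simple i * w else w)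
variable (hassoc : ∀ a b c : W, star (star a b) c = star a (star b c))
variable (w0 : W) (hmax : ∀ v : W, cs.length v ≤ cs.length w0) (hw0inv : w0⁻¹ = w0)

include hone hsimp hassoc hmax hw0inv in
lemma star_conj (u : W) : ∀ v : W,
    star (w0 * u * w0) (w0 * v * w0) = w0 * star u v * w0 := by
  have hw0sq : w0 * w0 = 1 := by
    nth_rewrite 1 [← hw0inv]
    exact inv_mul_cancel w0
  have key : ∀ a b : W, (w0 * a * w0) * (w0 * b * w0) = w0 * (a * b) * w0 := by
    intro a b
    rw [show (w0 * a * w0) * (w0 * b * w0) = w0 * a * (w0 * w0) * b * w0 by group, hw0sq]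
    group
  refine word_induction cs
    (P := fun u => ∀ v : W, star (w0 * u * w0) (w0 * v * w0) = w0 * star u v * w0) ?_ ?_ u
  · intro v
    rw [mul_one, hw0sq, hone, hone]
  · intro i u h ih v
    obtain ⟨j, hj⟩ := w0_simple_conj cs w0 hmax hw0inv i
    have hexp : w0 * (ss i * u) * w0 = ss j * (w0 * u * w0) := by
      rw [← hj, key, mul_assoc]
    have hlen : ℓ (ss j * (w0 * u * w0)) = ℓ (w0 * u * w0) + 1 := by
      rw [← hexp, length_conj_w0 cs w0 hmax hw0inv, length_conj_w0 cs w0 hmax hw0inv]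
      exact h
    rw [hexp, star_peel cs star hone hsimp hassoc hlen, ih v,
      star_peel cs star hone hsimp hassoc h v, hsimp, hsimp]
    set z := star u v with hz
    have hkey2 : ss j * (w0 * z * w0) = w0 * (ss i * z) * w0 := by
      rw [← hj, key, mul_assoc]
    have hlc1 : ℓ (w0 * z * w0) = ℓ z := length_conj_w0 cs w0 hmax hw0inv z
    have hlc2 : ℓ (ss j * (w0 * z * w0)) = ℓ (ss i * z) := by
      rw [hkey2]
      exact length_conj_w0 cs w0 hmax hw0inv _
    rcases cs.length_simple_mul z i with hC | hC
    · rw [if_pos (by omega), if_pos (by omega), hkey2]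
    · rw [if_neg (by omega), if_neg (by omega)]

end StarConj

lemma bruhat_length_le {x y : W} (h : cs.bruhatLE x y) : ℓ x ≤ ℓ y := by
  obtain ⟨ω, ω', hred, hy, hsub, hx⟩ := h
  calc ℓ x = ℓ (π ω') := by rw [hx]
    _ ≤ ω'.length := cs.length_wordProd_le ω'
    _ ≤ ω.length := hsub.length_le
    _ = ℓ (π ω) := hred.symm
    _ = ℓ y := by rw [hy]

lemma bruhat_eq_of_length_ge {x y : W} (h : cs.bruhatLE x y) (hl : ℓ y ≤ ℓ x) : x = y := by
  obtain ⟨ω, ω', hred, hy, hsub, hx⟩ := h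
  have h1 : ℓ x ≤ ω'.length := hx ▸ cs.length_wordProd_le ω'
  have h2 : ω'.length ≤ ω.length := hsub.length_le
  have h3 : ω.length = ℓ y := by rw [← hred, hy]
  have h4 : ω' = ω := hsub.eq_of_length (by omega)
  rw [← hx, ← hy, h4]

end
end DemComm

/-- If `(w₀^J₁ w₀^I) ∗ (w₀^J₂ w₀^I) = w₀^J₃ w₀^I`, then also
`(w₀^J₂ w₀^I) ∗ (w₀^J₁ w₀^I) = w₀^J₃ w₀^I`. -/
theorem demazure_parabolic_comm {B W : Type*} [Group W] {M : CoxeterMatrix B} (cs : CoxeterSystem M W) [Finite W]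
    (star : W → W → W)
    (hstar_one : ∀ w : W, star 1 w = w)
    (hstar_simple : ∀ (i : B) (w : W), star (cs.simple i) w =
      if cs.length w < cs.length (cs.simple i * w) then cs.simple i * w else w)
    (hstar_assoc : ∀ a b c : W, star (star a b) c = star a (star b c))
    (w0J : Set B → W)
    (hw0J : ∀ J : Set B, w0J J ∈ Subgroup.closure (cs.simple '' J) ∧
      ∀ v ∈ Subgroup.closure (cs.simple '' J), cs.bruhatLE v (w0J J))
    (J₁ J₂ J₃ : Set B)
    (h : star (w0J J₁ * w0J Set.univ) (w0J J₂ * w0J Set.univ) = w0J J₃ * w0J Set.univ) :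
    star (w0J J₂ * w0J Set.univ) (w0J J₁ * w0J Set.univ) = w0J J₃ * w0J Set.univ := by
  classical
  set w0 := w0J Set.univ with hw0def
  have hTop : Subgroup.closure (cs.simple '' Set.univ) = ⊤ := by
    rw [Set.image_univ]
    exact cs.subgroup_closure_range_simple
  have hmax : ∀ v : W, cs.length v ≤ cs.length w0 := by
    intro v
    refine DemComm.bruhat_length_le cs ((hw0J Set.univ).2 v ?_)
    rw [hTop]
    trivial
  have hJinv : ∀ J : Set B, (w0J J)⁻¹ = w0J J := by
    intro J
    have hmem := (hw0J J).1
    have hble := (hw0J J).2 _ (inv_mem hmem)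
    exact DemComm.bruhat_eq_of_length_ge cs hble (le_of_eq (cs.length_inv _).symm)
  have hw0inv : w0⁻¹ = w0 := hJinv Set.univ
  have hw0sq : w0 * w0 = 1 := by
    nth_rewrite 1 [← hw0inv]
    exact inv_mul_cancel w0
  have fix : ∀ J : Set B, w0 * (w0J J * w0)⁻¹ * w0 = w0J J * w0 := by
    intro J
    rw [mul_inv_rev, hw0inv, hJinv J, ← mul_assoc, hw0sq, one_mul]
  have h1 := congrArg (fun x : W => x⁻¹) h
  rw [DemComm.star_inv cs star hstar_one hstar_simple hstar_assoc] at h1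
  have h2 := congrArg (fun x : W => w0 * x * w0) h1
  rw [show w0 * star (w0J J₂ * w0)⁻¹ (w0J J₁ * w0)⁻¹ * w0
      = star (w0 * (w0J J₂ * w0)⁻¹ * w0) (w0 * (w0J J₁ * w0)⁻¹ * w0) from
      (DemComm.star_conj cs star hstar_one hstar_simple hstar_assoc w0 hmax hw0inv _ _).symm,
    fix J₂, fix J₁, fix J₃] at h2
  exact h2
end

section
/- For any subset J ⊆ I of a finite Coxeter system, (w₀^J w₀^I) ▷ w₀^I = w₀^J and (w₀^I w₀^I) ▷ w₀^J = w₀^J, and (w₀^∅ w₀^I) ▷ w₀^J = 1 = (w₀^J w₀^I) ▷ w₀^∅. -/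
namespace TriAux

open CoxeterSystem List Finset

variable {B W : Type*} [Group W] {M : CoxeterMatrix B} (cs : CoxeterSystem M W)

/-! ### Basic facts about `bruhatLE` -/

theorem bruhat_refl (w : W) : cs.bruhatLE w w := by
  obtain ⟨ω, hred, hw⟩ := cs.exists_reduced_word' w
  exact ⟨ω, ω, hred, hw.symm, List.Sublist.refl ω, hw.symm⟩

theorem bruhat_one_le (w : W) : cs.bruhatLE 1 w := by
  obtain ⟨ω, hred, hw⟩ := cs.exists_reduced_word' w
  exact ⟨ω, [], hred, hw.symm, List.nil_sublist ω, cs.wordProd_nil⟩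

theorem bruhat_le_one {z : W} (h : cs.bruhatLE z 1) : z = 1 := by
  obtain ⟨ω, ω', hred, hπ, hsub, hπ'⟩ := h
  have h0 : ω.length = 0 := by
    have := hred
    unfold CoxeterSystem.IsReduced at this
    rw [hπ] at this
    simpa using this.symm
  have : ω = [] := List.eq_nil_of_length_eq_zero h0
  subst this
  have : ω' = [] := List.sublist_nil.mp hsub
  subst this
  simpa using hπ'.symm

theorem bruhat_length_le {x y : W} (h : cs.bruhatLE x y) : cs.length x ≤ cs.length y := by
  obtain ⟨ω, ω', hred, hπ, hsub, hπ'⟩ := h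
  calc cs.length x = cs.length (cs.wordProd ω') := by rw [hπ']
    _ ≤ ω'.length := cs.length_wordProd_le ω'
    _ ≤ ω.length := hsub.length_le
    _ = cs.length y := by rw [← hπ]; exact hred.symm ▸ rfl

theorem bruhat_eq_of_length_ge {x y : W} (h : cs.bruhatLE x y)
    (hl : cs.length y ≤ cs.length x) : x = y := by
  obtain ⟨ω, ω', hred, hπ, hsub, hπ'⟩ := h
  have hred' : cs.length (cs.wordProd ω) = ω.length := hred
  have h1 : cs.length x ≤ ω'.length := by
    rw [← hπ']; exact cs.length_wordProd_le ω'
  have h2 : ω'.length = ω.length := by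
    have := hsub.length_le
    have h3 : ω.length ≤ cs.length x := by rw [← hπ] at hl; omega
    omega
  have : ω' = ω := hsub.eq_of_length h2
  subst this
  rw [← hπ', hπ]
/-! ### The reflection cocycle via a permutation representation on `W × ZMod 2` -/

set_option linter.unusedSectionVars false
open scoped Classical

variable [DecidableEq W]

/-- The basic involution attached to a simple reflection. -/
def permAux (i : B) : W × ZMod 2 → W × ZMod 2 :=
  fun p => (cs.simple i * p.1 * cs.simple i, p.2 + if p.1 = cs.simple i then 1 else 0)

theorem conj_simple_eq_iff (i : B) (t c : W) :
    cs.simple i * t * cs.simple i = c ↔ t = cs.simple i * c * cs.simple i := by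
  constructor
  · rintro rfl
    simp [mul_assoc]
  · rintro rfl
    simp [mul_assoc]

theorem one_add_one_zmod : (1 : ZMod 2) + 1 = 0 := by decide

theorem permAux_involutive (i : B) : Function.Involutive (permAux cs i) := by
  rintro ⟨t, ε⟩
  simp only [permAux]
  refine Prod.ext ?_ ?_
  · simp [mul_assoc]
  · simp only
    have h : (cs.simple i * t * cs.simple i = cs.simple i) ↔ t = cs.simple i := by
      rw [conj_simple_eq_iff]
      simp
    by_cases ht : t = cs.simple i
    · rw [if_pos ht]; simp only [h.mpr ht, if_true]; rw [add_assoc, one_add_one_zmod, add_zero]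
    · rw [if_neg ht]; simp only [h, ht, if_false]
      simp

/-- The permutation of `W × ZMod 2` attached to a simple reflection. -/
def perm (i : B) : Equiv.Perm (W × ZMod 2) :=
  Function.Involutive.toPerm _ (permAux_involutive cs i)

theorem perm_apply (i : B) (p : W × ZMod 2) :
    perm cs i p = (cs.simple i * p.1 * cs.simple i,
      p.2 + if p.1 = cs.simple i then 1 else 0) := rfl

theorem perm_liftable : M.IsLiftable (perm cs) := by
  intro i j
  set q : W := cs.simple i * cs.simple j with hq_def
  have hq : q ^ M i j = 1 := cs.simple_mul_simple_pow i j
  have hconj : ∀ n : ℤ, cs.simple j * q ^ n = q ^ (-n) * cs.simple j := by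
    intro n
    have h1 : (MulAut.conj (cs.simple j)) q = q⁻¹ := by
      simp [MulAut.conj_apply, hq_def, mul_assoc]
    have h2 : (MulAut.conj (cs.simple j)) (q ^ n) = q ^ (-n) := by
      rw [map_zpow, h1, inv_zpow, zpow_neg]
    rw [MulAut.conj_apply, cs.inv_simple] at h2
    calc cs.simple j * q ^ n = cs.simple j * q ^ n * cs.simple j * cs.simple j := by
          simp
      _ = q ^ (-n) * cs.simple j := by rw [h2]
  have e1 : cs.simple j * q = q⁻¹ * cs.simple j := by
    have := hconj 1
    simpa using this
  have shift : ∀ n : ℤ, q⁻¹ * (q ^ n * cs.simple j) * q = q ^ (n - 2) * cs.simple j := by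
    intro n
    calc q⁻¹ * (q ^ n * cs.simple j) * q = q⁻¹ * q ^ n * (cs.simple j * q) := by group
      _ = q⁻¹ * q ^ n * (q⁻¹ * cs.simple j) := by rw [e1]
      _ = q ^ (n - 2) * cs.simple j := by group
  have tseq_conj : ∀ (t : W) (n : ℕ), (q * t * q⁻¹ = q ^ (-(n : ℤ)) * cs.simple j)
      ↔ t = q ^ (-((n + 2 : ℕ) : ℤ)) * cs.simple j := by
    intro t n
    have hexp : (-((n + 2 : ℕ) : ℤ)) = -(n : ℤ) - 2 := by push_cast; ring
    rw [hexp]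
    constructor
    · intro h
      have h2 : t = q⁻¹ * (q ^ (-(n : ℤ)) * cs.simple j) * q := by
        rw [← h]; group
      rw [h2, shift]
    · rintro h
      rw [h, ← shift]
      group
  have psi_apply : ∀ t : W, ∀ ε : ZMod 2, (perm cs i * perm cs j) (t, ε) =
      (q * t * q⁻¹, ε + ((if t = q ^ (-((0:ℕ) : ℤ)) * cs.simple j then 1 else 0)
        + (if t = q ^ (-((1:ℕ) : ℤ)) * cs.simple j then 1 else 0))) := by
    intro t ε
    rw [Equiv.Perm.mul_apply, perm_apply, perm_apply]
    refine Prod.ext ?_ ?_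
    · show cs.simple i * (cs.simple j * t * cs.simple j) * cs.simple i = q * t * q⁻¹
      simp [hq_def, mul_assoc]
    · show ε + (if t = cs.simple j then 1 else 0)
        + (if cs.simple j * t * cs.simple j = cs.simple i then 1 else 0) = _
      have e0 : q ^ (-((0:ℕ) : ℤ)) * cs.simple j = cs.simple j := by
        norm_num
      have e1'' : q ^ (-((1:ℕ) : ℤ)) * cs.simple j = cs.simple j * cs.simple i * cs.simple j := by
        rw [show (-((1:ℕ):ℤ)) = -1 by norm_num, zpow_neg_one, hq_def, mul_inv_rev,
          cs.inv_simple, cs.inv_simple]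
      have hcond : (cs.simple j * t * cs.simple j = cs.simple i)
          ↔ t = q ^ (-((1:ℕ) : ℤ)) * cs.simple j := by
        rw [conj_simple_eq_iff, e1'']
      rw [e0, add_assoc]
      congr 1
      rw [if_congr hcond rfl rfl]
  have psi_pow : ∀ n : ℕ, ∀ t : W, ∀ ε : ZMod 2, ((perm cs i * perm cs j) ^ n) (t, ε) =
      (q ^ n * t * (q ^ n)⁻¹,
        ε + ∑ r ∈ Finset.range (2 * n),
          (if t = q ^ (-(r : ℤ)) * cs.simple j then (1 : ZMod 2) else 0)) := by
    intro n
    induction n with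
    | zero => intro t ε; simp
    | succ n ih =>
      intro t ε
      rw [pow_succ, Equiv.Perm.mul_apply, psi_apply, ih]
      refine Prod.ext ?_ ?_
      · show q ^ n * (q * t * q⁻¹) * (q ^ n)⁻¹ = q ^ (n + 1) * t * (q ^ (n + 1))⁻¹
        group
      · show _ + _ + ∑ r ∈ Finset.range (2 * n),
            (if q * t * q⁻¹ = q ^ (-(r : ℤ)) * cs.simple j then (1:ZMod 2) else 0)
          = _ + ∑ r ∈ Finset.range (2 * (n+1)), _
        have hre : (∑ r ∈ Finset.range (2 * n),
            (if q * t * q⁻¹ = q ^ (-(r : ℤ)) * cs.simple j then (1:ZMod 2) else 0))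
            = ∑ r ∈ Finset.range (2 * n),
            (if t = q ^ (-((r + 2 : ℕ) : ℤ)) * cs.simple j then (1:ZMod 2) else 0) :=
          Finset.sum_congr rfl (fun r _ => if_congr (tseq_conj t r) rfl rfl)
        rw [hre]
        rw [show 2 * (n + 1) = (2 * n + 1) + 1 by ring]
        rw [Finset.sum_range_succ', Finset.sum_range_succ']
        have hn : ∀ r : ℕ, r + 1 + 1 = r + 2 := fun r => by omega
        simp only [hn, zero_add, Nat.cast_ofNat, Nat.cast_one]
        abel
  -- conclude
  apply Equiv.ext
  rintro ⟨t, ε⟩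
  rw [psi_pow (M i j) t ε]
  have tper : ∀ r : ℕ, q ^ (-((M i j + r : ℕ) : ℤ)) * cs.simple j
      = q ^ (-(r : ℤ)) * cs.simple j := by
    intro r
    congr 1
    push_cast
    rw [neg_add, zpow_add, zpow_neg, zpow_natCast, hq, inv_one, one_mul]
  rw [two_mul, Finset.sum_range_add]
  have hcg : (∑ r ∈ Finset.range (M i j),
      (if t = q ^ (-((M i j + r : ℕ) : ℤ)) * cs.simple j then (1:ZMod 2) else 0))
      = ∑ r ∈ Finset.range (M i j),
      (if t = q ^ (-(r : ℤ)) * cs.simple j then (1:ZMod 2) else 0) :=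
    Finset.sum_congr rfl (fun r _ => by rw [tper r])
  rw [hcg]
  have hxx : ∀ x : ZMod 2, x + x = 0 := by decide
  rw [hxx, add_zero, hq]
  simp
/-- The lifted homomorphism `Φ : W →* Perm (W × ZMod 2)`. -/
noncomputable def Phi : W →* Equiv.Perm (W × ZMod 2) :=
  cs.lift ⟨perm cs, perm_liftable cs⟩

theorem Phi_simple (i : B) : Phi cs (cs.simple i) = perm cs i :=
  cs.lift_apply_simple (perm_liftable cs) i

theorem Phi_wordProd (ω : List B) (t : W) (ε : ZMod 2) :
    Phi cs (cs.wordProd ω) (t, ε) =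
      (cs.wordProd ω * t * (cs.wordProd ω)⁻¹, ε + ((cs.rightInvSeq ω).count t : ZMod 2)) := by
  induction ω generalizing ε with
  | nil => simp [cs.wordProd_nil]
  | cons i ω ih =>
    rw [cs.wordProd_cons, map_mul, Equiv.Perm.mul_apply, ih, Phi_simple, perm_apply]
    have hris : cs.rightInvSeq (i :: ω) =
        ((cs.wordProd ω)⁻¹ * cs.simple i * cs.wordProd ω) :: cs.rightInvSeq ω := rfl
    refine Prod.ext ?_ ?_
    · show cs.simple i * (cs.wordProd ω * t * (cs.wordProd ω)⁻¹) * cs.simple i = _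
      rw [mul_inv_rev, cs.inv_simple]
      group
    · show ε + ((cs.rightInvSeq ω).count t : ZMod 2)
        + (if cs.wordProd ω * t * (cs.wordProd ω)⁻¹ = cs.simple i then 1 else 0) = _
      rw [hris, List.count_cons]
      have hcond : (cs.wordProd ω * t * (cs.wordProd ω)⁻¹ = cs.simple i)
          ↔ (t = (cs.wordProd ω)⁻¹ * cs.simple i * cs.wordProd ω) := by
        constructor
        · intro h; rw [← h]; group
        · rintro rfl; group
      rw [if_congr (hcond.trans eq_comm) rfl rfl]
      push_cast
      simp only [beq_iff_eq]
      by_cases hc : (cs.wordProd ω)⁻¹ * cs.simple i * cs.wordProd ω = t <;>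
        simp [hc, add_assoc]

/-- The `η` cocycle: parity of the number of times `t` occurs in a right inversion
sequence of a word for `w`. -/
noncomputable def eta (w t : W) : ZMod 2 := (Phi cs w (t, 0)).2

theorem eta_eq_count (ω : List B) (t : W) :
    eta cs (cs.wordProd ω) t = ((cs.rightInvSeq ω).count t : ZMod 2) := by
  unfold eta
  rw [Phi_wordProd, zero_add]

theorem Phi_apply (w t : W) (ε : ZMod 2) :
    Phi cs w (t, ε) = (w * t * w⁻¹, ε + eta cs w t) := by
  obtain ⟨ω, rfl⟩ := cs.wordProd_surjective w
  rw [Phi_wordProd, eta_eq_count]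

theorem eta_mul (w₁ w₂ t : W) :
    eta cs (w₁ * w₂) t = eta cs w₂ t + eta cs w₁ (w₂ * t * w₂⁻¹) := by
  unfold eta
  rw [map_mul, Equiv.Perm.mul_apply, Phi_apply cs w₂ t 0, Phi_apply]
  simp [eta]

theorem eta_simple_self (i : B) : eta cs (cs.simple i) (cs.simple i) = 1 := by
  have : cs.simple i = cs.wordProd [i] := by rw [cs.wordProd_singleton]
  rw [this, eta_eq_count]
  have : cs.rightInvSeq [i] = [cs.simple i] := by simp
  rw [this]
  simp

theorem eta_refl {t : W} (ht : cs.IsReflection t) : eta cs t t = 1 := by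
  obtain ⟨w, i, rfl⟩ := ht
  set t := w * cs.simple i * w⁻¹ with ht_def
  have key : eta cs w⁻¹ t + eta cs w (w⁻¹ * t * w) = 0 := by
    have h1 : eta cs (w * w⁻¹) t = eta cs w⁻¹ t + eta cs w (w⁻¹ * t * (w⁻¹)⁻¹) := eta_mul cs w w⁻¹ t
    rw [mul_inv_cancel] at h1
    have h0 : eta cs 1 t = 0 := by
      unfold eta
      rw [map_one]
      simp
    rw [h0] at h1
    rw [inv_inv] at h1
    exact h1.symm
  have hit : w⁻¹ * t * w = cs.simple i := by rw [ht_def]; group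
  have expand : eta cs t t = eta cs (cs.simple i * w⁻¹) t
      + eta cs w ((cs.simple i * w⁻¹) * t * (cs.simple i * w⁻¹)⁻¹) := by
    have : t = w * (cs.simple i * w⁻¹) := by rw [ht_def]; group
    nth_rw 1 [this]
    exact eta_mul cs w (cs.simple i * w⁻¹) t
  have harg : (cs.simple i * w⁻¹) * t * (cs.simple i * w⁻¹)⁻¹ = cs.simple i := by
    rw [ht_def]
    rw [mul_inv_rev, cs.inv_simple, inv_inv]
    simp [mul_assoc]
  have expand2 : eta cs (cs.simple i * w⁻¹) t = eta cs w⁻¹ t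
      + eta cs (cs.simple i) (w⁻¹ * t * (w⁻¹)⁻¹) := eta_mul cs (cs.simple i) w⁻¹ t
  rw [expand, harg, expand2, inv_inv, hit, eta_simple_self]
  -- now : eta w⁻¹ t + 1 + eta w (s i) ; and key with hit says eta w⁻¹ t + eta w (s i) = 0
  rw [hit] at key
  have : ∀ a b : ZMod 2, a + b = 0 → a + 1 + b = 1 := by decide
  exact this _ _ key

theorem isRightInversion_of_eta_one {w t : W} (ht : cs.IsReflection t)
    (h : eta cs w t = 1) : cs.length (w * t) < cs.length w := by
  obtain ⟨ω, hred, rfl⟩ := cs.exists_reduced_word' w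
  rw [eta_eq_count] at h
  have hmem : t ∈ cs.rightInvSeq ω := by
    by_contra hc
    rw [List.count_eq_zero_of_not_mem hc] at h
    simp at h
  exact (cs.isRightInversion_of_mem_rightInvSeq hred hmem).2

theorem eta_one_of_isRightInversion {w t : W} (ht : cs.IsReflection t)
    (h : cs.length (w * t) < cs.length w) : eta cs w t = 1 := by
  by_contra hc
  have h0 : eta cs w t = 0 := by
    have : ∀ x : ZMod 2, x ≠ 1 → x = 0 := by decide
    exact this _ hc
  have hwt : eta cs (w * t) t = 1 := by
    rw [eta_mul]
    have harg : t * t * t⁻¹ = t := by group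
    rw [harg, eta_refl cs ht, h0, add_zero]
  have := isRightInversion_of_eta_one cs ht hwt
  rw [mul_assoc, ht.mul_self, mul_one] at this
  omega

/-- If `t` is a right inversion of `w = π ω` with `ω` reduced, then `t` occurs in the
right inversion sequence of `ω` (strong exchange-flavored statement). -/
theorem mem_rightInvSeq_of_isRightInversion {ω : List B} (hred : cs.IsReduced ω) {t : W}
    (ht : cs.IsReflection t) (h : cs.length (cs.wordProd ω * t) < cs.length (cs.wordProd ω)) :
    t ∈ cs.rightInvSeq ω := by
  have h1 : eta cs (cs.wordProd ω) t = 1 := eta_one_of_isRightInversion cs ht h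
  rw [eta_eq_count] at h1
  by_contra hc
  rw [List.count_eq_zero_of_not_mem hc] at h1
  simp at h1
/-! ### The key length-additivity fact for the longest element -/

theorem length_le_card_inversions [Fintype W] (v : W) :
    cs.length v ≤ (Finset.univ.filter
      (fun t => cs.IsReflection t ∧ cs.length (v * t) < cs.length v)).card := by
  obtain ⟨ω, hred, rfl⟩ := cs.exists_reduced_word' v
  have hsub : (cs.rightInvSeq ω).toFinset ⊆ Finset.univ.filter
      (fun t => cs.IsReflection t ∧ cs.length (cs.wordProd ω * t) < cs.length (cs.wordProd ω)) := by
    intro t htmem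
    rw [List.mem_toFinset] at htmem
    have := cs.isRightInversion_of_mem_rightInvSeq hred htmem
    simp only [Finset.mem_filter, Finset.mem_univ, true_and]
    exact ⟨this.1, this.2⟩
  calc cs.length (cs.wordProd ω) = ω.length := hred
    _ = (cs.rightInvSeq ω).length := (cs.length_rightInvSeq ω).symm
    _ = (cs.rightInvSeq ω).toFinset.card := (List.toFinset_card_of_nodup hred.nodup_rightInvSeq).symm
    _ ≤ _ := Finset.card_le_card hsub

theorem lengths_add [Fintype W] (w0 : W) (hmax : ∀ v : W, cs.bruhatLE v w0) (v : W) :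
    cs.length v + cs.length (v * w0) = cs.length w0 := by
  have len_le : ∀ u : W, cs.length u ≤ cs.length w0 := fun u => bruhat_length_le cs (hmax u)
  -- every reflection is a right inversion of w0
  obtain ⟨Ω, hΩred, hΩ⟩ := cs.exists_reduced_word' w0
  set L := cs.length w0 with hL
  have hLlen : Ω.length = L := by rw [hL, hΩ]; exact hΩred.symm ▸ rfl
  set R : Finset W := Finset.univ.filter (fun t => cs.IsReflection t) with hR
  have hRL : R.card ≤ L := by
    have hsub : R ⊆ (cs.rightInvSeq Ω).toFinset := by
      intro t htmem
      rw [hR, Finset.mem_filter] at htmem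
      have ht : cs.IsReflection t := htmem.2
      have hlt : cs.length (w0 * t) < cs.length w0 :=
        lt_of_le_of_ne (len_le (w0 * t)) (ht.length_mul_left_ne w0)
      rw [List.mem_toFinset]
      apply mem_rightInvSeq_of_isRightInversion cs hΩred ht
      rw [← hΩ]
      exact hlt
    calc R.card ≤ (cs.rightInvSeq Ω).toFinset.card := Finset.card_le_card hsub
      _ ≤ (cs.rightInvSeq Ω).length := (cs.rightInvSeq Ω).toFinset_card_le
      _ = Ω.length := cs.length_rightInvSeq Ω
      _ = L := hLlen
  -- for each reflection t, exactly half of W has t as a right inversion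
  have half : ∀ t : W, cs.IsReflection t →
      2 * (Finset.univ.filter (fun v : W => cs.length (v * t) < cs.length v)).card
        = Fintype.card W := by
    intro t ht
    set A := Finset.univ.filter (fun v : W => cs.length (v * t) < cs.length v) with hA
    set A' := Finset.univ.filter (fun v : W => ¬ (cs.length (v * t) < cs.length v)) with hA'
    have hcards : A.card + A'.card = Fintype.card W := by
      rw [hA, hA']
      rw [Finset.card_filter_add_card_filter_not]
      exact Finset.card_univ
    have hbij : A.card = A'.card := by
      apply Finset.card_bij' (fun v _ => v * t) (fun v _ => v * t)
      · intro v hv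
        rw [hA, Finset.mem_filter] at hv
        rw [hA', Finset.mem_filter]
        refine ⟨Finset.mem_univ _, ?_⟩
        rw [mul_assoc, ht.mul_self, mul_one]
        omega
      · intro v hv
        rw [hA', Finset.mem_filter] at hv
        rw [hA, Finset.mem_filter]
        refine ⟨Finset.mem_univ _, ?_⟩
        rw [mul_assoc, ht.mul_self, mul_one]
        have hne : cs.length (v * t) ≠ cs.length v := ht.length_mul_left_ne v
        have := hv.2
        omega
      · intro v _
        rw [mul_assoc, ht.mul_self, mul_one]
      · intro v _
        rw [mul_assoc, ht.mul_self, mul_one]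
    omega
  -- summing
  have sum_inv : ∑ u : W, (Finset.univ.filter
      (fun t => cs.IsReflection t ∧ cs.length (u * t) < cs.length u)).card
      = ∑ t ∈ R, (Finset.univ.filter (fun v : W => cs.length (v * t) < cs.length v)).card := by
    have h1 : ∀ u : W, (Finset.univ.filter
        (fun t => cs.IsReflection t ∧ cs.length (u * t) < cs.length u)).card
        = ∑ t ∈ R, (if cs.length (u * t) < cs.length u then 1 else 0) := by
      intro u
      rw [← Finset.filter_filter, Finset.card_filter, hR]
    have h2 : ∀ t : W, (Finset.univ.filter
        (fun v : W => cs.length (v * t) < cs.length v)).card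
        = ∑ u : W, (if cs.length (u * t) < cs.length u then 1 else 0) := by
      intro t
      rw [Finset.card_filter]
    simp only [h1, h2]
    rw [Finset.sum_comm]
  have sum_le : 2 * ∑ u : W, cs.length u ≤ L * Fintype.card W := by
    have s1 : ∑ u : W, cs.length u ≤ ∑ u : W, (Finset.univ.filter
        (fun t => cs.IsReflection t ∧ cs.length (u * t) < cs.length u)).card :=
      Finset.sum_le_sum (fun u _ => length_le_card_inversions cs u)
    have s2 : 2 * ∑ t ∈ R, (Finset.univ.filter
        (fun v : W => cs.length (v * t) < cs.length v)).card = R.card * Fintype.card W := by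
      rw [Finset.mul_sum]
      rw [Finset.sum_congr rfl (fun t htm => half t (by
        rw [hR, Finset.mem_filter] at htm; exact htm.2))]
      rw [Finset.sum_const, smul_eq_mul]
    calc 2 * ∑ u : W, cs.length u ≤ 2 * ∑ u : W, (Finset.univ.filter
          (fun t => cs.IsReflection t ∧ cs.length (u * t) < cs.length u)).card := by omega
      _ = 2 * ∑ t ∈ R, (Finset.univ.filter
          (fun v : W => cs.length (v * t) < cs.length v)).card := by rw [sum_inv]
      _ = R.card * Fintype.card W := s2
      _ ≤ L * Fintype.card W := Nat.mul_le_mul_right _ hRL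
  -- each term is at least L
  have term_ge : ∀ u : W, L ≤ cs.length u + cs.length (u * w0) := by
    intro u
    have : w0 = u⁻¹ * (u * w0) := by group
    calc L = cs.length w0 := hL
      _ = cs.length (u⁻¹ * (u * w0)) := by rw [← this]
      _ ≤ cs.length u⁻¹ + cs.length (u * w0) := cs.length_mul_le _ _
      _ = cs.length u + cs.length (u * w0) := by rw [cs.length_inv]
  -- reindexing
  have reindex : ∑ u : W, cs.length (u * w0) = ∑ u : W, cs.length u := by
    exact Fintype.sum_bijective (fun u : W => u * w0)
      (Group.mulRight_bijective w0) _ _ (fun u => rfl)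
  have sum_eq : ∑ u : W, (cs.length u + cs.length (u * w0)) = ∑ _u : W, L := by
    have hge : ∑ _u : W, L ≤ ∑ u : W, (cs.length u + cs.length (u * w0)) :=
      Finset.sum_le_sum (fun u _ => term_ge u)
    have hle : ∑ u : W, (cs.length u + cs.length (u * w0)) ≤ ∑ _u : W, L := by
      rw [Finset.sum_add_distrib, reindex, Finset.sum_const, smul_eq_mul,
        Finset.card_univ, Nat.mul_comm]
      omega
    omega
  have := (Finset.sum_eq_sum_iff_of_le (fun u (_ : u ∈ Finset.univ) => term_ge u)).mp
    sum_eq.symm v (Finset.mem_univ v)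
  omega
end TriAux

/-- `(w₀^J w₀^I) ▷ w₀^I = w₀^J`, `(w₀^I w₀^I) ▷ w₀^J = w₀^J`, and
`(w₀^∅ w₀^I) ▷ w₀^J = 1 = (w₀^J w₀^I) ▷ w₀^∅`. -/
theorem tri_extreme_cases {B W : Type*} [Group W] {M : CoxeterMatrix B} (cs : CoxeterSystem M W) [Finite W]
    (tri : W → W → W)
    (htri : ∀ x y : W, cs.IsUniqueBruhatMin (cs.triSet x y) (tri x y))
    (w0J : Set B → W)
    (hw0J : ∀ J : Set B, w0J J ∈ Subgroup.closure (cs.simple '' J) ∧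
      ∀ v ∈ Subgroup.closure (cs.simple '' J), cs.bruhatLE v (w0J J))
    (J : Set B) :
    tri (w0J J * w0J Set.univ) (w0J Set.univ) = w0J J ∧
    tri (w0J Set.univ * w0J Set.univ) (w0J J) = w0J J ∧
    tri (w0J (∅ : Set B) * w0J Set.univ) (w0J J) = 1 ∧
    tri (w0J J * w0J Set.univ) (w0J (∅ : Set B)) = 1 := by
  classical
  haveI : Fintype W := Fintype.ofFinite W
  set w0 : W := w0J Set.univ with hw0
  set wJ : W := w0J J with hwJ
  have hall : ∀ v : W, cs.bruhatLE v w0 := by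
    intro v
    apply (hw0J Set.univ).2
    rw [Set.image_univ, cs.subgroup_closure_range_simple]
    exact Subgroup.mem_top v
  have hempty : w0J (∅ : Set B) = 1 := by
    have := (hw0J (∅ : Set B)).1
    rw [Set.image_empty, Subgroup.closure_empty, Subgroup.mem_bot] at this
    exact this
  have hw0inv : w0⁻¹ = w0 := by
    apply TriAux.bruhat_eq_of_length_ge cs (hall w0⁻¹)
    rw [cs.length_inv]
  have hw0sq : w0 * w0 = 1 := by
    nth_rw 2 [← hw0inv]
    exact mul_inv_cancel w0
  have hadd : ∀ v : W, cs.length v + cs.length (v * w0) = cs.length w0 :=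
    TriAux.lengths_add cs w0 hall
  refine ⟨?_, ?_, ?_, ?_⟩
  -- Case 1 : tri (wJ * w0) w0 = wJ
  · have hmem : wJ ∈ cs.triSet (wJ * w0) w0 := by
      refine ⟨wJ * w0, TriAux.bruhat_refl cs _, ?_⟩
      rw [mul_assoc, hw0sq, mul_one]
    have hmin : ∀ z ∈ cs.triSet (wJ * w0) w0, cs.bruhatLE z wJ → z = wJ := by
      rintro z ⟨u, hu, rfl⟩ hz
      have h1 : cs.length u ≤ cs.length (wJ * w0) := TriAux.bruhat_length_le cs hu
      have h2 : cs.length (u * w0) ≤ cs.length wJ := TriAux.bruhat_length_le cs hz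
      have h3 : cs.length w0 ≤ cs.length u + cs.length (u * w0) := by
        have he : w0 = u⁻¹ * (u * w0) := by group
        calc cs.length w0 = cs.length (u⁻¹ * (u * w0)) := by rw [← he]
          _ ≤ cs.length u⁻¹ + cs.length (u * w0) := cs.length_mul_le _ _
          _ = cs.length u + cs.length (u * w0) := by rw [cs.length_inv]
      have hA : cs.length wJ + cs.length (wJ * w0) = cs.length w0 := hadd wJ
      have hge : cs.length wJ ≤ cs.length (u * w0) := by omega
      exact TriAux.bruhat_eq_of_length_ge cs hz hge
    exact ((htri (wJ * w0) w0).2 wJ hmem hmin).symm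
  -- Case 2 : tri (w0 * w0) wJ = wJ
  · have honly : ∀ z ∈ cs.triSet (w0 * w0) wJ, z = wJ := by
      rintro z ⟨u, hu, rfl⟩
      rw [hw0sq] at hu
      rw [TriAux.bruhat_le_one cs hu, one_mul]
    have hmem : wJ ∈ cs.triSet (w0 * w0) wJ := by
      refine ⟨1, ?_, (one_mul wJ).symm⟩
      rw [hw0sq]
      exact TriAux.bruhat_refl cs 1
    exact ((htri (w0 * w0) wJ).2 wJ hmem (fun z hzS _ => honly z hzS)).symm
  -- Case 3 : tri (w0J ∅ * w0) wJ = 1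
  · have hmem : (1 : W) ∈ cs.triSet (w0J (∅ : Set B) * w0) wJ := by
      exact ⟨wJ⁻¹, hempty ▸ (by rw [one_mul]; exact hall wJ⁻¹), (inv_mul_cancel wJ).symm⟩
    have hmin : ∀ z ∈ cs.triSet (w0J (∅ : Set B) * w0) wJ, cs.bruhatLE z 1 → z = 1 := by
      intro z _ hz
      exact TriAux.bruhat_le_one cs hz
    exact ((htri (w0J (∅ : Set B) * w0) wJ).2 1 hmem hmin).symm
  -- Case 4 : tri (wJ * w0) (w0J ∅) = 1
  · have hmem : (1 : W) ∈ cs.triSet (wJ * w0) (w0J (∅ : Set B)) := by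
      exact ⟨1, TriAux.bruhat_one_le cs _, by rw [hempty, one_mul]⟩
    have hmin : ∀ z ∈ cs.triSet (wJ * w0) (w0J (∅ : Set B)), cs.bruhatLE z 1 → z = 1 := by
      intro z _ hz
      exact TriAux.bruhat_le_one cs hz
    exact ((htri (wJ * w0) (w0J (∅ : Set B))).2 1 hmem hmin).symm
end
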